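/- arXiv:1710.03475 — 6 statements merged into one kernel-verified Lean document; each statement's English description precedes it below -/
import Mathlib

section
/- Let 𝒯 = ({J_1,…,J_ℓ}, T) be a tree decomposition of a graph G on n vertices and let F be its completion graph. For every real symmetric n×n matrix Z ∈ S_F, there exists an n×n real symmetric positive semidefinite matrix X with P_F(X) = Z if and only if the principal submatrix Z[J_j,J_j] is positive semidefinite for every j ∈ {1,…,ℓ}. -/
open Matrix

/-- `(J, T)` is a tree decomposition of the graph `G`:  `T` is a tree, every vertex of `G`
is covered by some bag, every edge of `G` is covered by some bag, and the bags containing any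
fixed vertex satisfy the running-intersection property along paths of `T`. -/
def IsTreeDecomp {n ℓ : ℕ} (G : SimpleGraph (Fin n)) (T : SimpleGraph (Fin ℓ))
    (J : Fin ℓ → Finset (Fin n)) : Prop :=
  T.IsTree ∧
  (∀ v : Fin n, ∃ k, v ∈ J k) ∧
  (∀ u v : Fin n, G.Adj u v → ∃ k, u ∈ J k ∧ v ∈ J k) ∧
  (∀ (i j : Fin ℓ) (w : T.Walk i j), w.IsPath →
    ∀ v : Fin n, v ∈ J i → v ∈ J j → ∀ k ∈ w.support, v ∈ J k)

/-- The principal submatrix of `X` with rows and columns in `s`. -/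
def psub {n : ℕ} (X : Matrix (Fin n) (Fin n) ℝ) (s : Finset (Fin n)) :
    Matrix s s ℝ :=
  X.submatrix Subtype.val Subtype.val

/-- The projection `P_F` onto the completion graph `F` of the tree decomposition: it keeps the
diagonal and the entries `(u,v)` covered by some bag, and zeroes out all other entries. -/
def projF {n ℓ : ℕ} (J : Fin ℓ → Finset (Fin n)) (X : Matrix (Fin n) (Fin n) ℝ) :
    Matrix (Fin n) (Fin n) ℝ :=
  Matrix.of fun u v => if u = v ∨ ∃ k, u ∈ J k ∧ v ∈ J k then X u v else 0


open scoped RealInnerProductSpace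

lemma gram_rigid {E : Type*} [NormedAddCommGroup E] [InnerProductSpace ℝ E]
    [FiniteDimensional ℝ E] {ι : Type*} (v w : ι → E)
    (h : ∀ i j, ⟪v i, v j⟫ = ⟪w i, w j⟫) :
    ∃ Q : E →ₗᵢ[ℝ] E, ∀ i, Q (v i) = w i := by
  classical
  set Tv := Finsupp.linearCombination ℝ v with hTv
  set Tw := Finsupp.linearCombination ℝ w with hTw
  have key : ∀ c : ι →₀ ℝ, ⟪Tv c, Tv c⟫ = ⟪Tw c, Tw c⟫ := by
    intro c
    rw [Finsupp.linearCombination_apply, Finsupp.linearCombination_apply, Finsupp.sum,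
      Finsupp.sum, sum_inner, sum_inner]
    refine Finset.sum_congr rfl fun i _ => ?_
    rw [inner_sum, inner_sum]
    refine Finset.sum_congr rfl fun j _ => ?_
    rw [real_inner_smul_left, real_inner_smul_left, real_inner_smul_right,
      real_inner_smul_right, h i j]
  have hker : LinearMap.ker Tv ≤ LinearMap.ker Tw := by
    intro c hc
    rw [LinearMap.mem_ker] at hc ⊢
    have h0 : ⟪Tw c, Tw c⟫ = 0 := by rw [← key]; simp [hc]
    exact inner_self_eq_zero.mp h0
  let q : ((ι →₀ ℝ) ⧸ LinearMap.ker Tv) →ₗ[ℝ] E := Submodule.liftQ _ Tw hker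
  set S : Submodule ℝ E := LinearMap.range Tv with hS
  let f : S →ₗ[ℝ] E := q ∘ₗ (Tv.quotKerEquivRange.symm : S →ₗ[ℝ] ((ι →₀ ℝ) ⧸ LinearMap.ker Tv))
  have hf : ∀ (c : ι →₀ ℝ) (hc : Tv c ∈ S), f ⟨Tv c, hc⟩ = Tw c := by
    intro c hc
    have h1 : Tv.quotKerEquivRange (Submodule.Quotient.mk c) = ⟨Tv c, hc⟩ := by
      apply Subtype.ext
      exact Tv.quotKerEquivRange_apply_mk c
    have h2 : Tv.quotKerEquivRange.symm ⟨Tv c, hc⟩ = Submodule.Quotient.mk c := by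
      rw [← h1, LinearEquiv.symm_apply_apply]
    show q (Tv.quotKerEquivRange.symm ⟨Tv c, hc⟩) = Tw c
    rw [h2]
    exact Submodule.liftQ_apply _ _ _
  have hnorm : ∀ s : S, ‖f s‖ = ‖(s : E)‖ := by
    rintro ⟨s, hs⟩
    obtain ⟨c, hc⟩ := hs
    subst hc
    rw [hf c ⟨c, rfl⟩]
    have := key c
    rw [real_inner_self_eq_norm_mul_norm, real_inner_self_eq_norm_mul_norm] at this
    nlinarith [norm_nonneg (Tv c), norm_nonneg (Tw c)]
  let L : S →ₗᵢ[ℝ] E := ⟨f, hnorm⟩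
  refine ⟨L.extend, fun i => ?_⟩
  have hvi : v i ∈ S := by
    rw [hS, Finsupp.range_linearCombination]
    exact Submodule.subset_span (Set.mem_range_self i)
  have h3 : L.extend ((⟨v i, hvi⟩ : S) : E) = L ⟨v i, hvi⟩ := LinearIsometry.extend_apply L ⟨v i, hvi⟩
  have h4 : L ⟨v i, hvi⟩ = w i := by
    have hc : Tv (Finsupp.single i (1 : ℝ)) = v i := by
      simp [hTv, Finsupp.linearCombination_single]
    have : (⟨v i, hvi⟩ : S) = ⟨Tv (Finsupp.single i 1), by rw [hc]; exact hvi⟩ := by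
      apply Subtype.ext; simp [hc]
    rw [this]
    show f _ = w i
    rw [hf]
    simp [hTw, Finsupp.linearCombination_single]
  rw [show v i = ((⟨v i, hvi⟩ : S) : E) from rfl, h3, h4]

open scoped RealInnerProductSpace

lemma euclid_inner {n : ℕ} (x y : EuclideanSpace ℝ (Fin n)) :
    ⟪x, y⟫ = ∑ i, x i * y i := by
  simp [PiLp.inner_apply]
  exact Finset.sum_congr rfl fun i _ => mul_comm _ _

lemma gram_posSemidef {n : ℕ} (x : Fin n → EuclideanSpace ℝ (Fin n)) :
    (Matrix.of fun u v => (⟪x u, x v⟫ : ℝ)).PosSemidef := by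
  rw [Matrix.posSemidef_iff_dotProduct_mulVec]
  constructor
  · ext u v
    simp only [conjTranspose_apply, of_apply, star_trivial]
    exact real_inner_comm (x u) (x v)
  · intro y
    have e1 : star y ⬝ᵥ ((Matrix.of fun u v => (⟪x u, x v⟫ : ℝ)) *ᵥ y)
        = ⟪∑ u, y u • x u, ∑ v, y v • x v⟫ := by
      rw [sum_inner]
      simp only [star_trivial, dotProduct, mulVec, dotProduct, of_apply]
      refine Finset.sum_congr rfl fun u _ => ?_
      rw [inner_sum, Finset.mul_sum]
      refine Finset.sum_congr rfl fun v _ => ?_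
      rw [real_inner_smul_left, real_inner_smul_right]
      ring
    rw [e1]
    exact real_inner_self_nonneg

lemma exists_gram_vectors {n : ℕ} (A : Finset (Fin n)) (Z : Matrix (Fin n) (Fin n) ℝ)
    (hZ : (psub Z A).PosSemidef) :
    ∃ c : Fin n → EuclideanSpace ℝ (Fin n),
      ∀ u, u ∈ A → ∀ v, v ∈ A → ⟪c u, c v⟫ = Z u v := by
  classical
  obtain ⟨C, hC⟩ : ∃ C : Matrix A A ℝ, psub Z A = Cᴴ * C := by
    open scoped MatrixOrder Matrix.Norms.L2Operator in
    obtain ⟨B, hB⟩ := CStarAlgebra.nonneg_iff_eq_star_mul_self.mp hZ.nonneg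
    exact ⟨B, hB⟩
  refine ⟨fun u => (WithLp.toLp 2 (fun x => if h : x ∈ A ∧ u ∈ A then C ⟨x, h.1⟩ ⟨u, h.2⟩ else 0) :
      EuclideanSpace ℝ (Fin n)), fun u hu v hv => ?_⟩
  rw [euclid_inner]
  simp only [PiLp.toLp_apply]
  have h1 : ∀ x : Fin n,
      (if h : x ∈ A ∧ u ∈ A then C ⟨x, h.1⟩ ⟨u, h.2⟩ else 0) *
      (if h : x ∈ A ∧ v ∈ A then C ⟨x, h.1⟩ ⟨v, h.2⟩ else 0)
      = if hx : x ∈ A then C ⟨x, hx⟩ ⟨u, hu⟩ * C ⟨x, hx⟩ ⟨v, hv⟩ else 0 := by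
    intro x
    by_cases hx : x ∈ A <;> simp [hx, hu, hv]
  rw [Finset.sum_congr rfl fun x _ => h1 x]
  have h2 : Z u v = psub Z A ⟨u, hu⟩ ⟨v, hv⟩ := rfl
  rw [h2, hC, Matrix.mul_apply]
  rw [← Finset.sum_subset A.subset_univ (by intro x _ hx; simp [hx])]
  rw [← Finset.sum_attach A (fun x => if hx : x ∈ A then C ⟨x, hx⟩ ⟨u, hu⟩ * C ⟨x, hx⟩ ⟨v, hv⟩ else 0)]
  refine Finset.sum_congr (Finset.univ_eq_attach A).symm fun k _ => ?_
  simp [Matrix.conjTranspose_apply, k.2, mul_comm]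

lemma glue {n : ℕ} (A B : Finset (Fin n)) (Z W : Matrix (Fin n) (Fin n) ℝ)
    (hZ : (psub Z A).PosSemidef) (hW : (psub W B).PosSemidef)
    (hZW : ∀ u v : Fin n, u ∈ A → u ∈ B → v ∈ A → v ∈ B → Z u v = W u v) :
    ∃ X : Matrix (Fin n) (Fin n) ℝ, X.PosSemidef ∧
      (∀ u ∈ A, ∀ v ∈ A, X u v = Z u v) ∧ (∀ u ∈ B, ∀ v ∈ B, X u v = W u v) := by
  classical
  obtain ⟨c, hc⟩ := exists_gram_vectors A Z hZ
  obtain ⟨d, hd⟩ := exists_gram_vectors B W hW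
  obtain ⟨Q, hQ⟩ := gram_rigid (fun i : ↥(A ∩ B) => d i) (fun i : ↥(A ∩ B) => c i)
    (fun i j => by
      have hiA : (i : Fin n) ∈ A := (Finset.mem_inter.mp i.2).1
      have hiB : (i : Fin n) ∈ B := (Finset.mem_inter.mp i.2).2
      have hjA : (j : Fin n) ∈ A := (Finset.mem_inter.mp j.2).1
      have hjB : (j : Fin n) ∈ B := (Finset.mem_inter.mp j.2).2
      rw [hd _ hiB _ hjB, hc _ hiA _ hjA]
      exact (hZW _ _ hiA hiB hjA hjB).symm)
  set x : Fin n → EuclideanSpace ℝ (Fin n) :=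
    fun u => if u ∈ A then c u else Q (d u) with hx
  refine ⟨Matrix.of fun u v => ⟪x u, x v⟫, gram_posSemidef x, ?_, ?_⟩
  · intro u hu v hv
    simp only [Matrix.of_apply, hx, if_pos hu, if_pos hv]
    exact hc u hu v hv
  · intro u hu v hv
    have key : ∀ w, w ∈ B → x w = Q (d w) := by
      intro w hw
      by_cases hwA : w ∈ A
      · simp only [hx, if_pos hwA]
        exact (hQ ⟨w, Finset.mem_inter.mpr ⟨hwA, hw⟩⟩).symm
      · simp [hx, hwA]
    rw [Matrix.of_apply, key u hu, key v hv, Q.inner_map_map]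
    exact hd u hu v hv

section TreePart
variable {n ℓ : ℕ} {T : SimpleGraph (Fin ℓ)}

lemma exists_boundary {D : Finset (Fin ℓ)} :
    ∀ {d c : Fin ℓ}, T.Walk d c → d ∈ D → c ∉ D →
      ∃ a b, T.Adj b a ∧ b ∈ D ∧ a ∉ D := by
  intro d c w
  induction w with
  | nil => intro hd hc; exact absurd hd hc
  | @cons u v x h p ih =>
    intro hd hc
    by_cases he : v ∈ D
    · exact ih he hc
    · exact ⟨v, u, h, hd, he⟩

variable {J : Fin ℓ → Finset (Fin n)} {Z : Matrix (Fin n) (Fin n) ℝ}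

lemma step_lemma (hRI : ∀ (i j : Fin ℓ) (w : T.Walk i j), w.IsPath →
      ∀ v : Fin n, v ∈ J i → v ∈ J j → ∀ k ∈ w.support, v ∈ J k)
    (hPSD : ∀ k, (psub Z (J k)).PosSemidef)
    (D : Finset (Fin ℓ))
    (hconn : ∀ k ∈ D, ∀ k' ∈ D, ∃ w : T.Walk k k', ∀ x ∈ w.support, x ∈ D)
    (a b : Fin ℓ) (ha : a ∉ D) (hb : b ∈ D) (hab : T.Adj a b)
    (X : Matrix (Fin n) (Fin n) ℝ) (hX : X.PosSemidef)
    (hAg : ∀ k ∈ D, ∀ u ∈ J k, ∀ v ∈ J k, X u v = Z u v) :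
    ∃ X' : Matrix (Fin n) (Fin n) ℝ, X'.PosSemidef ∧ ∀ k ∈ insert a D, ∀ u ∈ J k, ∀ v ∈ J k, X' u v = Z u v := by
  classical
  set B : Finset (Fin n) := D.biUnion J with hB
  have hsep : ∀ u, u ∈ J a → u ∈ B → u ∈ J b := by
    intro u hua huB
    obtain ⟨k, hk, huk⟩ := Finset.mem_biUnion.mp huB
    obtain ⟨w, hw⟩ := hconn b hb k hk
    have hsup : ∀ x ∈ (w.toPath : T.Walk b k).support, x ∈ D := fun x hx =>
      hw x (SimpleGraph.Walk.support_toPath_subset w hx)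
    have hanot : a ∉ (w.toPath : T.Walk b k).support := fun hx => ha (hsup a hx)
    have hpath : (SimpleGraph.Walk.cons hab (w.toPath : T.Walk b k)).IsPath :=
      SimpleGraph.Walk.IsPath.cons w.toPath.2 hanot
    refine hRI a k (SimpleGraph.Walk.cons hab (w.toPath : T.Walk b k)) hpath u hua huk b ?_
    rw [SimpleGraph.Walk.support_cons]
    exact List.mem_cons_of_mem _ (SimpleGraph.Walk.start_mem_support _)
  have hZX : ∀ u v : Fin n, u ∈ J a → u ∈ B → v ∈ J a → v ∈ B → Z u v = X u v := by
    intro u v hua huB hva hvB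
    exact (hAg b hb u (hsep u hua huB) v (hsep v hva hvB)).symm
  have hXB : (psub X B).PosSemidef := hX.submatrix _
  obtain ⟨X', h1, h2, h3⟩ := glue (J a) B Z X (hPSD a) hXB hZX
  refine ⟨X', h1, ?_⟩
  intro k hk u hu v hv
  rcases Finset.mem_insert.mp hk with rfl | hkD
  · exact h2 u hu v hv
  · rw [h3 u (Finset.mem_biUnion.mpr ⟨k, hkD, hu⟩) v (Finset.mem_biUnion.mpr ⟨k, hkD, hv⟩)]
    exact hAg k hkD u hu v hv

lemma grow_lemma (hRI : ∀ (i j : Fin ℓ) (w : T.Walk i j), w.IsPath →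
      ∀ v : Fin n, v ∈ J i → v ∈ J j → ∀ k ∈ w.support, v ∈ J k)
    (hPSD : ∀ k, (psub Z (J k)).PosSemidef) (hT : T.Connected) :
    ∀ (m : ℕ) (D : Finset (Fin ℓ)), D.Nonempty →
      (∀ k ∈ D, ∀ k' ∈ D, ∃ w : T.Walk k k', ∀ x ∈ w.support, x ∈ D) →
      Dᶜ.card = m →
      (∃ X : Matrix (Fin n) (Fin n) ℝ, X.PosSemidef ∧
        ∀ k ∈ D, ∀ u ∈ J k, ∀ v ∈ J k, X u v = Z u v) →
      ∃ X : Matrix (Fin n) (Fin n) ℝ, X.PosSemidef ∧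
        ∀ k : Fin ℓ, ∀ u ∈ J k, ∀ v ∈ J k, X u v = Z u v := by
  intro m
  induction m with
  | zero =>
    rintro D hne hconn hcard ⟨X, h1, h2⟩
    have hD : D = Finset.univ := by
      rwa [Finset.card_eq_zero, Finset.compl_eq_empty_iff] at hcard
    exact ⟨X, h1, fun k => h2 k (hD ▸ Finset.mem_univ k)⟩
  | succ m ih =>
    rintro D hne hconn hcard hX
    have hDne : Dᶜ.Nonempty := Finset.card_pos.mp (by omega)
    obtain ⟨c, hc⟩ := hDne
    obtain ⟨d, hd⟩ := hne
    have hcD : c ∉ D := Finset.mem_compl.mp hc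
    obtain ⟨w⟩ := hT.preconnected d c
    obtain ⟨a, b, hadj, hbD, haD⟩ := exists_boundary w hd hcD
    obtain ⟨X, h1, h2⟩ := hX
    obtain ⟨X', h1', h2'⟩ := step_lemma hRI hPSD D hconn a b haD hbD hadj.symm X h1 h2
    have walkA : ∀ k₂ ∈ D, ∃ w : T.Walk a k₂, ∀ x ∈ w.support, x ∈ insert a D := by
      intro k₂ hk₂
      obtain ⟨w0, hw0⟩ := hconn b hbD k₂ hk₂
      refine ⟨SimpleGraph.Walk.cons hadj.symm w0, ?_⟩
      intro x hx
      rw [SimpleGraph.Walk.support_cons] at hx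
      rcases List.mem_cons.mp hx with rfl | hx
      · exact Finset.mem_insert_self _ _
      · exact Finset.mem_insert_of_mem (hw0 x hx)
    refine ih (insert a D) ⟨a, Finset.mem_insert_self a D⟩ ?_ ?_ ⟨X', h1', h2'⟩
    · intro k hk k' hk'
      rcases Finset.mem_insert.mp hk with rfl | hkD
      · rcases Finset.mem_insert.mp hk' with rfl | hk'D
        · refine ⟨SimpleGraph.Walk.nil, ?_⟩
          intro x hx
          rw [SimpleGraph.Walk.support_nil] at hx
          rcases List.mem_singleton.mp hx with rfl
          exact Finset.mem_insert_self _ _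
        · exact walkA k' hk'D
      · rcases Finset.mem_insert.mp hk' with rfl | hk'D
        · obtain ⟨w0, hw0⟩ := walkA k hkD
          refine ⟨w0.reverse, ?_⟩
          intro x hx
          rw [SimpleGraph.Walk.support_reverse] at hx
          exact hw0 x (List.mem_reverse.mp hx)
        · obtain ⟨w0, hw0⟩ := hconn k hkD k' hk'D
          exact ⟨w0, fun x hx => Finset.mem_insert_of_mem (hw0 x hx)⟩
    · rw [Finset.compl_insert, Finset.card_erase_of_mem (Finset.mem_compl.mpr haD)]
      omega
end TreePart

/-- Grone et al.:  for `Z ∈ S_F`, there is a positive semidefinite completion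
`X` with `P_F(X) = Z` iff every principal submatrix `Z[J j, J j]` is positive semidefinite. -/
theorem psd_completion {n ℓ : ℕ} (G : SimpleGraph (Fin n)) (T : SimpleGraph (Fin ℓ))
    (J : Fin ℓ → Finset (Fin n)) (hTD : IsTreeDecomp G T J)
    (Z : Matrix (Fin n) (Fin n) ℝ) (hZsymm : Z.IsSymm)
    (hZF : ∀ u v : Fin n, u ≠ v → (¬ ∃ k, u ∈ J k ∧ v ∈ J k) → Z u v = 0) :
    (∃ X : Matrix (Fin n) (Fin n) ℝ, X.PosSemidef ∧ projF J X = Z) ↔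
      ∀ j : Fin ℓ, (psub Z (J j)).PosSemidef := by
  classical
  obtain ⟨hT, hVC, hEC, hRI⟩ := hTD
  constructor
  · rintro ⟨X, hX, hP⟩ j
    have hps : psub Z (J j) = psub X (J j) := by
      ext u v
      show Z u.1 v.1 = X u.1 v.1
      rw [← hP]
      show projF J X u.1 v.1 = X u.1 v.1
      rw [projF, Matrix.of_apply, if_pos (Or.inr ⟨j, u.2, v.2⟩)]
    rw [hps]
    exact hX.submatrix _
  · intro hpsd
    have hconn : T.Connected := hT.isConnected
    have hne : Nonempty (Fin ℓ) := hconn.nonempty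
    obtain ⟨r⟩ := hne
    -- base: a PSD matrix agreeing with Z on (J r)²
    have hbase : ∃ X : Matrix (Fin n) (Fin n) ℝ, X.PosSemidef ∧
        ∀ k ∈ ({r} : Finset (Fin ℓ)), ∀ u ∈ J k, ∀ v ∈ J k, X u v = Z u v := by
      have h0 : (psub (0 : Matrix (Fin n) (Fin n) ℝ) (∅ : Finset (Fin n))).PosSemidef := by
        have : (psub (0 : Matrix (Fin n) (Fin n) ℝ) (∅ : Finset (Fin n))) = 0 := by
          ext u v; rfl
        rw [this]
        exact Matrix.PosSemidef.zero
      obtain ⟨X, h1, h2, _⟩ := glue (J r) (∅ : Finset (Fin n)) Z 0 (hpsd r) h0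
        (fun u v _ hu _ _ => absurd hu (Finset.notMem_empty u))
      refine ⟨X, h1, ?_⟩
      intro k hk u hu v hv
      rcases Finset.mem_singleton.mp hk with rfl
      exact h2 u hu v hv
    have hconn1 : ∀ k ∈ ({r} : Finset (Fin ℓ)), ∀ k' ∈ ({r} : Finset (Fin ℓ)),
        ∃ w : T.Walk k k', ∀ x ∈ w.support, x ∈ ({r} : Finset (Fin ℓ)) := by
      intro k hk k' hk'
      rcases Finset.mem_singleton.mp hk with rfl
      rcases Finset.mem_singleton.mp hk' with rfl
      refine ⟨SimpleGraph.Walk.nil, ?_⟩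
      intro x hx
      rw [SimpleGraph.Walk.support_nil] at hx
      rcases List.mem_singleton.mp hx with rfl
      exact hk
    obtain ⟨X, hXpsd, hXag⟩ := grow_lemma hRI hpsd hconn (({r} : Finset (Fin ℓ))ᶜ.card)
      {r} ⟨r, Finset.mem_singleton_self r⟩ hconn1 rfl hbase
    refine ⟨X, hXpsd, ?_⟩
    ext u v
    show projF J X u v = Z u v
    rw [projF, Matrix.of_apply]
    by_cases h : u = v ∨ ∃ k, u ∈ J k ∧ v ∈ J k
    · rw [if_pos h]
      rcases h with rfl | ⟨k, h1, h2⟩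
      · obtain ⟨k, hk⟩ := hVC u
        exact hXag k u hk u hk
      · exact hXag k u h1 v h2
    · rw [if_neg h]
      have h1 : u ≠ v := fun e => h (Or.inl e)
      have h2 : ¬∃ k, u ∈ J k ∧ v ∈ J k := fun e => h (Or.inr e)
      exact (hZF u v h1 h2).symm
end

section
/- Let 𝒯 = ({J_1,…,J_ℓ}, T) be a tree decomposition of a graph G on n vertices and let F be its completion graph. For every real symmetric n×n matrix Z ∈ S_F, there exists an n×n real symmetric positive definite matrix X with P_F(X) = Z if and only if the principal submatrix Z[J_j,J_j] is positive definite for every j ∈ {1,…,ℓ}. -/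
open Matrix

section Quad

variable {n : ℕ}

/-- The quadratic form of `Z` at `x`, written as an explicit double sum. -/
def quadf (Z : Matrix (Fin n) (Fin n) ℝ) (x : Fin n → ℝ) : ℝ :=
  ∑ u, ∑ v, x u * Z u v * x v

lemma dot_quad {m : Type*} [Fintype m] (M : Matrix m m ℝ) (x : m → ℝ) :
    dotProduct (star x) (M *ᵥ x) = ∑ u, ∑ v, x u * M u v * x v := by
  simp [dotProduct, mulVec, Finset.mul_sum, mul_assoc]

/-- Extension of a vector on a subset by zero. -/
def extv (s : Finset (Fin n)) (f : s → ℝ) : Fin n → ℝ :=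
  fun v => if h : v ∈ s then f ⟨v, h⟩ else 0

lemma extv_not_mem {s : Finset (Fin n)} (f : s → ℝ) {v : Fin n} (hv : v ∉ s) :
    extv s f v = 0 := dif_neg hv

lemma extv_coe {s : Finset (Fin n)} (f : s → ℝ) (w : s) : extv s f w.val = f w := by
  simp [extv]

lemma sum_extv_mul (s : Finset (Fin n)) (f : s → ℝ) (F : Fin n → ℝ) :
    ∑ v, F v * extv s f v = ∑ w : s, F w.val * f w := by
  have h1 : ∑ v, F v * extv s f v = ∑ v ∈ s, F v * extv s f v := by
    refine (Finset.sum_subset s.subset_univ ?_).symm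
    intro v _ hv
    rw [extv_not_mem f hv, mul_zero]
  rw [h1, ← Finset.sum_attach s (fun v => F v * extv s f v), Finset.univ_eq_attach]
  exact Finset.sum_congr rfl fun w _ => by rw [extv_coe]

lemma sum_supported (s : Finset (Fin n)) (x : Fin n → ℝ) (hx : ∀ v ∉ s, x v = 0)
    (F : Fin n → ℝ) : ∑ v, x v * F v = ∑ w : s, x w.val * F w.val := by
  rw [Finset.univ_eq_attach, Finset.sum_attach s (fun v => x v * F v)]
  exact (Finset.sum_subset s.subset_univ (fun v _ hv => by rw [hx v hv, zero_mul])).symm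

lemma psub_isHermitian {Z : Matrix (Fin n) (Fin n) ℝ} (hZ : Z.IsSymm) (s : Finset (Fin n)) :
    (Z.submatrix (Subtype.val : s → Fin n) Subtype.val).IsHermitian := by
  rw [Matrix.IsHermitian, conjTranspose_eq_transpose_of_trivial]
  ext u v
  exact hZ.apply u.val v.val

lemma quadf_eq_sub (Z : Matrix (Fin n) (Fin n) ℝ) (s : Finset (Fin n)) (x : Fin n → ℝ)
    (hx : ∀ v ∉ s, x v = 0) :
    quadf Z x = ∑ u : s, ∑ v : s, x u.val * Z u.val v.val * x v.val := by
  unfold quadf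
  have h1 : ∀ u : Fin n, ∑ v, x u * Z u v * x v = x u * ∑ v, x v * Z u v := by
    intro u
    rw [Finset.mul_sum]
    exact Finset.sum_congr rfl fun v _ => by ring
  calc ∑ u, ∑ v, x u * Z u v * x v
      = ∑ u, x u * (∑ v, x v * Z u v) := Finset.sum_congr rfl fun u _ => h1 u
    _ = ∑ u : s, x u.val * (∑ v, x v * Z u.val v) :=
        sum_supported s x hx (fun u => ∑ v, x v * Z u v)
    _ = ∑ u : s, ∑ v : s, x u.val * Z u.val v.val * x v.val := by
        refine Finset.sum_congr rfl fun u _ => ?_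
        rw [sum_supported s x hx (fun v => Z u.val v), Finset.mul_sum]
        exact Finset.sum_congr rfl fun v _ => by ring

/-- The key translation: positive definiteness of the principal submatrix on `s` is equivalent
to positivity of the full quadratic form on vectors supported in `s`. -/
lemma posDef_sub_iff (Z : Matrix (Fin n) (Fin n) ℝ) (hZ : Z.IsSymm) (s : Finset (Fin n)) :
    (Z.submatrix (Subtype.val : s → Fin n) Subtype.val).PosDef ↔
      ∀ x : Fin n → ℝ, (∀ v ∉ s, x v = 0) → x ≠ 0 → 0 < quadf Z x := by
  constructor
  · intro hP x hx hx0
    obtain ⟨-, hpd⟩ := posDef_iff_dotProduct_mulVec.mp hP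
    have hx' : (fun u : s => x u.val) ≠ 0 := by
      obtain ⟨v, hv⟩ := Function.ne_iff.mp hx0
      have hvs : v ∈ s := by
        by_contra h
        exact hv (hx v h)
      exact Function.ne_iff.mpr ⟨⟨v, hvs⟩, hv⟩
    have h2 := hpd hx'
    rw [dot_quad] at h2
    rw [quadf_eq_sub Z s x hx]
    exact h2
  · intro h
    refine posDef_iff_dotProduct_mulVec.mpr ⟨psub_isHermitian hZ s, fun x hx0 => ?_⟩
    have hsupp : ∀ v ∉ s, extv s x v = 0 := fun v hv => extv_not_mem x hv
    have hne : extv s x ≠ 0 := by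
      obtain ⟨u, hu⟩ := Function.ne_iff.mp hx0
      refine Function.ne_iff.mpr ⟨u.val, ?_⟩
      rw [extv_coe]
      exact hu
    have h2 := h _ hsupp hne
    rw [quadf_eq_sub Z s _ hsupp] at h2
    rw [dot_quad]
    have h3 : (∑ u : s, ∑ v : s,
          x u * (Z.submatrix (Subtype.val : s → Fin n) Subtype.val) u v * x v)
        = ∑ u : s, ∑ v : s, extv s x u.val * Z u.val v.val * extv s x v.val := by
      refine Finset.sum_congr rfl fun u _ => Finset.sum_congr rfl fun v _ => ?_
      rw [extv_coe, extv_coe, submatrix_apply]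
    rw [h3]
    exact h2

end Quad

section Step

variable {n : ℕ}

/-- One completion step: given two "bags" `s` and `t` such that the quadratic form of `Z` is
positive definite on vectors supported in `s` and on vectors supported in `t`, we can modify the
entries of `Z` in `(s \ t) × (t \ s)` (and symmetrically) so that the quadratic form of the new
matrix is positive definite on vectors supported in `s ∪ t`. -/
lemma completion_step (Z : Matrix (Fin n) (Fin n) ℝ) (hZ : Z.IsSymm)
    (s t : Finset (Fin n))
    (hs : ∀ x : Fin n → ℝ, (∀ v ∉ s, x v = 0) → x ≠ 0 → 0 < quadf Z x)
    (ht : ∀ x : Fin n → ℝ, (∀ v ∉ t, x v = 0) → x ≠ 0 → 0 < quadf Z x) :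
    ∃ Z' : Matrix (Fin n) (Fin n) ℝ, Z'.IsSymm ∧
      (∀ u v : Fin n, ¬((u ∈ s \ t ∧ v ∈ t \ s) ∨ (u ∈ t \ s ∧ v ∈ s \ t)) → Z' u v = Z u v) ∧
      (∀ x : Fin n → ℝ, (∀ v ∉ s ∪ t, x v = 0) → x ≠ 0 → 0 < quadf Z' x) := by
  classical
  set c : Finset (Fin n) := s ∩ t with hc
  set C : Matrix c c ℝ := Z.submatrix Subtype.val Subtype.val with hCdef
  have hCpd : C.PosDef := by
    rw [hCdef, posDef_sub_iff Z hZ c]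
    intro x hx hx0
    exact hs x (fun v hv => hx v (fun hvc => hv (Finset.mem_of_mem_inter_left hvc))) hx0
  have hdet : IsUnit C.det := hCpd.det_pos.ne'.isUnit
  -- the "solution" vectors
  set h : Fin n → (c → ℝ) := fun v => C⁻¹ *ᵥ (fun w => Z w.val v) with hhdef
  have hCh : ∀ (v : Fin n) (w : c), (∑ w' : c, C w w' * h v w') = Z w.val v := by
    intro v w
    have h1 : C *ᵥ (h v) = fun w => Z w.val v := by
      simp only [hhdef]
      rw [mulVec_mulVec, Matrix.mul_nonsing_inv C hdet, one_mulVec]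
    have h2 := congrFun h1 w
    simpa [mulVec, dotProduct] using h2
  set Fill : Fin n → Fin n → ℝ := fun u v => ∑ w : c, Z u w.val * h v w with hFdef
  refine ⟨Matrix.of fun u v =>
    if u ∈ s \ t ∧ v ∈ t \ s then Fill u v
    else if u ∈ t \ s ∧ v ∈ s \ t then Fill v u
    else Z u v, ?_, ?_, ?_⟩
  · -- symmetry
    ext u v
    simp only [transpose_apply, Matrix.of_apply]
    have hab : ∀ w : Fin n, w ∈ s \ t → w ∉ t \ s := by
      intro w hw hw'
      rw [Finset.mem_sdiff] at hw hw'
      exact hw.2 hw'.1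
    by_cases h1 : u ∈ s \ t ∧ v ∈ t \ s
    · rw [if_neg, if_pos ⟨h1.2, h1.1⟩, if_pos h1]
      rintro ⟨hv', hu'⟩
      exact hab u h1.1 hu'
    · by_cases h2 : u ∈ t \ s ∧ v ∈ s \ t
      · rw [if_pos ⟨h2.2, h2.1⟩, if_neg, if_pos h2]
        rintro ⟨hv', hu'⟩
        exact hab u hv' h2.1
      · rw [if_neg, if_neg, if_neg h2, if_neg h1]
        · exact hZ.apply u v
        · rintro ⟨hv', hu'⟩
          exact h1 ⟨hu', hv'⟩
        · rintro ⟨hv', hu'⟩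
          exact h2 ⟨hu', hv'⟩
  · -- agreement off the filled blocks
    intro u v huv
    simp only [Matrix.of_apply]
    rw [if_neg (fun h1 => huv (Or.inl h1)), if_neg (fun h2 => huv (Or.inr h2))]
  · -- positivity on s ∪ t
    intro x hx hx0
    set a : Finset (Fin n) := s \ t with ha
    set b : Finset (Fin n) := t \ s with hb
    set xa : Fin n → ℝ := fun v => if v ∈ a then x v else 0 with hxa
    set xc : Fin n → ℝ := fun v => if v ∈ c then x v else 0 with hxc
    set xb : Fin n → ℝ := fun v => if v ∈ b then x v else 0 with hxb
    set B : (Fin n → ℝ) → (Fin n → ℝ) → ℝ := fun p q => ∑ u, ∑ v, p u * Z u v * q v with hB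
    -- membership facts
    have hmem : ∀ v : Fin n, (v ∈ a → (v ∈ s ∧ v ∉ t ∧ v ∉ b ∧ v ∉ c)) ∧
        (v ∈ b → (v ∈ t ∧ v ∉ s ∧ v ∉ a ∧ v ∉ c)) ∧
        (v ∈ c → (v ∈ s ∧ v ∈ t ∧ v ∉ a ∧ v ∉ b)) := by
      intro v
      simp only [ha, hb, hc, Finset.mem_sdiff, Finset.mem_inter]
      refine ⟨?_, ?_, ?_⟩ <;> rintro ⟨h1, h2⟩ <;> simp_all
    have hxdecomp : x = xa + xc + xb := by
      funext v
      simp only [Pi.add_apply, hxa, hxc, hxb]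
      by_cases hvs : v ∈ s <;> by_cases hvt : v ∈ t
      · have hvc : v ∈ c := Finset.mem_inter.mpr ⟨hvs, hvt⟩
        rw [if_neg ((hmem v).2.2 hvc).2.2.1, if_pos hvc, if_neg ((hmem v).2.2 hvc).2.2.2]
        ring
      · have hva : v ∈ a := Finset.mem_sdiff.mpr ⟨hvs, hvt⟩
        rw [if_pos hva, if_neg ((hmem v).1 hva).2.2.2, if_neg ((hmem v).1 hva).2.2.1]
        ring
      · have hvb : v ∈ b := Finset.mem_sdiff.mpr ⟨hvt, hvs⟩
        rw [if_neg ((hmem v).2.1 hvb).2.2.1, if_neg ((hmem v).2.1 hvb).2.2.2, if_pos hvb]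
        ring
      · have : x v = 0 := hx v (fun hm => by
          rcases Finset.mem_union.mp hm with h | h
          exacts [hvs h, hvt h])
        rw [if_neg, if_neg, if_neg, this]
        · ring
        · intro hvb
          exact hvt ((hmem v).2.1 hvb).1
        · intro hvc
          exact hvs ((hmem v).2.2 hvc).1
        · intro hva
          exact hvs ((hmem v).1 hva).1
    -- bilinearity lemmas
    have hBaddl : ∀ p p' q, B (p + p') q = B p q + B p' q := by
      intro p p' q
      simp only [hB, Pi.add_apply, add_mul, ← Finset.sum_add_distrib]
    have hBaddr : ∀ p q q', B p (q + q') = B p q + B p q' := by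
      intro p q q'
      simp only [hB, Pi.add_apply, mul_add, ← Finset.sum_add_distrib]
    have hBsubl : ∀ p p' q, B (p - p') q = B p q - B p' q := by
      intro p p' q
      simp only [hB, Pi.sub_apply, sub_mul, ← Finset.sum_sub_distrib]
    have hBsubr : ∀ p q q', B p (q - q') = B p q - B p q' := by
      intro p q q'
      simp only [hB, Pi.sub_apply, mul_sub, ← Finset.sum_sub_distrib]
    have hBcomm : ∀ p q, B p q = B q p := by
      intro p q
      simp only [hB]
      rw [Finset.sum_comm]
      refine Finset.sum_congr rfl fun u _ => Finset.sum_congr rfl fun v _ => ?_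
      rw [hZ.apply u v]
      ring
    -- supported vectors
    have hxa_supp : ∀ v ∉ a, xa v = 0 := fun v hv => if_neg hv
    have hxb_supp : ∀ v ∉ b, xb v = 0 := fun v hv => if_neg hv
    have hxc_supp : ∀ v ∉ c, xc v = 0 := fun v hv => if_neg hv
    have hxa_mem : ∀ v ∈ a, xa v = x v := fun v hv => by
      simp only [hxa]
      rw [if_pos hv]
    have hxb_mem : ∀ v ∈ b, xb v = x v := fun v hv => by
      simp only [hxb]
      rw [if_pos hv]
    have hxc_mem : ∀ v ∈ c, xc v = x v := fun v hv => by
      simp only [hxc]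
      rw [if_pos hv]
    set g' : c → ℝ := fun w => ∑ v, xb v * h v w with hg'
    set g : Fin n → ℝ := extv c g' with hg
    have hg_supp : ∀ v ∉ c, g v = 0 := fun v hv => extv_not_mem g' hv
    -- the two auxiliary vectors
    set y : Fin n → ℝ := xa + xc + g with hy
    set w : Fin n → ℝ := xb - g with hw
    set Φ : ℝ := ∑ u, ∑ v, xa u * Fill u v * xb v with hΦ
    -- Fact A : B xa g = Φ
    have hFactA : B xa g = Φ := by
      simp only [hB, hΦ]
      refine Finset.sum_congr rfl fun u _ => ?_
      rw [hg, sum_extv_mul c g' (fun v => xa u * Z u v)]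
      have : ∀ w' : c, xa u * Z u w'.val * g' w' = ∑ v, xa u * Z u w'.val * (xb v * h v w') := by
        intro w'
        rw [hg', Finset.mul_sum]
      rw [Finset.sum_congr rfl fun w' _ => this w', Finset.sum_comm]
      refine Finset.sum_congr rfl fun v _ => ?_
      simp only [hFdef]
      rw [Finset.mul_sum, Finset.sum_mul]
      refine Finset.sum_congr rfl fun w' _ => by ring
    -- the C-solution fact transported to g'
    have hCg : ∀ u : c, (∑ w' : c, C u w' * g' w') = ∑ v, xb v * Z u.val v := by
      intro u
      have h1 : ∀ w' : c, C u w' * g' w' = ∑ v, xb v * (C u w' * h v w') := by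
        intro w'
        rw [hg', Finset.mul_sum]
        exact Finset.sum_congr rfl fun v _ => by ring
      rw [Finset.sum_congr rfl fun w' _ => h1 w', Finset.sum_comm]
      refine Finset.sum_congr rfl fun v _ => ?_
      rw [← Finset.mul_sum, hCh v u]
    -- Fact B : B xc g = B xc xb
    have hFactB : B xc g = B xc xb := by
      simp only [hB]
      have h1 : ∀ p : Fin n → ℝ, ∀ u, ∑ v, xc u * Z u v * p v = xc u * ∑ v, Z u v * p v := by
        intro p u
        rw [Finset.mul_sum]
        exact Finset.sum_congr rfl fun v _ => by ring
      rw [Finset.sum_congr rfl fun u _ => h1 g u, Finset.sum_congr rfl fun u _ => h1 xb u,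
        sum_supported c xc hxc_supp (fun u => ∑ v, Z u v * g v),
        sum_supported c xc hxc_supp (fun u => ∑ v, Z u v * xb v)]
      refine Finset.sum_congr rfl fun u _ => ?_
      congr 1
      rw [hg, sum_extv_mul c g' (fun v => Z u.val v)]
      have h2 : ∀ w' : c, Z u.val w'.val * g' w' = C u w' * g' w' := fun w' => rfl
      rw [Finset.sum_congr rfl fun w' _ => h2 w', hCg u]
      exact Finset.sum_congr rfl fun v _ => by ring
    -- Fact C : B g g = B g xb
    have hFactC : B g g = B g xb := by
      simp only [hB]
      have h1 : ∀ p : Fin n → ℝ, ∀ u, ∑ v, g u * Z u v * p v = g u * ∑ v, Z u v * p v := by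
        intro p u
        rw [Finset.mul_sum]
        exact Finset.sum_congr rfl fun v _ => by ring
      rw [Finset.sum_congr rfl fun u _ => h1 g u, Finset.sum_congr rfl fun u _ => h1 xb u,
        sum_supported c g hg_supp (fun u => ∑ v, Z u v * g v),
        sum_supported c g hg_supp (fun u => ∑ v, Z u v * xb v)]
      refine Finset.sum_congr rfl fun u _ => ?_
      congr 1
      rw [hg, sum_extv_mul c g' (fun v => Z u.val v)]
      have h2 : ∀ w' : c, Z u.val w'.val * g' w' = C u w' * g' w' := fun w' => rfl
      rw [Finset.sum_congr rfl fun w' _ => h2 w', hCg u]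
      exact Finset.sum_congr rfl fun v _ => by ring
    -- pointwise formula for the quadratic form of Z'
    have hptwise : ∀ u v : Fin n,
        x u * (Matrix.of fun u v =>
          if u ∈ s \ t ∧ v ∈ t \ s then Fill u v
          else if u ∈ t \ s ∧ v ∈ s \ t then Fill v u
          else Z u v) u v * x v =
        x u * Z u v * x v + (xa u * Fill u v * xb v - xa u * Z u v * xb v)
          + (xb u * Fill v u * xa v - xb u * Z u v * xa v) := by
      intro u v
      simp only [Matrix.of_apply, ← ha, ← hb]
      by_cases h1 : u ∈ a ∧ v ∈ b
      · rw [if_pos h1, hxa_mem u h1.1, hxb_mem v h1.2,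
          hxb_supp u ((hmem u).1 h1.1).2.2.1, hxa_supp v ((hmem v).2.1 h1.2).2.2.1]
        ring
      · by_cases h2 : u ∈ b ∧ v ∈ a
        · rw [if_neg h1, if_pos h2, hxb_mem u h2.1, hxa_mem v h2.2,
            hxa_supp u ((hmem u).2.1 h2.1).2.2.1, hxb_supp v ((hmem v).1 h2.2).2.2.1]
          ring
        · rw [if_neg h1, if_neg h2]
          have hz1 : xa u * xb v = 0 := by
            by_cases hu : u ∈ a
            · rw [hxb_supp v (fun hv => h1 ⟨hu, hv⟩)]
              ring
            · rw [hxa_supp u hu]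
              ring
          have hz2 : xb u * xa v = 0 := by
            by_cases hu : u ∈ b
            · rw [hxa_supp v (fun hv => h2 ⟨hu, hv⟩)]
              ring
            · rw [hxb_supp u hu]
              ring
          have e1 : xa u * Fill u v * xb v - xa u * Z u v * xb v = 0 := by
            have : xa u * Fill u v * xb v = (xa u * xb v) * Fill u v := by ring
            have h3 : xa u * Z u v * xb v = (xa u * xb v) * Z u v := by ring
            rw [this, h3, hz1]
            ring
          have e2 : xb u * Fill v u * xa v - xb u * Z u v * xa v = 0 := by
            have : xb u * Fill v u * xa v = (xb u * xa v) * Fill v u := by ring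
            have h3 : xb u * Z u v * xa v = (xb u * xa v) * Z u v := by ring
            rw [this, h3, hz2]
            ring
          rw [e1, e2]
          ring
    have hΦ2 : (∑ u, ∑ v, xb u * Fill v u * xa v) = Φ := by
      rw [hΦ, Finset.sum_comm]
      exact Finset.sum_congr rfl fun u _ => Finset.sum_congr rfl fun v _ => by ring
    have hF4 : quadf (Matrix.of fun u v =>
          if u ∈ s \ t ∧ v ∈ t \ s then Fill u v
          else if u ∈ t \ s ∧ v ∈ s \ t then Fill v u
          else Z u v) x = B x x + (Φ - B xa xb) + (Φ - B xb xa) := by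
      unfold quadf
      rw [Finset.sum_congr rfl fun u _ => Finset.sum_congr rfl fun v _ => hptwise u v]
      simp only [Finset.sum_add_distrib, Finset.sum_sub_distrib]
      rw [hΦ2]
    -- expansion of B y y + B w w
    have hyexp : B y y = B xa xa + B xc xc + B g g + 2 * B xa xc + 2 * B xa g + 2 * B xc g := by
      rw [hy, hBaddl, hBaddl, hBaddr, hBaddr, hBaddr, hBaddr, hBaddr, hBaddr,
        hBcomm xc xa, hBcomm g xa, hBcomm g xc]
      ring
    have hwexp : B w w = B xb xb - 2 * B xb g + B g g := by
      rw [hw, hBsubl, hBsubr, hBsubr, hBcomm g xb]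
      ring
    have hxexp : B x x = B xa xa + B xc xc + B xb xb + 2 * B xa xc + 2 * B xa xb
        + 2 * B xc xb := by
      rw [hxdecomp, hBaddl, hBaddl, hBaddr, hBaddr, hBaddr, hBaddr, hBaddr, hBaddr,
        hBcomm xc xa, hBcomm xb xa, hBcomm xb xc]
      ring
    have hkey : quadf (Matrix.of fun u v =>
          if u ∈ s \ t ∧ v ∈ t \ s then Fill u v
          else if u ∈ t \ s ∧ v ∈ s \ t then Fill v u
          else Z u v) x = B y y + B w w := by
      rw [hF4, hxexp, hyexp, hwexp, hFactA, hFactB, hFactC, hBcomm xb xa, hBcomm xb g]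
      ring
    have hysupp : ∀ v ∉ s, y v = 0 := by
      intro v hv
      rw [hy]
      simp only [Pi.add_apply]
      rw [hxa_supp v (fun hva => hv ((hmem v).1 hva).1),
        hxc_supp v (fun hvc => hv ((hmem v).2.2 hvc).1),
        hg_supp v (fun hvc => hv ((hmem v).2.2 hvc).1)]
      ring
    have hwsupp : ∀ v ∉ t, w v = 0 := by
      intro v hv
      rw [hw]
      simp only [Pi.sub_apply]
      rw [hxb_supp v (fun hvb => hv ((hmem v).2.1 hvb).1),
        hg_supp v (fun hvc => hv ((hmem v).2.2 hvc).2.1)]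
      ring
    have hB0 : B 0 0 = 0 := by
      simp [hB]
    have hquady : quadf Z y = B y y := rfl
    have hquadw : quadf Z w = B w w := rfl
    rw [hkey]
    by_cases hy0 : y = 0
    · have hw0 : w ≠ 0 := by
        intro hw0
        apply hx0
        funext v
        simp only [Pi.zero_apply]
        have hyv : xa v + xc v + g v = 0 := by
          have h' := congrFun hy0 v
          simpa only [hy, Pi.add_apply, Pi.zero_apply] using h'
        have hwv : xb v - g v = 0 := by
          have h' := congrFun hw0 v
          simpa only [hw, Pi.sub_apply, Pi.zero_apply] using h'
        by_cases hvs : v ∈ s <;> by_cases hvt : v ∈ t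
        · -- v ∈ c
          have hvc : v ∈ c := Finset.mem_inter.mpr ⟨hvs, hvt⟩
          have hxbv : xb v = 0 := hxb_supp v ((hmem v).2.2 hvc).2.2.2
          have hgv : g v = 0 := by
            rw [hxbv] at hwv
            linarith
          have hxav : xa v = 0 := hxa_supp v ((hmem v).2.2 hvc).2.2.1
          rw [hxav, hgv, hxc_mem v hvc] at hyv
          simpa using hyv
        · -- v ∈ a
          have hva : v ∈ a := Finset.mem_sdiff.mpr ⟨hvs, hvt⟩
          have hgv : g v = 0 := hg_supp v ((hmem v).1 hva).2.2.2
          have hxcv : xc v = 0 := hxc_supp v ((hmem v).1 hva).2.2.2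
          rw [hxa_mem v hva, hxcv, hgv] at hyv
          simpa using hyv
        · -- v ∈ b
          have hvb : v ∈ b := Finset.mem_sdiff.mpr ⟨hvt, hvs⟩
          have hgv : g v = 0 := hg_supp v ((hmem v).2.1 hvb).2.2.2
          rw [hgv, hxb_mem v hvb] at hwv
          simpa using hwv
        · exact hx v (fun hm => by
            rcases Finset.mem_union.mp hm with h' | h'
            exacts [hvs h', hvt h'])
      have h1 : (0:ℝ) < B w w := by
        rw [← hquadw]
        exact ht w hwsupp hw0
      have h2 : B y y = 0 := by
        rw [hy0]
        exact hB0
      rw [h2]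
      linarith
    · have h1 : (0:ℝ) < B y y := by
        rw [← hquady]
        exact hs y hysupp hy0
      have h2 : (0:ℝ) ≤ B w w := by
        by_cases hw0 : w = 0
        · rw [hw0, hB0]
        · rw [← hquadw]
          exact le_of_lt (ht w hwsupp hw0)
      linarith

end Step

section Tree

open SimpleGraph

/-- Lift a walk avoiding `i` to the subgraph induced on the complement of `i`. -/
def liftWalk {V : Type} {T : SimpleGraph V} {i : V} :
    ∀ {a b : V} (w : T.Walk a b) (ha : a ≠ i) (hb : b ≠ i),
      (∀ k ∈ w.support, k ≠ i) →
      (T.comap (Subtype.val : {j : V // j ≠ i} → V)).Walk ⟨a, ha⟩ ⟨b, hb⟩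
  | _, _, SimpleGraph.Walk.nil, _, _, _ => SimpleGraph.Walk.nil
  | _, _, SimpleGraph.Walk.cons huc q, ha, hb, hsup =>
      SimpleGraph.Walk.cons
        (by exact huc)
        (liftWalk q
          (hsup _ (by rw [SimpleGraph.Walk.support_cons];
                      exact List.mem_cons_of_mem _ q.start_mem_support))
          hb
          (fun k hk => hsup k (by rw [SimpleGraph.Walk.support_cons];
                                  exact List.mem_cons_of_mem _ hk)))

/-- A tree with at least two vertices has a leaf. -/
lemma exists_leaf {V : Type} [Fintype V] [DecidableEq V] {T : SimpleGraph V}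
    [DecidableRel T.Adj] (hT : T.IsTree) (hm : 1 < Fintype.card V) :
    ∃ i p : V, T.neighborFinset i = {p} := by
  classical
  have hdeg1 : ∀ v : V, 1 ≤ T.degree v := by
    intro v
    obtain ⟨u, hu⟩ := Fintype.exists_ne_of_one_lt_card hm v
    obtain ⟨q⟩ := hT.isConnected.preconnected v u
    rcases q with _ | ⟨hadj, q'⟩
    · exact absurd rfl hu
    · exact (T.degree_pos_iff_exists_adj v).mpr ⟨_, hadj⟩
  by_contra hno
  push_neg at hno
  have h2 : ∀ v : V, 2 ≤ T.degree v := by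
    intro v
    have hne1 : T.degree v ≠ 1 := by
      intro h1
      obtain ⟨p, hp⟩ := Finset.card_eq_one.mp h1
      exact hno v p hp
    have := hdeg1 v
    omega
  have hsum := T.sum_degrees_eq_twice_card_edges
  have hcard_e := hT.card_edgeFinset
  have hlow : 2 * Fintype.card V ≤ ∑ v : V, T.degree v := by
    calc 2 * Fintype.card V = ∑ _v : V, 2 := by
          rw [Finset.sum_const, Finset.card_univ, smul_eq_mul, mul_comm]
    _ ≤ ∑ v : V, T.degree v := Finset.sum_le_sum (fun v _ => h2 v)
  rw [hsum] at hlow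
  omega

end Tree

section Core

/-- The core existence result, proved by strong induction on the number of nodes of the tree. -/
lemma core {n : ℕ} (m : ℕ) :
    ∀ (V : Type) (instF : Fintype V) (instD : DecidableEq V), Fintype.card V = m →
    ∀ (T : SimpleGraph V) (J : V → Finset (Fin n)) (Z : Matrix (Fin n) (Fin n) ℝ),
      Z.IsSymm → T.IsTree →
      (∀ v : Fin n, ∃ k, v ∈ J k) →
      (∀ (i j : V) (w : T.Walk i j), w.IsPath → ∀ v : Fin n, v ∈ J i → v ∈ J j →
        ∀ k ∈ w.support, v ∈ J k) →
      (∀ k : V, ∀ x : Fin n → ℝ, (∀ v ∉ J k, x v = 0) → x ≠ 0 → 0 < quadf Z x) →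
      ∃ X : Matrix (Fin n) (Fin n) ℝ, X.PosDef ∧
        ∀ u v : Fin n, (u = v ∨ ∃ k, u ∈ J k ∧ v ∈ J k) → X u v = Z u v := by
  induction m using Nat.strong_induction_on with
  | _ m IH =>
  intro V instF instD hcard T J Z hZ hT hcov hRI hbag
  classical
  by_cases hm1 : m ≤ 1
  · -- base case : a single node whose bag is everything
    have hne : Nonempty V := hT.isConnected.nonempty
    have hm : m = 1 := by
      have := Fintype.card_pos (α := V)
      omega
    obtain ⟨k0, hk0⟩ := Fintype.card_eq_one_iff.mp (hcard.trans hm)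
    have huniv : ∀ v : Fin n, v ∈ J k0 := by
      intro v
      obtain ⟨k, hk⟩ := hcov v
      rwa [hk0 k] at hk
    refine ⟨Z, posDef_iff_dotProduct_mulVec.mpr ⟨?_, ?_⟩, fun u v _ => rfl⟩
    · rw [Matrix.IsHermitian, conjTranspose_eq_transpose_of_trivial]
      exact hZ
    · intro x hx
      rw [dot_quad]
      exact hbag k0 x (fun v hv => absurd (huniv v) hv) hx
  · push_neg at hm1
    rw [← hcard] at hm1
    -- find a leaf i with unique neighbor p
    obtain ⟨i, p, hnb⟩ := exists_leaf hT hm1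
    have hip : T.Adj i p := by
      rw [← SimpleGraph.mem_neighborFinset, hnb]
      exact Finset.mem_singleton_self p
    have hleaf : ∀ q, T.Adj i q → q = p := by
      intro q hq
      have hmem' : q ∈ T.neighborFinset i := by rwa [SimpleGraph.mem_neighborFinset]
      rwa [hnb, Finset.mem_singleton] at hmem'
    have hpi : p ≠ i := hip.ne'
    -- any bag besides i containing a vertex of J i forces it into J p
    have hA : ∀ v : Fin n, ∀ b : V, b ≠ i → v ∈ J i → v ∈ J b → v ∈ J p := by
      intro v b hb hvi hvb
      obtain ⟨w, hw, -⟩ := hT.existsUnique_path i b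
      have hpsup : p ∈ w.support := by
        rcases w with _ | ⟨hadj, q⟩
        · exact absurd rfl hb
        · rw [SimpleGraph.Walk.support_cons]
          have hcp := hleaf _ hadj
          exact List.mem_cons_of_mem _ (hcp ▸ q.start_mem_support)
      exact hRI i b w hw v hvi hvb p hpsup
    -- the interior of an i-avoiding-endpoints path avoids i
    have hsecond : ∀ (x : V) (u : T.Walk i x), x ≠ i → p ∈ u.support.tail := by
      intro x u hx
      rcases u with _ | ⟨hadj, q⟩
      · exact absurd rfl hx
      · rw [SimpleGraph.Walk.support_cons, List.tail_cons]
        have hcp := hleaf _ hadj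
        exact hcp ▸ q.start_mem_support
    have hnotin : ∀ (a b : V) (w : T.Walk a b), w.IsPath → a ≠ i → b ≠ i →
        i ∉ w.support := by
      intro a b w hw ha hb hi
      have hsplit := w.take_spec hi
      have hp2 : p ∈ (w.dropUntil i hi).support.tail := hsecond b (w.dropUntil i hi) hb
      have hp1 : p ∈ (w.takeUntil i hi).support := by
        have h1 : p ∈ (w.takeUntil i hi).reverse.support.tail :=
          hsecond a (w.takeUntil i hi).reverse ha
        have h2 := List.mem_of_mem_tail h1
        rwa [SimpleGraph.Walk.support_reverse, List.mem_reverse] at h2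
      have hnd := hw.support_nodup
      rw [← hsplit, SimpleGraph.Walk.support_append] at hnd
      exact (List.nodup_append'.mp hnd).2.2 hp1 hp2
    -- the new system on V' = V \ {i}
    set V' := {j : V // j ≠ i} with hV'
    set T' := T.comap (Subtype.val : V' → V) with hT'
    let hom : T' →g T := SimpleGraph.Hom.comap Subtype.val T
    have hT'tree : T'.IsTree := by
      constructor
      · rw [SimpleGraph.connected_iff]
        refine ⟨?_, ⟨⟨p, hpi⟩⟩⟩
        rintro ⟨a, ha⟩ ⟨b, hb⟩
        obtain ⟨w, hw, -⟩ := hT.existsUnique_path a b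
        have hns := hnotin a b w hw ha hb
        exact ⟨liftWalk w ha hb (fun k hk hki => hns (hki ▸ hk))⟩
      · intro v c hc
        exact hT.IsAcyclic (c.map hom)
          (SimpleGraph.Walk.IsCycle.map (fun a b hab => Subtype.val_injective hab) hc)
    -- the new bag system
    set J' : V' → Finset (Fin n) := fun k => if k.val = p then J p ∪ J i else J k.val with hJ'
    obtain ⟨Z', hZ'sym, hZ'eq, hZ'pd⟩ := completion_step Z hZ (J p) (J i) (hbag p) (hbag i)
    have hJ'sub : ∀ k : V', J k.val ⊆ J' k := by
      intro k
      by_cases hkp : k.val = p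
      · simp only [hJ', if_pos hkp, hkp]
        exact Finset.subset_union_left
    -- else branch
      · simp only [hJ', if_neg hkp]
        exact Finset.Subset.refl _
    have hJ'p : J' ⟨p, hpi⟩ = J p ∪ J i := by
      simp only [hJ', if_pos rfl]
    have hJ'mem : ∀ (j : V') (v : Fin n),
        v ∈ J' j ↔ (v ∈ J j.val ∨ (j.val = p ∧ v ∈ J i)) := by
      intro j v
      by_cases hj : j.val = p
      · simp only [hJ', if_pos hj, Finset.mem_union, hj]
        tauto
      · simp only [hJ', if_neg hj, hj]
        tauto
    have hcard' : Fintype.card V' = m - 1 := by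
      have hcs : Fintype.card {j : V // j ≠ i} = m - 1 := by
        rw [Fintype.card_subtype, Finset.filter_ne',
          Finset.card_erase_of_mem (Finset.mem_univ i), Finset.card_univ, hcard]
      exact hcs
    have hcov' : ∀ v : Fin n, ∃ k : V', v ∈ J' k := by
      intro v
      obtain ⟨k, hk⟩ := hcov v
      by_cases hki : k = i
      · refine ⟨⟨p, hpi⟩, ?_⟩
        rw [hJ'p]
        exact Finset.mem_union_right _ (hki ▸ hk)
      · exact ⟨⟨k, hki⟩, hJ'sub ⟨k, hki⟩ hk⟩
    have hRI' : ∀ (k1 k2 : V') (w' : T'.Walk k1 k2), w'.IsPath → ∀ v : Fin n,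
        v ∈ J' k1 → v ∈ J' k2 → ∀ k ∈ w'.support, v ∈ J' k := by
      intro k1 k2 w' hw' v hv1 hv2 k hk
      have hmain : v ∈ J k1.val → v ∈ J k2.val → v ∈ J' k := by
        intro h1 h2
        have hwmap : (w'.map hom).IsPath :=
          SimpleGraph.Walk.map_isPath_of_injective (fun a b hab => Subtype.val_injective hab) hw'
        have hks : k.val ∈ (w'.map hom).support := by
          rw [SimpleGraph.Walk.support_map]
          exact List.mem_map_of_mem hk
        have hres := hRI k1.val k2.val (w'.map hom) hwmap v h1 h2 k.val hks
        rw [hJ'mem]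
        exact Or.inl hres
      rcases (hJ'mem k1 v).mp hv1 with h1 | ⟨hp1, hvi1⟩
      · rcases (hJ'mem k2 v).mp hv2 with h2 | ⟨hp2, hvi2⟩
        · exact hmain h1 h2
        · have h2 : v ∈ J k2.val := by
            rw [hp2]
            exact hA v k1.val k1.2 hvi2 h1
          exact hmain h1 h2
      · rcases (hJ'mem k2 v).mp hv2 with h2 | ⟨hp2, hvi2⟩
        · have h1 : v ∈ J k1.val := by
            rw [hp1]
            exact hA v k2.val k2.2 hvi1 h2
          exact hmain h1 h2
        · have hk12 : k1 = k2 := Subtype.ext (hp1.trans hp2.symm)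
          subst hk12
          cases w' with
          | nil =>
            simp only [SimpleGraph.Walk.support_nil, List.mem_singleton] at hk
            subst hk
            rw [hJ'mem]
            exact Or.inr ⟨hp1, hvi1⟩
          | cons hadj q =>
            exfalso
            rw [SimpleGraph.Walk.cons_isPath_iff] at hw'
            exact hw'.2 q.end_mem_support
    have hbag' : ∀ k : V', ∀ x : Fin n → ℝ, (∀ w ∉ J' k, x w = 0) → x ≠ 0 →
        0 < quadf Z' x := by
      intro k x hsupp hx0
      by_cases hkp : k.val = p
      · refine hZ'pd x ?_ hx0
        intro w hw
        apply hsupp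
        simp only [hJ', if_pos hkp]
        exact hw
      · have hJk : J' k = J k.val := by simp only [hJ', if_neg hkp]
        have hsupp' : ∀ w ∉ J k.val, x w = 0 := by
          intro w hw
          apply hsupp
          rw [hJk]
          exact hw
        have hquad : quadf Z' x = quadf Z x := by
          unfold quadf
          refine Finset.sum_congr rfl fun u _ => Finset.sum_congr rfl fun v _ => ?_
          by_cases hxu : x u = 0
          · rw [hxu]
            ring
          by_cases hxv : x v = 0
          · rw [hxv]
            ring
          have hu : u ∈ J k.val := by
            by_contra hcon
            exact hxu (hsupp' u hcon)
          have hv : v ∈ J k.val := by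
            by_contra hcon
            exact hxv (hsupp' v hcon)
          rw [hZ'eq u v (by
            rintro (⟨h1', h2'⟩ | ⟨h1', h2'⟩)
            · have h2'' := Finset.mem_sdiff.mp h2'
              exact h2''.2 (hA v k.val k.2 h2''.1 hv)
            · have h1'' := Finset.mem_sdiff.mp h1'
              exact h1''.2 (hA u k.val k.2 h1''.1 hu))]
        rw [hquad]
        exact hbag k.val x hsupp' hx0
    obtain ⟨X, hXpd, hXeq⟩ := IH (m - 1) (by omega) V' inferInstance inferInstance
      hcard' T' J' Z' hZ'sym hT'tree hcov' hRI' hbag'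
    refine ⟨X, hXpd, ?_⟩
    rintro u v (rfl | ⟨k, hku, hkv⟩)
    · have h1 := hXeq u u (Or.inl rfl)
      rw [h1]
      apply hZ'eq
      rintro (⟨h1', h2'⟩ | ⟨h1', h2'⟩)
      · exact (Finset.mem_sdiff.mp h1').2 (Finset.mem_sdiff.mp h2').1
      · exact (Finset.mem_sdiff.mp h1').2 (Finset.mem_sdiff.mp h2').1
    · by_cases hki : k = i
      · subst hki
        have h1 := hXeq u v (Or.inr ⟨⟨p, hpi⟩, by
          rw [hJ'p]
          exact Finset.mem_union_right _ hku, by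
          rw [hJ'p]
          exact Finset.mem_union_right _ hkv⟩)
        rw [h1]
        apply hZ'eq
        rintro (⟨h1', h2'⟩ | ⟨h1', h2'⟩)
        · exact (Finset.mem_sdiff.mp h1').2 hku
        · exact (Finset.mem_sdiff.mp h2').2 hkv
      · have h1 := hXeq u v (Or.inr ⟨⟨k, hki⟩, hJ'sub ⟨k, hki⟩ hku, hJ'sub ⟨k, hki⟩ hkv⟩)
        rw [h1]
        apply hZ'eq
        rintro (⟨h1', h2'⟩ | ⟨h1', h2'⟩)
        · have hv := Finset.mem_sdiff.mp h2'
          exact hv.2 (hA v k hki hv.1 hkv)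
        · have hu := Finset.mem_sdiff.mp h1'
          exact hu.2 (hA u k hki hu.1 hku)

end Core

open Matrix

/-- Grone et al., positive definite version:  for `Z ∈ S_F`, there is a
positive definite completion `X` with `P_F(X) = Z` iff every principal submatrix
`Z[J j, J j]` is positive definite. -/
theorem pd_completion {n ℓ : ℕ} (G : SimpleGraph (Fin n)) (T : SimpleGraph (Fin ℓ))
    (J : Fin ℓ → Finset (Fin n)) (hTD : IsTreeDecomp G T J)
    (Z : Matrix (Fin n) (Fin n) ℝ) (hZsymm : Z.IsSymm)
    (hZF : ∀ u v : Fin n, u ≠ v → (¬ ∃ k, u ∈ J k ∧ v ∈ J k) → Z u v = 0) :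
    (∃ X : Matrix (Fin n) (Fin n) ℝ, X.PosDef ∧ projF J X = Z) ↔
      ∀ j : Fin ℓ, (psub Z (J j)).PosDef := by
  obtain ⟨hT, hcov, -, hRI⟩ := hTD
  constructor
  · rintro ⟨X, hX, hproj⟩ j
    rw [psub, posDef_sub_iff Z hZsymm (J j)]
    intro x hx hx0
    have hq : quadf Z x = quadf X x := by
      unfold quadf
      refine Finset.sum_congr rfl fun u _ => Finset.sum_congr rfl fun v _ => ?_
      by_cases hxu : x u = 0
      · rw [hxu]
        ring
      by_cases hxv : x v = 0
      · rw [hxv]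
        ring
      have hu : u ∈ J j := by
        by_contra hcon
        exact hxu (hx u hcon)
      have hv : v ∈ J j := by
        by_contra hcon
        exact hxv (hx v hcon)
      have hcnd : u = v ∨ ∃ k, u ∈ J k ∧ v ∈ J k := Or.inr ⟨j, hu, hv⟩
      have hZX : Z u v = X u v := by
        rw [← hproj]
        simp only [projF, Matrix.of_apply]
        rw [if_pos hcnd]
      rw [hZX]
    rw [hq]
    have h2 := hX.dotProduct_mulVec_pos hx0
    rw [dot_quad] at h2
    exact h2
  · intro hbags
    have hq : ∀ j : Fin ℓ, ∀ x : Fin n → ℝ, (∀ v ∉ J j, x v = 0) → x ≠ 0 →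
        0 < quadf Z x := by
      intro j
      rw [← posDef_sub_iff Z hZsymm (J j)]
      exact hbags j
    obtain ⟨X, hXpd, hXeq⟩ := core ℓ (Fin ℓ) inferInstance inferInstance
      (Fintype.card_fin ℓ) T J Z hZsymm hT hcov hRI hq
    refine ⟨X, hXpd, ?_⟩
    ext u v
    by_cases hcond : u = v ∨ ∃ k, u ∈ J k ∧ v ∈ J k
    · simp only [projF, Matrix.of_apply, if_pos hcond]
      exact hXeq u v hcond
    · simp only [projF, Matrix.of_apply, if_neg hcond]
      have hne : u ≠ v := fun h => hcond (Or.inl h)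
      have hnk : ¬∃ k, u ∈ J k ∧ v ∈ J k := fun h => hcond (Or.inr h)
      exact (hZF u v hne hnk).symm
end

section
/- Let 𝒯 = ({J_1,…,J_ℓ}, T) be a tree decomposition of a graph G on n vertices and let F be its completion graph. A real symmetric n×n matrix S ∈ S_F is positive definite if and only if there exist real symmetric positive definite matrices H_1,…,H_ℓ, with H_j indexed by J_j × J_j, such that S[u,v] = Σ_{j : u ∈ J_j and v ∈ J_j} H_j[u,v] for all u, v ∈ {1,…,n} (i.e., S is the sum over bags of the zero-padded embeddings of the H_j into positions J_j × J_j). -/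
open Matrix


namespace PDwork

variable {n : ℕ}

/-- Zero-padded embedding of a matrix indexed by `s` into an `n × n` matrix. -/
def padm (s : Finset (Fin n)) (M : Matrix s s ℝ) : Matrix (Fin n) (Fin n) ℝ :=
  fun u v => if h : u ∈ s ∧ v ∈ s then M ⟨u, h.1⟩ ⟨v, h.2⟩ else 0

/-- Restriction of a vector to `s`. -/
def rvec (s : Finset (Fin n)) (x : Fin n → ℝ) : s → ℝ := fun i => x i

lemma padm_apply_of_not (s : Finset (Fin n)) (M : Matrix s s ℝ) {u v : Fin n}
    (h : ¬ (u ∈ s ∧ v ∈ s)) : padm s M u v = 0 := dif_neg h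

lemma padm_apply_mem (s : Finset (Fin n)) (M : Matrix s s ℝ) {u v : Fin n}
    (hu : u ∈ s) (hv : v ∈ s) : padm s M u v = M ⟨u, hu⟩ ⟨v, hv⟩ := dif_pos ⟨hu, hv⟩

lemma psub_padm (s : Finset (Fin n)) (M : Matrix s s ℝ) : psub (padm s M) s = M := by
  ext i j
  simp [psub, Matrix.submatrix_apply, padm, i.2, j.2]

lemma padm_psub {s : Finset (Fin n)} {M : Matrix (Fin n) (Fin n) ℝ}
    (h : ∀ u v, ¬ (u ∈ s ∧ v ∈ s) → M u v = 0) : padm s (psub M s) = M := by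
  ext u v
  by_cases huv : u ∈ s ∧ v ∈ s
  · rw [padm_apply_mem s _ huv.1 huv.2]; rfl
  · rw [padm_apply_of_not s _ huv, h u v huv]

lemma padm_mul (s : Finset (Fin n)) (M N : Matrix s s ℝ) :
    padm s M * padm s N = padm s (M * N) := by
  ext u v
  by_cases hu : u ∈ s
  · by_cases hv : v ∈ s
    · rw [Matrix.mul_apply, padm_apply_mem s _ hu hv, Matrix.mul_apply,
        Finset.univ_eq_attach,
        ← Finset.sum_subset s.subset_univ (fun w _ hw =>
          by rw [padm_apply_of_not s _ (fun hc => hw hc.2), zero_mul]),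
        ← Finset.sum_attach s (fun w => padm s M u w * padm s N w v)]
      apply Finset.sum_congr rfl
      intro w _
      rw [padm_apply_mem s _ hu w.2, padm_apply_mem s _ w.2 hv]
    · rw [padm_apply_of_not s _ (fun hc => hv hc.2), Matrix.mul_apply]
      apply Finset.sum_eq_zero
      intro w _
      rw [padm_apply_of_not s _ (fun hc => hv hc.2), mul_zero]
  · rw [padm_apply_of_not s _ (fun hc => hu hc.1), Matrix.mul_apply]
    apply Finset.sum_eq_zero
    intro w _
    rw [padm_apply_of_not s _ (fun hc => hu hc.1), zero_mul]

lemma padm_transpose (s : Finset (Fin n)) (M : Matrix s s ℝ) :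
    (padm s M)ᵀ = padm s Mᵀ := by
  ext u v
  by_cases h : u ∈ s ∧ v ∈ s
  · rw [Matrix.transpose_apply, padm_apply_mem s _ h.2 h.1, padm_apply_mem s _ h.1 h.2]
    rfl
  · rw [Matrix.transpose_apply, padm_apply_of_not s _ h,
      padm_apply_of_not s _ (fun hc => h ⟨hc.2, hc.1⟩)]

lemma padm_one (s : Finset (Fin n)) :
    padm s (1 : Matrix s s ℝ) = Matrix.diagonal (fun v => if v ∈ s then (1:ℝ) else 0) := by
  ext u v
  by_cases h : u ∈ s ∧ v ∈ s
  · rw [padm_apply_mem s _ h.1 h.2, Matrix.one_apply, Matrix.diagonal_apply]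
    by_cases huv : u = v
    · subst huv; simp [h.1]
    · simp [huv, Subtype.ext_iff]
  · rw [padm_apply_of_not s _ h, Matrix.diagonal_apply]
    by_cases huv : u = v
    · subst huv
      have : ¬ u ∈ s := fun hc => h ⟨hc, hc⟩
      simp [this]
    · simp [huv]

/-- The diagonal projection onto coordinates in `s`. -/
def proj (s : Finset (Fin n)) : Matrix (Fin n) (Fin n) ℝ := padm s 1

lemma proj_mul_apply (s : Finset (Fin n)) (M : Matrix (Fin n) (Fin n) ℝ) (u v : Fin n) :
    (proj s * M) u v = if u ∈ s then M u v else 0 := by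
  rw [proj, padm_one, Matrix.diagonal_mul]
  by_cases h : u ∈ s <;> simp [h]

lemma mul_proj_apply (s : Finset (Fin n)) (M : Matrix (Fin n) (Fin n) ℝ) (u v : Fin n) :
    (M * proj s) u v = if v ∈ s then M u v else 0 := by
  rw [proj, padm_one, Matrix.mul_diagonal]
  by_cases h : v ∈ s <;> simp [h, mul_comm]

lemma proj_mulVec (s : Finset (Fin n)) (x : Fin n → ℝ) (v : Fin n) :
    (proj s *ᵥ x) v = if v ∈ s then x v else 0 := by
  rw [proj, padm_one, Matrix.mulVec_diagonal]
  by_cases h : v ∈ s <;> simp [h]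

lemma proj_transpose (s : Finset (Fin n)) : (proj s)ᵀ = proj s := by
  rw [proj, padm_transpose, Matrix.transpose_one]

lemma proj_mulVec_of_supported {s : Finset (Fin n)} {x : Fin n → ℝ}
    (hx : ∀ v, v ∉ s → x v = 0) : proj s *ᵥ x = x := by
  funext v
  rw [proj_mulVec]
  by_cases h : v ∈ s
  · simp [h]
  · simp [h, hx v h]

lemma proj_mulVec_of_disjoint {s t : Finset (Fin n)} (hst : Disjoint s t) {x : Fin n → ℝ}
    (hx : ∀ v, v ∉ t → x v = 0) : proj s *ᵥ x = 0 := by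
  funext v
  rw [proj_mulVec]
  by_cases h : v ∈ s
  · simp only [h, if_true]
    exact hx v (fun hc => (Finset.disjoint_left.mp hst) h hc)
  · simp [h]

/-- Sandwiching by paddings. -/
lemma padm_sandwich (s : Finset (Fin n)) (M N : Matrix s s ℝ)
    (S : Matrix (Fin n) (Fin n) ℝ) :
    padm s M * S * padm s N = padm s (M * psub S s * N) := by
  have h1 : padm s M * S * padm s N
      = padm s M * (proj s * S * proj s) * padm s N := by
    have hL : padm s M * proj s = padm s M := by
      rw [proj, padm_mul, mul_one]
    have hR : proj s * padm s N = padm s N := by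
      rw [proj, padm_mul, one_mul]
    calc padm s M * S * padm s N = padm s M * proj s * S * (proj s * padm s N) := by
          rw [hL, hR]
      _ = padm s M * (proj s * S * proj s) * padm s N := by
          simp only [Matrix.mul_assoc]
  rw [h1]
  have h2 : proj s * S * proj s = padm s (psub S s) := by
    ext u v
    rw [mul_proj_apply, proj_mul_apply]
    by_cases hu : u ∈ s
    · by_cases hv : v ∈ s
      · rw [padm_apply_mem s _ hu hv]; simp [hu, hv]; rfl
      · simp [hv, padm_apply_of_not s _ (fun hc => hv hc.2)]
    · by_cases hv : v ∈ s <;>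
        simp [hu, hv, padm_apply_of_not s _ (fun hc => hu hc.1)]
  rw [h2, padm_mul, padm_mul]

lemma dot_padm (s : Finset (Fin n)) (M : Matrix s s ℝ) (x z : Fin n → ℝ) :
    x ⬝ᵥ (padm s M *ᵥ z) = rvec s x ⬝ᵥ (M *ᵥ rvec s z) := by
  rw [dotProduct, dotProduct, Finset.univ_eq_attach,
    ← Finset.sum_subset s.subset_univ (fun u _ hu => by
      have : (padm s M *ᵥ z) u = 0 := by
        rw [Matrix.mulVec, dotProduct]
        exact Finset.sum_eq_zero fun w _ => by
          rw [padm_apply_of_not s _ (fun hc => hu hc.1), zero_mul]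
      rw [this, mul_zero]),
    ← Finset.sum_attach s (fun u => x u * (padm s M *ᵥ z) u)]
  apply Finset.sum_congr rfl
  intro u _
  congr 1
  rw [Matrix.mulVec, Matrix.mulVec, dotProduct, dotProduct, Finset.univ_eq_attach,
    ← Finset.sum_subset s.subset_univ (fun w _ hw => by
      rw [padm_apply_of_not s _ (fun hc => hw hc.2), zero_mul]),
    ← Finset.sum_attach s (fun w => padm s M u w * z w)]
  apply Finset.sum_congr rfl
  intro w _
  rw [padm_apply_mem s _ u.2 w.2]
  rfl

lemma dot_supported {s : Finset (Fin n)} (M : Matrix (Fin n) (Fin n) ℝ) {x z : Fin n → ℝ}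
    (hx : ∀ v, v ∉ s → x v = 0) (hz : ∀ v, v ∉ s → z v = 0) :
    x ⬝ᵥ (M *ᵥ z) = rvec s x ⬝ᵥ (psub M s *ᵥ rvec s z) := by
  rw [dotProduct, dotProduct, Finset.univ_eq_attach,
    ← Finset.sum_subset s.subset_univ (fun u _ hu => by rw [hx u hu, zero_mul]),
    ← Finset.sum_attach s (fun u => x u * (M *ᵥ z) u)]
  apply Finset.sum_congr rfl
  intro u _
  congr 1
  rw [Matrix.mulVec, Matrix.mulVec, dotProduct, dotProduct, Finset.univ_eq_attach,
    ← Finset.sum_subset s.subset_univ (fun w _ hw => by rw [hz w hw, mul_zero]),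
    ← Finset.sum_attach s (fun w => M u w * z w)]
  apply Finset.sum_congr rfl
  intro w _
  rfl

lemma rvec_ne_zero {s : Finset (Fin n)} {x : Fin n → ℝ}
    (hx : ∀ v, v ∉ s → x v = 0) (hx0 : x ≠ 0) : rvec s x ≠ 0 := by
  intro h
  apply hx0
  funext v
  by_cases hv : v ∈ s
  · have := congrFun h ⟨v, hv⟩
    simpa [rvec] using this
  · simp [hx v hv]

/-- Positive definiteness of the `s × s` block of a padded matrix, as a
statement about `n × n` matrices. -/
def PDOn (S : Matrix (Fin n) (Fin n) ℝ) (s : Finset (Fin n)) : Prop :=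
  S.IsSymm ∧ (∀ u v : Fin n, ¬ (u ∈ s ∧ v ∈ s) → S u v = 0) ∧
    ∀ x : Fin n → ℝ, x ≠ 0 → (∀ v, v ∉ s → x v = 0) → 0 < x ⬝ᵥ (S *ᵥ x)

lemma psub_isHermitian {S : Matrix (Fin n) (Fin n) ℝ} (hs : S.IsSymm) (t : Finset (Fin n)) :
    (psub S t).IsHermitian := by
  rw [Matrix.IsHermitian, Matrix.conjTranspose_eq_transpose_of_trivial]
  ext i j
  exact hs.apply _ _

/-- A principal submatrix within the positivity region is positive definite. -/
lemma psub_posDef {S : Matrix (Fin n) (Fin n) ℝ} {s : Finset (Fin n)} (hS : PDOn S s)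
    {t : Finset (Fin n)} (hts : t ⊆ s) : (psub S t).PosDef := by
  refine posDef_iff_dotProduct_mulVec.mpr ⟨psub_isHermitian hS.1 t, ?_⟩
  intro y hy
  have hsy : star y = y := by funext i; simp
  rw [hsy]
  set x : Fin n → ℝ := fun v => if hv : v ∈ t then y ⟨v, hv⟩ else 0 with hxdef
  have hxsupp : ∀ v, v ∉ t → x v = 0 := fun v hv => dif_neg hv
  have hxr : rvec t x = y := by
    funext i
    simp [rvec, hxdef, i.2]
  have hx0 : x ≠ 0 := by
    intro h
    apply hy
    rw [← hxr, h]
    rfl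
  have := hS.2.2 x hx0 (fun v hv => hxsupp v (fun hc => hv (hts hc)))
  rwa [dot_supported S hxsupp hxsupp, hxr] at this

lemma pdOn_of_posDef {S : Matrix (Fin n) (Fin n) ℝ} {s : Finset (Fin n)}
    (hsymm : S.IsSymm) (hz : ∀ u v : Fin n, ¬ (u ∈ s ∧ v ∈ s) → S u v = 0)
    (hpd : (psub S s).PosDef) : PDOn S s := by
  refine ⟨hsymm, hz, ?_⟩
  intro x hx0 hxsupp
  rw [dot_supported S hxsupp hxsupp]
  have hr := rvec_ne_zero hxsupp hx0
  have := hpd.dotProduct_mulVec_pos hr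
  have hsy : star (rvec s x) = rvec s x := by funext i; simp
  rwa [hsy] at this

lemma herm_tr {m : Type*} {A : Matrix m m ℝ} (h : A.IsHermitian) : Aᵀ = A := by
  rw [← Matrix.conjTranspose_eq_transpose_of_trivial]; exact h

lemma dot_mulVec_left {A : Matrix (Fin n) (Fin n) ℝ} (x w : Fin n → ℝ) :
    (A *ᵥ x) ⬝ᵥ w = x ⬝ᵥ (Aᵀ *ᵥ w) := by
  rw [Matrix.mulVec_transpose, dotProduct_comm, Matrix.dotProduct_mulVec,
    dotProduct_comm]

section Hat

variable {S : Matrix (Fin n) (Fin n) ℝ} {s : Finset (Fin n)}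

/-- Zero-padded inverse of the `s`-block. -/
noncomputable def pinv (S : Matrix (Fin n) (Fin n) ℝ) (s : Finset (Fin n)) :
    Matrix (Fin n) (Fin n) ℝ := padm s ((psub S s)⁻¹)

/-- The (padded) Schur complement of the `s`-block. -/
noncomputable def shat (S : Matrix (Fin n) (Fin n) ℝ) (s : Finset (Fin n)) :
    Matrix (Fin n) (Fin n) ℝ := S - S * pinv S s * S

lemma pinv_transpose (hQ : (psub S s).PosDef) : (pinv S s)ᵀ = pinv S s := by
  rw [pinv, padm_transpose, herm_tr hQ.inv.isHermitian]

lemma proj_mul_pinv : proj s * pinv S s = pinv S s := by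
  rw [proj, pinv, padm_mul, one_mul]

lemma pinv_mul_proj : pinv S s * proj s = pinv S s := by
  rw [proj, pinv, padm_mul, mul_one]

lemma projSpinv (hQ : (psub S s).PosDef) : proj s * S * pinv S s = proj s := by
  have h : proj s * S * pinv S s = proj s * S * proj s * pinv S s := by
    conv_lhs => rw [← proj_mul_pinv (S := S)]
    simp only [Matrix.mul_assoc]
  rw [h]
  have h2 : proj s * S * proj s = padm s (psub S s) := by
    rw [proj, padm_sandwich, one_mul, mul_one]
  rw [h2, pinv, padm_mul, Matrix.mul_nonsing_inv _ (isUnit_iff_ne_zero.mpr hQ.det_pos.ne'),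
    ← proj]

lemma pinvSproj (hQ : (psub S s).PosDef) : pinv S s * S * proj s = proj s := by
  have h : pinv S s * S * proj s = pinv S s * (S * proj s) := by
    simp only [Matrix.mul_assoc]
  rw [h, ← pinv_mul_proj (S := S)]
  have h2 : pinv S s * proj s * (S * proj s) = pinv S s * (proj s * S * proj s) := by
    simp only [Matrix.mul_assoc]
  rw [h2]
  have h3 : proj s * S * proj s = padm s (psub S s) := by
    rw [proj, padm_sandwich, one_mul, mul_one]
  rw [h3, pinv, padm_mul, Matrix.nonsing_inv_mul _ (isUnit_iff_ne_zero.mpr hQ.det_pos.ne'),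
    ← proj]

lemma pinvSpinv (hQ : (psub S s).PosDef) : pinv S s * S * pinv S s = pinv S s := by
  calc pinv S s * S * pinv S s = pinv S s * S * (proj s * pinv S s) := by
        rw [proj_mul_pinv]
    _ = pinv S s * S * proj s * pinv S s := by simp only [Matrix.mul_assoc]
    _ = proj s * pinv S s := by rw [pinvSproj hQ]
    _ = pinv S s := proj_mul_pinv

lemma pinv_psd (hQ : (psub S s).PosDef) (x : Fin n → ℝ) : 0 ≤ x ⬝ᵥ (pinv S s *ᵥ x) := by
  rw [pinv, dot_padm]
  have := hQ.inv.posSemidef.dotProduct_mulVec_nonneg (rvec s x)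
  have hsy : star (rvec s x) = rvec s x := by funext i; simp
  rwa [hsy] at this

lemma shat_eq (hsym : Sᵀ = S) (hQ : (psub S s).PosDef) :
    (1 - S * pinv S s) * S * (1 - pinv S s * S) = shat S s := by
  have key : pinv S s * (S * (pinv S s * S)) = pinv S s * S := by
    have := pinvSpinv (S := S) hQ
    calc pinv S s * (S * (pinv S s * S)) = pinv S s * S * pinv S s * S := by
          simp only [Matrix.mul_assoc]
      _ = pinv S s * S := by rw [this]
  simp only [shat, sub_mul, mul_sub, one_mul, mul_one, Matrix.mul_assoc, key]
  abel

lemma shat_transpose (hsym : Sᵀ = S) (hQ : (psub S s).PosDef) : (shat S s)ᵀ = shat S s := by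
  rw [shat, Matrix.transpose_sub, Matrix.transpose_mul, Matrix.transpose_mul,
    pinv_transpose hQ, hsym]
  congr 1
  simp only [Matrix.mul_assoc]

lemma shat_row (hQ : (psub S s).PosDef) {u : Fin n} (hu : u ∈ s) (v : Fin n) :
    shat S s u v = 0 := by
  have h : proj s * shat S s = 0 := by
    rw [shat, mul_sub]
    have : proj s * (S * pinv S s * S) = proj s * S * pinv S s * S := by
      simp only [Matrix.mul_assoc]
    rw [this, projSpinv hQ]
    exact sub_self _
  have := congrFun (congrFun h u) v
  rw [proj_mul_apply] at this
  simpa [hu] using this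

lemma shat_row_of_row_zero {u : Fin n} (hu : ∀ w, S u w = 0) (v : Fin n) :
    shat S s u v = 0 := by
  have h1 : (S * pinv S s * S) u v = 0 := by
    rw [Matrix.mul_apply]
    apply Finset.sum_eq_zero
    intro w _
    rw [Matrix.mul_apply]
    rw [Finset.sum_eq_zero fun a _ => by rw [hu a, zero_mul], zero_mul]
  simp [shat, h1, hu v]

lemma shat_quadratic (hsym : Sᵀ = S) (hQ : (psub S s).PosDef) (x : Fin n → ℝ) :
    x ⬝ᵥ (shat S s *ᵥ x)
      = ((1 - pinv S s * S) *ᵥ x) ⬝ᵥ (S *ᵥ ((1 - pinv S s * S) *ᵥ x)) := by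
  rw [dot_mulVec_left, Matrix.mulVec_mulVec, Matrix.mulVec_mulVec]
  have ht : (1 - pinv S s * S)ᵀ = 1 - S * pinv S s := by
    rw [Matrix.transpose_sub, Matrix.transpose_one, Matrix.transpose_mul,
      pinv_transpose hQ, hsym]
  rw [ht, shat_eq hsym hQ]

lemma shat_sub_quad (hsym : Sᵀ = S) (hQ : (psub S s).PosDef) (x : Fin n → ℝ) :
    0 ≤ x ⬝ᵥ ((S * pinv S s * S) *ᵥ x) := by
  have h : (S * pinv S s * S) *ᵥ x = S *ᵥ (pinv S s *ᵥ (S *ᵥ x)) := by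
    simp only [Matrix.mulVec_mulVec, Matrix.mul_assoc]
  have h2 := dot_mulVec_left (A := Sᵀ) x (pinv S s *ᵥ (S *ᵥ x))
  rw [Matrix.transpose_transpose] at h2
  rw [h, ← h2, hsym]
  exact pinv_psd hQ _

lemma pinv_mulVec_off {x : Fin n → ℝ} {v : Fin n} (hv : v ∉ s) :
    (pinv S s *ᵥ x) v = 0 := by
  rw [Matrix.mulVec, dotProduct]
  exact Finset.sum_eq_zero fun w _ => by
    rw [pinv, padm_apply_of_not s _ (fun hc => hv hc.1), zero_mul]

end Hat

lemma proj_idem (s : Finset (Fin n)) : proj s * proj s = proj s := by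
  rw [proj, padm_mul, one_mul]

lemma proj_sandwich (s : Finset (Fin n)) (S : Matrix (Fin n) (Fin n) ℝ) :
    proj s * S * proj s = padm s (psub S s) := by
  have := padm_sandwich s 1 1 S
  rwa [one_mul, mul_one, ← proj] at this

lemma sandwich_apply (s t : Finset (Fin n)) (M : Matrix (Fin n) (Fin n) ℝ) (u v : Fin n) :
    (proj s * M * proj t) u v = if u ∈ s ∧ v ∈ t then M u v else 0 := by
  rw [Matrix.mul_assoc, proj_mul_apply, mul_proj_apply]
  by_cases hu : u ∈ s <;> by_cases hv : v ∈ t <;> simp [hu, hv]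

lemma dot_sandwich (s t : Finset (Fin n)) (M : Matrix (Fin n) (Fin n) ℝ) (x z : Fin n → ℝ) :
    x ⬝ᵥ ((proj s * M * proj t) *ᵥ z)
      = (proj s *ᵥ x) ⬝ᵥ (M *ᵥ (proj t *ᵥ z)) := by
  rw [dot_mulVec_left, proj_transpose, Matrix.mulVec_mulVec, Matrix.mulVec_mulVec,
    Matrix.mul_assoc]

lemma dot_proj_supported {B : Finset (Fin n)} {M : Matrix (Fin n) (Fin n) ℝ}
    (hM : ∀ u v : Fin n, ¬ (u ∈ B ∧ v ∈ B) → M u v = 0) (x z : Fin n → ℝ) :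
    x ⬝ᵥ (M *ᵥ z) = (proj B *ᵥ x) ⬝ᵥ (M *ᵥ (proj B *ᵥ z)) := by
  have h : proj B * M * proj B = M := by
    rw [proj_sandwich, padm_psub hM]
  conv_lhs => rw [← h]
  rw [dot_sandwich]

lemma dot_proj_left {s : Finset (Fin n)} (x w : Fin n → ℝ) :
    (proj s *ᵥ x) ⬝ᵥ w = x ⬝ᵥ (proj s *ᵥ w) := by
  rw [dot_mulVec_left, proj_transpose]

lemma schur_split {S : Matrix (Fin n) (Fin n) ℝ} {W C B : Finset (Fin n)}
    (hWC : Disjoint W C) (hBC : B ⊆ C)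
    (hS : PDOn S (W ∪ C))
    (hWB : ∀ u ∈ W, ∀ v ∈ C, v ∉ B → S u v = 0) :
    ∃ N : Matrix (Fin n) (Fin n) ℝ, PDOn N (W ∪ B) ∧ PDOn (S - N) C := by
  classical
  obtain ⟨hsym', hsupp, hpos⟩ := hS
  have hsym : Sᵀ = S := hsym'
  have hWB' : Disjoint W B := hWC.mono_right hBC
  have hQ : (psub S W).PosDef := psub_posDef ⟨hsym', hsupp, hpos⟩ Finset.subset_union_left
  set G : Matrix (Fin n) (Fin n) ℝ := pinv S W with hG
  set Sh : Matrix (Fin n) (Fin n) ℝ := shat S W with hShdef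
  have hPG : proj W * G = G := proj_mul_pinv
  have hGP : G * proj W = G := pinv_mul_proj
  have hPSG : proj W * S * G = proj W := projSpinv hQ
  have hGSP : G * S * proj W = proj W := pinvSproj hQ
  have hGSG : G * S * G = G := pinvSpinv hQ
  have hSh_sym : Shᵀ = Sh := shat_transpose hsym hQ
  have hSh_rowW : ∀ u ∈ W, ∀ v, Sh u v = 0 := fun u hu v => shat_row hQ hu v
  have hS_row_out : ∀ u, u ∉ W ∪ C → ∀ v, S u v = 0 := by
    intro u hu v
    exact hsupp u v (fun hc => hu hc.1)
  have hSh_row : ∀ u, u ∉ C → ∀ v, Sh u v = 0 := by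
    intro u hu v
    by_cases huW : u ∈ W
    · exact hSh_rowW u huW v
    · exact shat_row_of_row_zero
        (hS_row_out u (by simp [huW, hu]) ) v
  have hSh_supp : ∀ u v : Fin n, ¬ (u ∈ C ∧ v ∈ C) → Sh u v = 0 := by
    intro u v h
    by_cases hu : u ∈ C
    · have hv : v ∉ C := fun hc => h ⟨hu, hc⟩
      calc Sh u v = Shᵀ v u := rfl
        _ = Sh v u := by rw [hSh_sym]
        _ = 0 := hSh_row v hv u
    · exact hSh_row u hu v
  have hSh_pos : PDOn Sh C := by
    refine ⟨hSh_sym, hSh_supp, ?_⟩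
    intro x hx0 hxsupp
    rw [hShdef, shat_quadratic hsym hQ x]
    have hyv : ∀ v, v ∉ W → ((1 - pinv S W * S) *ᵥ x) v = x v := by
      intro v hv
      rw [Matrix.sub_mulVec, Matrix.one_mulVec, Pi.sub_apply, ← Matrix.mulVec_mulVec,
        pinv_mulVec_off hv]
      ring
    have hy0 : (1 - pinv S W * S) *ᵥ x ≠ 0 := by
      obtain ⟨v, hv⟩ : ∃ v, x v ≠ 0 := Function.ne_iff.mp hx0
      have hvC : v ∈ C := by by_contra hc; exact hv (hxsupp v hc)
      have hvW : v ∉ W := fun hc => (Finset.disjoint_left.mp hWC) hc hvC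
      intro h
      apply hv
      rw [← hyv v hvW, h]
      rfl
    have hysupp : ∀ v, v ∉ W ∪ C → ((1 - pinv S W * S) *ᵥ x) v = 0 := by
      intro v hv
      simp only [Finset.mem_union, not_or] at hv
      rw [hyv v hv.1]
      exact hxsupp v hv.2
    exact hpos _ hy0 hysupp
  set D : Finset (Fin n) := C \ B with hD
  have hQ2 : (psub Sh D).PosDef := psub_posDef hSh_pos Finset.sdiff_subset
  set G2 : Matrix (Fin n) (Fin n) ℝ := pinv Sh D with hG2
  set Sh2 : Matrix (Fin n) (Fin n) ℝ := shat Sh D with hSh2def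
  have hSh2_sym : Sh2ᵀ = Sh2 := shat_transpose hSh_sym hQ2
  have hSh2_row : ∀ u, u ∉ B → ∀ v, Sh2 u v = 0 := by
    intro u hu v
    by_cases huD : u ∈ D
    · exact shat_row hQ2 huD v
    · have huC : u ∉ C := fun hc => huD (Finset.mem_sdiff.mpr ⟨hc, hu⟩)
      exact shat_row_of_row_zero (fun w => hSh_row u huC w) v
  have hSh2_supp : ∀ u v : Fin n, ¬ (u ∈ B ∧ v ∈ B) → Sh2 u v = 0 := by
    intro u v h
    by_cases hu : u ∈ B
    · have hv : v ∉ B := fun hc => h ⟨hu, hc⟩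
      calc Sh2 u v = Sh2ᵀ v u := rfl
        _ = Sh2 v u := by rw [hSh2_sym]
        _ = 0 := hSh2_row v hv u
    · exact hSh2_row u hu v
  set padQ : Matrix (Fin n) (Fin n) ℝ := proj W * S * proj W with hpadQ
  set N : Matrix (Fin n) (Fin n) ℝ :=
    proj W * S * proj W + proj W * S * proj B + proj B * S * proj W
      + proj B * (S * G * S) * proj B + (2⁻¹ : ℝ) • (proj B * Sh2 * proj B) with hN
  have hSGS_sym : (S * G * S)ᵀ = S * G * S := by
    rw [Matrix.transpose_mul, Matrix.transpose_mul, pinv_transpose hQ, hsym,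
      Matrix.mul_assoc]
  have hN_sym : Nᵀ = N := by
    rw [hN]
    simp only [Matrix.transpose_add, Matrix.transpose_smul, Matrix.transpose_mul,
      proj_transpose, hsym, hSGS_sym, hSh2_sym]
    simp only [← Matrix.mul_assoc]
    abel
  have hN_apply : ∀ u v : Fin n, N u v =
      (if u ∈ W ∧ v ∈ W then S u v else 0) + (if u ∈ W ∧ v ∈ B then S u v else 0)
        + (if u ∈ B ∧ v ∈ W then S u v else 0)
        + (if u ∈ B ∧ v ∈ B then (S * G * S) u v else 0)
        + 2⁻¹ * (if u ∈ B ∧ v ∈ B then Sh2 u v else 0) := by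
    intro u v
    rw [hN]
    simp only [Matrix.add_apply, Matrix.smul_apply, sandwich_apply, smul_eq_mul]
  have hN_supp : ∀ u v : Fin n, ¬ (u ∈ W ∪ B ∧ v ∈ W ∪ B) → N u v = 0 := by
    intro u v h
    rw [hN_apply]
    rcases not_and_or.mp h with h' | h' <;>
      · simp only [Finset.mem_union, not_or] at h'
        simp [h'.1, h'.2]
  -- auxiliary product identities
  have hpadQGS : padQ * (G * S) = proj W * S := by
    rw [hpadQ]
    calc proj W * S * proj W * (G * S) = proj W * S * (proj W * G) * S := by
          simp only [Matrix.mul_assoc]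
      _ = proj W * S * G * S := by rw [hPG]
      _ = proj W * S := by rw [hPSG]
  have hSGpadQ : (S * G) * padQ = S * proj W := by
    rw [hpadQ]
    calc S * G * (proj W * S * proj W) = S * (G * proj W) * (S * proj W) := by
          simp only [Matrix.mul_assoc]
      _ = S * (G * S * proj W) := by rw [hGP]; simp only [Matrix.mul_assoc]
      _ = S * proj W := by rw [hGSP]
  -- the four bilinear identities
  have hq1 : ∀ x : Fin n → ℝ,
      (proj W *ᵥ x) ⬝ᵥ (padQ *ᵥ (proj W *ᵥ x)) = (proj W *ᵥ x) ⬝ᵥ (S *ᵥ (proj W *ᵥ x)) := by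
    intro x
    rw [hpadQ, dot_sandwich, Matrix.mulVec_mulVec, proj_idem]
  have hq2 : ∀ x b : Fin n → ℝ,
      (proj W *ᵥ x) ⬝ᵥ (padQ *ᵥ ((G * S) *ᵥ b)) = (proj W *ᵥ x) ⬝ᵥ (S *ᵥ b) := by
    intro x b
    rw [Matrix.mulVec_mulVec, hpadQGS, ← Matrix.mulVec_mulVec, dot_proj_left,
      Matrix.mulVec_mulVec, proj_idem, ← dot_proj_left]
  have hq3 : ∀ b w : Fin n → ℝ,
      ((G * S) *ᵥ b) ⬝ᵥ (padQ *ᵥ (proj W *ᵥ w)) = b ⬝ᵥ (S *ᵥ (proj W *ᵥ w)) := by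
    intro b w
    rw [dot_mulVec_left]
    have ht : (G * S)ᵀ = S * G := by
      rw [Matrix.transpose_mul, pinv_transpose hQ, hsym]
    have hm : S * G * (padQ * proj W) = S * proj W := by
      rw [← Matrix.mul_assoc, hSGpadQ, Matrix.mul_assoc, proj_idem]
    rw [ht]
    simp only [Matrix.mulVec_mulVec]
    rw [hm]
  have hq4 : ∀ b : Fin n → ℝ,
      ((G * S) *ᵥ b) ⬝ᵥ (padQ *ᵥ ((G * S) *ᵥ b)) = b ⬝ᵥ ((S * G * S) *ᵥ b) := by
    intro b
    rw [dot_mulVec_left]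
    have ht : (G * S)ᵀ = S * G := by
      rw [Matrix.transpose_mul, pinv_transpose hQ, hsym]
    have hm : S * G * (padQ * (G * S)) = S * G * S := by
      rw [← Matrix.mul_assoc, hSGpadQ, Matrix.mul_assoc, ← Matrix.mul_assoc (proj W), hPG,
        ← Matrix.mul_assoc]
    rw [ht]
    simp only [Matrix.mulVec_mulVec]
    rw [hm]
  -- quadratic identity for N
  have hc_quad : ∀ x : Fin n → ℝ,
      x ⬝ᵥ (N *ᵥ x)
        = (proj W *ᵥ x + (G * S) *ᵥ (proj B *ᵥ x)) ⬝ᵥ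
            (padQ *ᵥ (proj W *ᵥ x + (G * S) *ᵥ (proj B *ᵥ x)))
          + 2⁻¹ * ((proj B *ᵥ x) ⬝ᵥ (Sh2 *ᵥ (proj B *ᵥ x))) := by
    intro x
    have hLHS : x ⬝ᵥ (N *ᵥ x)
        = (proj W *ᵥ x) ⬝ᵥ (S *ᵥ (proj W *ᵥ x)) + (proj W *ᵥ x) ⬝ᵥ (S *ᵥ (proj B *ᵥ x))
          + (proj B *ᵥ x) ⬝ᵥ (S *ᵥ (proj W *ᵥ x))
          + (proj B *ᵥ x) ⬝ᵥ ((S * G * S) *ᵥ (proj B *ᵥ x))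
          + 2⁻¹ * ((proj B *ᵥ x) ⬝ᵥ (Sh2 *ᵥ (proj B *ᵥ x))) := by
      rw [hN]
      simp only [Matrix.add_mulVec, dotProduct_add, Matrix.smul_mulVec,
        dotProduct_smul, smul_eq_mul]
      rw [dot_sandwich, dot_sandwich, dot_sandwich, dot_sandwich, dot_sandwich]
    rw [hLHS, Matrix.mulVec_add, dotProduct_add, add_dotProduct, add_dotProduct,
      hq1, hq2, hq3, hq4]
    ring
  -- N is positive definite on W ∪ B
  have hN_pos : ∀ x : Fin n → ℝ, x ≠ 0 → (∀ v, v ∉ W ∪ B → x v = 0) →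
      0 < x ⬝ᵥ (N *ᵥ x) := by
    intro x hx0 hxsupp
    rw [hc_quad x]
    have hbsupp : ∀ v, v ∉ B → (proj B *ᵥ x) v = 0 := by
      intro v hv
      rw [proj_mulVec]
      simp [hv]
    have hfirst : 0 ≤ (proj W *ᵥ x + (G * S) *ᵥ (proj B *ᵥ x)) ⬝ᵥ
        (padQ *ᵥ (proj W *ᵥ x + (G * S) *ᵥ (proj B *ᵥ x))) := by
      rw [hpadQ, proj_sandwich, dot_padm]
      have := hQ.posSemidef.dotProduct_mulVec_nonneg (rvec W (proj W *ᵥ x + (G * S) *ᵥ (proj B *ᵥ x)))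
      simpa using this
    by_cases hb0 : proj B *ᵥ x = 0
    · have hxW : ∀ v, v ∉ W → x v = 0 := by
        intro v hv
        by_cases hvB : v ∈ B
        · have := congrFun hb0 v
          rwa [proj_mulVec, if_pos hvB] at this
        · exact hxsupp v (by simp [hv, hvB])
      have hax : proj W *ᵥ x = x := proj_mulVec_of_supported hxW
      rw [hb0, Matrix.mulVec_zero, add_zero, hax, zero_dotProduct, mul_zero, add_zero,
        hpadQ, proj_sandwich, dot_padm]
      have hr := rvec_ne_zero hxW hx0
      have := hQ.dotProduct_mulVec_pos hr
      have hsy : star (rvec W x) = rvec W x := by funext i; simp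
      rwa [hsy] at this
    · have hsecond : 0 < (proj B *ᵥ x) ⬝ᵥ (Sh2 *ᵥ (proj B *ᵥ x)) := by
        rw [hSh2def, shat_quadratic hSh_sym hQ2]
        have hyv : ∀ v, v ∉ D → ((1 - pinv Sh D * Sh) *ᵥ (proj B *ᵥ x)) v
            = (proj B *ᵥ x) v := by
          intro v hv
          rw [Matrix.sub_mulVec, Matrix.one_mulVec, Pi.sub_apply, ← Matrix.mulVec_mulVec,
            pinv_mulVec_off hv]
          ring
        have hy0 : (1 - pinv Sh D * Sh) *ᵥ (proj B *ᵥ x) ≠ 0 := by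
          obtain ⟨v, hv⟩ : ∃ v, (proj B *ᵥ x) v ≠ 0 := Function.ne_iff.mp hb0
          have hvB : v ∈ B := by by_contra hc; exact hv (hbsupp v hc)
          have hvD : v ∉ D := by
            rw [hD]
            simp [hvB]
          intro h
          apply hv
          rw [← hyv v hvD, h]
          rfl
        have hysupp : ∀ v, v ∉ C → ((1 - pinv Sh D * Sh) *ᵥ (proj B *ᵥ x)) v = 0 := by
          intro v hv
          have hvD : v ∉ D := fun hc => hv (Finset.mem_sdiff.mp hc).1
          rw [hyv v hvD]
          exact hbsupp v (fun hc => hv (hBC hc))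
        exact hSh_pos.2.2 _ hy0 hysupp
      linarith
  -- support and symmetry of S - N
  have hSN_sym : (S - N)ᵀ = S - N := by
    rw [Matrix.transpose_sub, hsym, hN_sym]
  have hSN_row : ∀ u v : Fin n, u ∉ C → (S - N) u v = 0 := by
    intro u v hu
    rw [Matrix.sub_apply, hN_apply]
    by_cases huW : u ∈ W
    · have huB : u ∉ B := fun hc => hu (hBC hc)
      by_cases hvW : v ∈ W
      · have hvB : v ∉ B := fun hc => (Finset.disjoint_left.mp hWB') hvW hc
        simp [huW, hvW, huB, hvB]
      · by_cases hvB : v ∈ B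
        · simp [huW, hvW, huB, hvB]
        · have hSuv : S u v = 0 := by
            by_cases hvC : v ∈ C
            · exact hWB u huW v hvC hvB
            · refine hsupp u v (fun hc => ?_)
              rcases Finset.mem_union.mp hc.2 with h | h
              · exact hvW h
              · exact hvC h
          simp [huW, hvW, huB, hvB, hSuv]
    · have huB : u ∉ B := fun hc => hu (hBC hc)
      have hSuv : S u v = 0 := by
        refine hsupp u v (fun hc => ?_)
        rcases Finset.mem_union.mp hc.1 with h | h
        · exact huW h
        · exact hu h
      simp [huW, huB, hSuv]
  have hSN_supp : ∀ u v : Fin n, ¬ (u ∈ C ∧ v ∈ C) → (S - N) u v = 0 := by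
    intro u v h
    by_cases hu : u ∈ C
    · have hv : v ∉ C := fun hc => h ⟨hu, hc⟩
      calc (S - N) u v = (S - N)ᵀ v u := rfl
        _ = (S - N) v u := by rw [hSN_sym]
        _ = 0 := hSN_row v u hv
    · exact hSN_row u v hu
  -- positivity of S - N on C
  have hSN_pos : ∀ x : Fin n → ℝ, x ≠ 0 → (∀ v, v ∉ C → x v = 0) →
      0 < x ⬝ᵥ ((S - N) *ᵥ x) := by
    intro x hx0 hxsupp
    have hprojW0 : proj W *ᵥ x = 0 := proj_mulVec_of_disjoint hWC hxsupp
    have hbsupp : ∀ v, v ∉ B → (proj B *ᵥ x) v = 0 := by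
      intro v hv
      rw [proj_mulVec]
      simp [hv]
    -- key1 : x ⬝ᵥ (S*G*S) x = b ⬝ᵥ (S*G*S) b
    have hw : proj W *ᵥ (S *ᵥ x) = proj W *ᵥ (S *ᵥ (proj B *ᵥ x)) := by
      funext v
      rw [proj_mulVec, proj_mulVec]
      by_cases hv : v ∈ W
      · simp only [hv, if_true]
        rw [Matrix.mulVec, Matrix.mulVec, dotProduct, dotProduct]
        apply Finset.sum_congr rfl
        intro t _
        by_cases htB : t ∈ B
        · rw [proj_mulVec, if_pos htB]
        · rw [proj_mulVec, if_neg htB]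
          by_cases hxt : x t = 0
          · rw [hxt]
          · have htC : t ∈ C := by by_contra hc; exact hxt (hxsupp t hc)
            rw [hWB v hv t htC htB]
            ring
      · simp [hv]
    have hGdecomp : G = proj W * G * proj W := by
      rw [hPG, hGP]
    have key1g : ∀ z : Fin n → ℝ, z ⬝ᵥ ((S * G * S) *ᵥ z)
        = (proj W *ᵥ (S *ᵥ z)) ⬝ᵥ (G *ᵥ (proj W *ᵥ (S *ᵥ z))) := by
      intro z
      have hid : S * proj W * (G * (proj W * S)) = S * G * S := by
        rw [← Matrix.mul_assoc G, hGP, Matrix.mul_assoc S, ← Matrix.mul_assoc (proj W),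
          hPG, ← Matrix.mul_assoc]
      have ht2 : (proj W * S)ᵀ = S * proj W := by
        rw [Matrix.transpose_mul, proj_transpose, hsym]
      simp only [Matrix.mulVec_mulVec]
      rw [dot_mulVec_left, ht2]
      simp only [Matrix.mulVec_mulVec]
      rw [hid]
    have key1 : x ⬝ᵥ ((S * G * S) *ᵥ x) = (proj B *ᵥ x) ⬝ᵥ ((S * G * S) *ᵥ (proj B *ᵥ x)) := by
      rw [key1g, key1g, hw]
    have key2 : x ⬝ᵥ (Sh2 *ᵥ x) = (proj B *ᵥ x) ⬝ᵥ (Sh2 *ᵥ (proj B *ᵥ x)) :=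
      dot_proj_supported hSh2_supp x x
    have hNx : x ⬝ᵥ (N *ᵥ x)
        = x ⬝ᵥ ((S * G * S) *ᵥ x) + 2⁻¹ * (x ⬝ᵥ (Sh2 *ᵥ x)) := by
      rw [hc_quad x, hprojW0, zero_add, hq4, key1, key2]
    have hsub : x ⬝ᵥ ((S - N) *ᵥ x) = x ⬝ᵥ (S *ᵥ x) - x ⬝ᵥ (N *ᵥ x) := by
      rw [Matrix.sub_mulVec, dotProduct_sub]
    have hShx : x ⬝ᵥ (Sh *ᵥ x) = x ⬝ᵥ (S *ᵥ x) - x ⬝ᵥ ((S * G * S) *ᵥ x) := by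
      rw [hShdef, shat, Matrix.sub_mulVec, dotProduct_sub]
    have hSh2x : x ⬝ᵥ (Sh2 *ᵥ x) = x ⬝ᵥ (Sh *ᵥ x) - x ⬝ᵥ ((Sh * G2 * Sh) *ᵥ x) := by
      rw [hSh2def, shat, Matrix.sub_mulVec, dotProduct_sub]
    have hpos1 : 0 < x ⬝ᵥ (Sh *ᵥ x) := hSh_pos.2.2 x hx0 hxsupp
    have hpos2 : 0 ≤ x ⬝ᵥ ((Sh * G2 * Sh) *ᵥ x) := shat_sub_quad hSh_sym hQ2 x
    rw [hsub, hNx]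
    linarith
  exact ⟨N, ⟨hN_sym, hN_supp, hN_pos⟩, ⟨hSN_sym, hSN_supp, hSN_pos⟩⟩

section Graph

variable {ι : Type} [Fintype ι] [DecidableEq ι] {T : SimpleGraph ι}

open SimpleGraph

lemma exists_leaf (hT : T.IsTree) (hcard : 1 < Fintype.card ι) :
    ∃ k q : ι, T.Adj k q ∧ ∀ r, T.Adj k r → r = q := by
  classical
  obtain ⟨hconn, hacyc⟩ := hT
  have hdeg1 : ∀ v : ι, 0 < T.degree v := by
    intro v
    rw [SimpleGraph.degree_pos_iff_exists_adj T v]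
    obtain ⟨u, hu⟩ := Fintype.exists_ne_of_one_lt_card hcard v
    obtain ⟨w⟩ := hconn.preconnected v u
    have hnil : ¬ w.Nil := SimpleGraph.Walk.not_nil_of_ne (Ne.symm hu)
    exact ⟨_, w.adj_snd hnil⟩
  by_contra hno
  push_neg at hno
  have hdeg2 : ∀ v, 2 ≤ T.degree v := by
    intro v
    obtain ⟨q, hq⟩ := (SimpleGraph.degree_pos_iff_exists_adj T v).mp (hdeg1 v)
    obtain ⟨r, hr, hrq⟩ := hno v q hq
    have h2 : 1 < (T.neighborFinset v).card :=
      Finset.one_lt_card.mpr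
        ⟨q, by simpa using hq, r, by simpa using hr, Ne.symm hrq⟩
    rw [SimpleGraph.card_neighborFinset_eq_degree] at h2
    omega
  have hsum := SimpleGraph.sum_degrees_eq_twice_card_edges T
  have hedge := (SimpleGraph.IsTree.mk hconn hacyc).card_edgeFinset
  have h1 : 2 * Fintype.card ι ≤ ∑ v, T.degree v := by
    calc 2 * Fintype.card ι = ∑ _v : ι, 2 := by
          rw [Finset.sum_const, Finset.card_univ, smul_eq_mul, mul_comm]
      _ ≤ ∑ v, T.degree v := Finset.sum_le_sum fun i _ => hdeg2 i
  rw [hsum] at h1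
  omega

lemma neighbor_mem_walk_to_leaf {k p j : ι}
    (huniq : ∀ r, T.Adj k r → r = p) (hj : j ≠ k) (w : T.Walk j k) :
    p ∈ w.support := by
  have hn : ¬ w.reverse.Nil := SimpleGraph.Walk.not_nil_of_ne (fun h => hj h.symm)
  obtain ⟨u, hadj, q, hq⟩ := SimpleGraph.Walk.not_nil_iff.mp hn
  have hu : u = p := huniq u hadj
  have hmem : u ∈ w.reverse.support := by
    rw [hq, SimpleGraph.Walk.support_cons]
    exact List.mem_cons_of_mem _ q.start_mem_support
  rw [SimpleGraph.Walk.support_reverse] at hmem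
  rw [← hu]
  exact List.mem_reverse.mp hmem

lemma leaf_path_avoid (hT : T.IsTree) {k p : ι}
    (huniq : ∀ r, T.Adj k r → r = p) {i j : ι} (hi : i ≠ k) (hj : j ≠ k) :
    ∃ w : T.Walk i j, w.IsPath ∧ k ∉ w.support := by
  obtain ⟨w0⟩ := hT.isConnected.preconnected i j
  refine ⟨w0.toPath.1, w0.toPath.2, ?_⟩
  by_contra hk
  set P : T.Walk i j := w0.toPath.1 with hP
  have hPp : P.IsPath := w0.toPath.2
  set t := P.takeUntil k hk with htdef
  set d := P.dropUntil k hk with hddef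
  have htn : ¬ t.reverse.Nil := SimpleGraph.Walk.not_nil_of_ne (fun h => hi h.symm)
  have hdn : ¬ d.Nil := SimpleGraph.Walk.not_nil_of_ne (fun h => hj h.symm)
  obtain ⟨u1, hadj1, q1, hq1⟩ := SimpleGraph.Walk.not_nil_iff.mp htn
  obtain ⟨u2, hadj2, q2, hq2⟩ := SimpleGraph.Walk.not_nil_iff.mp hdn
  have hu1 : u1 = p := huniq u1 hadj1
  have hu2 : u2 = p := huniq u2 hadj2
  have hp1 : p ∈ t.support := by
    rw [← hu1]
    have : u1 ∈ t.reverse.support := by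
      rw [hq1, SimpleGraph.Walk.support_cons]
      exact List.mem_cons_of_mem _ q1.start_mem_support
    rw [SimpleGraph.Walk.support_reverse] at this
    exact List.mem_reverse.mp this
  have hp2 : p ∈ d.support.tail := by
    rw [← hu2, hq2, SimpleGraph.Walk.support_cons]
    exact q2.start_mem_support
  have hspec := SimpleGraph.Walk.take_spec P hk
  have hnodup := hPp.support_nodup
  rw [← hspec, SimpleGraph.Walk.support_append] at hnodup
  exact absurd hp2 (List.disjoint_of_nodup_append hnodup hp1)

lemma reachable_comap {k : ι} :
    ∀ {a b : ι} (w : T.Walk a b), k ∉ w.support →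
      ∀ (ha : a ≠ k) (hb : b ≠ k),
      (T.comap (Subtype.val : {i : ι // i ≠ k} → ι)).Reachable ⟨a, ha⟩ ⟨b, hb⟩ := by
  intro a b w
  induction w with
  | nil => intro _ ha hb; exact SimpleGraph.Reachable.refl _
  | @cons u v c h q ih =>
    intro hw ha hb
    have hvk : v ≠ k := by
      intro hc
      apply hw
      rw [SimpleGraph.Walk.support_cons]
      exact List.mem_cons_of_mem _ (hc ▸ q.start_mem_support)
    have hw' : k ∉ q.support := fun hc => hw (by
      rw [SimpleGraph.Walk.support_cons]
      exact List.mem_cons_of_mem _ hc)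
    have hadj : (T.comap (Subtype.val : {i : ι // i ≠ k} → ι)).Adj ⟨u, ha⟩ ⟨v, hvk⟩ := h
    exact hadj.reachable.trans (ih hw' hvk hb)

lemma isTree_comap (hT : T.IsTree) {k p : ι} (hkp : T.Adj k p)
    (huniq : ∀ r, T.Adj k r → r = p) :
    (T.comap (Subtype.val : {i : ι // i ≠ k} → ι)).IsTree := by
  constructor
  · haveI : Nonempty {i : ι // i ≠ k} := ⟨⟨p, hkp.ne'⟩⟩
    refine SimpleGraph.Connected.mk ?_
    rintro ⟨a, ha⟩ ⟨b, hb⟩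
    obtain ⟨w, _, hkw⟩ := leaf_path_avoid hT huniq ha hb
    exact reachable_comap w hkw ha hb
  · intro v c hc
    refine hT.2 (c.map (SimpleGraph.Hom.comap Subtype.val T)) ?_
    exact (SimpleGraph.Walk.map_isCycle_iff_of_injective
      (by exact Subtype.val_injective)).mpr hc

end Graph

lemma key {n : ℕ} : ∀ (m : ℕ) (ι : Type) [Fintype ι] [DecidableEq ι],
    Fintype.card ι = m →
    ∀ (T : SimpleGraph ι), T.IsTree →
    ∀ (J : ι → Finset (Fin n)),
    (∀ (i j : ι) (w : T.Walk i j), w.IsPath →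
      ∀ v : Fin n, v ∈ J i → v ∈ J j → ∀ k ∈ w.support, v ∈ J k) →
    ∀ (S : Matrix (Fin n) (Fin n) ℝ),
    (∀ u v : Fin n, (¬ ∃ k, u ∈ J k ∧ v ∈ J k) → S u v = 0) →
    PDOn S (Finset.univ.biUnion J) →
    ∃ H : (j : ι) → Matrix (J j) (J j) ℝ, (∀ j, (H j).PosDef) ∧
      ∀ u v : Fin n,
        S u v = ∑ j, (if h : u ∈ J j ∧ v ∈ J j then H j ⟨u, h.1⟩ ⟨v, h.2⟩ else 0) := by
  intro m
  induction m using Nat.strong_induction_on with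
  | _ m ih =>
  intro ι instF instD hcard T hT J hRI S hsupp hPD
  by_cases hlt : 1 < Fintype.card ι
  case neg =>
    -- base case : exactly one node
    have hne : Nonempty ι := hT.isConnected.nonempty
    have h1 : Fintype.card ι = 1 := by
      have := Fintype.card_pos_iff.mpr hne
      omega
    obtain ⟨k, hk⟩ := Fintype.card_eq_one_iff.mp h1
    refine ⟨fun j => psub S (J j), fun j => ?_, ?_⟩
    · exact psub_posDef hPD
        (fun v hv => Finset.mem_biUnion.mpr ⟨j, Finset.mem_univ _, hv⟩)
    · intro u v
      rw [Finset.sum_eq_single_of_mem k (Finset.mem_univ k)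
        (fun b _ hb => by rw [dif_neg]; intro hc; exact hb (hk b))]
      by_cases h : u ∈ J k ∧ v ∈ J k
      · rw [dif_pos h]; rfl
      · rw [dif_neg h]
        refine hsupp u v ?_
        rintro ⟨j, hj⟩
        exact h (hk j ▸ hj)
  case pos =>
    obtain ⟨k, p, hkp, huniq⟩ := exists_leaf hT hlt
    have hpk : p ≠ k := hkp.ne'
    set J' : {i : ι // i ≠ k} → Finset (Fin n) := fun j => J j.1 with hJ'
    set C : Finset (Fin n) := Finset.univ.biUnion J' with hC
    have hmemC : ∀ v : Fin n, v ∈ C ↔ ∃ j : ι, j ≠ k ∧ v ∈ J j := by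
      intro v
      rw [hC, Finset.mem_biUnion]
      constructor
      · rintro ⟨⟨j, hj⟩, -, hv⟩
        exact ⟨j, hj, hv⟩
      · rintro ⟨j, hj, hv⟩
        exact ⟨⟨j, hj⟩, Finset.mem_univ _, hv⟩
    set W : Finset (Fin n) := J k \ C with hW
    set B : Finset (Fin n) := J k ∩ C with hB
    have hWC : Disjoint W C := Finset.sdiff_disjoint
    have hBC : B ⊆ C := Finset.inter_subset_right
    have hWB : W ∪ B = J k := Finset.sdiff_union_inter _ _
    have hUnion : W ∪ C = Finset.univ.biUnion J := by
      ext v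
      simp only [Finset.mem_union, hW, Finset.mem_sdiff, Finset.mem_biUnion]
      constructor
      · rintro (⟨hvk, -⟩ | hvC)
        · exact ⟨k, Finset.mem_univ k, hvk⟩
        · obtain ⟨j, _, hv⟩ := (hmemC v).mp hvC
          exact ⟨j, Finset.mem_univ j, hv⟩
      · rintro ⟨j, -, hv⟩
        by_cases hjk : j = k
        · subst hjk
          by_cases hvC : v ∈ C
          · right; exact hvC
          · left; exact ⟨hv, hvC⟩
        · right; exact (hmemC v).mpr ⟨j, hjk, hv⟩
    have hS' : PDOn S (W ∪ C) := by rw [hUnion]; exact hPD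
    have hWBhyp : ∀ u ∈ W, ∀ v ∈ C, v ∉ B → S u v = 0 := by
      intro u hu v hvC hvB
      obtain ⟨huk, huC⟩ := Finset.mem_sdiff.mp hu
      refine hsupp u v ?_
      rintro ⟨j, hju, hjv⟩
      by_cases hjk : j = k
      · subst hjk
        exact hvB (Finset.mem_inter.mpr ⟨hjv, hvC⟩)
      · exact huC ((hmemC u).mpr ⟨j, hjk, hju⟩)
    obtain ⟨N, hN, hSN⟩ := schur_split hWC hBC hS' hWBhyp
    rw [hWB] at hN
    have hBJp : B ⊆ J p := by
      intro v hv
      obtain ⟨hvk, hvC⟩ := Finset.mem_inter.mp hv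
      obtain ⟨j, hjk, hvj⟩ := (hmemC v).mp hvC
      obtain ⟨w0⟩ := hT.isConnected.preconnected j k
      exact hRI j k w0.toPath.1 w0.toPath.2 v hvj hvk p
        (neighbor_mem_walk_to_leaf huniq hjk w0.toPath.1)
    -- hypotheses for the induction
    set T' := T.comap (Subtype.val : {i : ι // i ≠ k} → ι) with hT'def
    have hT' : T'.IsTree := isTree_comap hT hkp huniq
    have hcard' : Fintype.card {i : ι // i ≠ k} < m := by
      have h1 : Fintype.card {i : ι // ¬ i = k} = Fintype.card ι - 1 := by
        rw [Fintype.card_subtype_compl, Fintype.card_subtype_eq]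
      rw [← hcard]
      calc Fintype.card {i : ι // i ≠ k} = Fintype.card ι - 1 := h1
        _ < Fintype.card ι := by omega
    have hRI' : ∀ (i j : {i : ι // i ≠ k}) (w : T'.Walk i j), w.IsPath →
        ∀ v : Fin n, v ∈ J' i → v ∈ J' j → ∀ k' ∈ w.support, v ∈ J' k' := by
      intro i j w hw v hvi hvj k' hk'
      have hmap := hRI i.1 j.1 (w.map (SimpleGraph.Hom.comap Subtype.val T))
        (SimpleGraph.Walk.map_isPath_of_injective (by exact Subtype.val_injective) hw)
        v hvi hvj k'.1
      apply hmap
      erw [SimpleGraph.Walk.support_map]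
      exact List.mem_map_of_mem hk'
    have hsupp' : ∀ u v : Fin n, (¬ ∃ j : {i : ι // i ≠ k}, u ∈ J' j ∧ v ∈ J' j) →
        (S - N) u v = 0 := by
      intro u v h
      have hnoj : ∀ j : ι, j ≠ k → ¬ (u ∈ J j ∧ v ∈ J j) := by
        intro j hj hc
        exact h ⟨⟨j, hj⟩, hc⟩
      by_cases hBB : u ∈ B ∧ v ∈ B
      · exact absurd ⟨hBJp hBB.1, hBJp hBB.2⟩ (hnoj p hpk)
      · by_cases hCC : u ∈ C ∧ v ∈ C
        · have hkk : ¬ (u ∈ J k ∧ v ∈ J k) := by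
            intro hc
            exact hBB ⟨Finset.mem_inter.mpr ⟨hc.1, hCC.1⟩,
              Finset.mem_inter.mpr ⟨hc.2, hCC.2⟩⟩
          have hS0 : S u v = 0 := by
            refine hsupp u v ?_
            rintro ⟨j, hj⟩
            by_cases hjk : j = k
            · exact hkk (hjk ▸ hj)
            · exact hnoj j hjk hj
          rw [Matrix.sub_apply, hS0, hN.2.1 u v hkk, sub_zero]
        · exact hSN.2.1 u v hCC
    have hPD' : PDOn (S - N) (Finset.univ.biUnion J') := by
      rw [← hC]; exact hSN
    obtain ⟨H', hH'pd, hH'sum⟩ := ih _ hcard' {i : ι // i ≠ k} rfl T' hT' J' hRI'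
      (S - N) hsupp' hPD'
    -- assembling the decomposition
    refine ⟨fun j => psub (if h : j = k then N else padm (J j) (H' ⟨j, h⟩)) (J j),
      fun j => ?_, ?_⟩
    · beta_reduce
      by_cases hj : j = k
      · rw [dif_pos hj, hj]
        exact psub_posDef hN (subset_refl _)
      · rw [dif_neg hj, psub_padm]
        exact hH'pd ⟨j, hj⟩
    · intro u v
      have hterm : ∀ j : {i : ι // i ≠ k},
          (if h : u ∈ J j.1 ∧ v ∈ J j.1 then
              psub (if h' : j.1 = k then N else padm (J j.1) (H' ⟨j.1, h'⟩)) (J j.1)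
                ⟨u, h.1⟩ ⟨v, h.2⟩
            else 0)
          = (if h : u ∈ J' j ∧ v ∈ J' j then H' j ⟨u, h.1⟩ ⟨v, h.2⟩ else 0) := by
        intro j
        by_cases h : u ∈ J j.1 ∧ v ∈ J j.1
        · rw [dif_pos h, dif_pos h, dif_neg j.2, psub_padm]
        · rw [dif_neg h, dif_neg h]
      have hsplit : ∑ j : ι, (if h : u ∈ J j ∧ v ∈ J j then
            psub (if h' : j = k then N else padm (J j) (H' ⟨j, h'⟩)) (J j)
              ⟨u, h.1⟩ ⟨v, h.2⟩ else 0)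
          = (if h : u ∈ J k ∧ v ∈ J k then psub N (J k) ⟨u, h.1⟩ ⟨v, h.2⟩ else 0)
            + ∑ j : {i : ι // i ≠ k},
                (if h : u ∈ J' j ∧ v ∈ J' j then H' j ⟨u, h.1⟩ ⟨v, h.2⟩ else 0) := by
        rw [← Finset.add_sum_erase _ _ (Finset.mem_univ k)]
        congr 1
        · beta_reduce
          by_cases h : u ∈ J k ∧ v ∈ J k
          · rw [dif_pos h, dif_pos h, dif_pos rfl]
          · rw [dif_neg h, dif_neg h]
        · rw [Finset.sum_subtype (p := fun i => i ≠ k) (Finset.univ.erase k)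
            (fun x => by simp [Finset.mem_erase]) (fun j => (if h : u ∈ J j ∧ v ∈ J j then
              psub (if h' : j = k then N else padm (J j) (H' ⟨j, h'⟩)) (J j)
                ⟨u, h.1⟩ ⟨v, h.2⟩ else 0))]
          exact Finset.sum_congr rfl fun j _ => hterm j
      rw [hsplit]
      have hNuv : N u v = (if h : u ∈ J k ∧ v ∈ J k then psub N (J k) ⟨u, h.1⟩ ⟨v, h.2⟩
          else 0) := by
        by_cases h : u ∈ J k ∧ v ∈ J k
        · rw [dif_pos h]; rfl
        · rw [dif_neg h]; exact hN.2.1 u v h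
      have := hH'sum u v
      rw [Matrix.sub_apply] at this
      rw [← this, ← hNuv]
      ring

lemma dot_sum_right {β : Type*} (s : Finset β) (M : β → Matrix (Fin n) (Fin n) ℝ)
    (x z : Fin n → ℝ) :
    x ⬝ᵥ ((∑ j ∈ s, M j) *ᵥ z) = ∑ j ∈ s, x ⬝ᵥ (M j *ᵥ z) := by
  have h1 : (∑ j ∈ s, M j) *ᵥ z = ∑ j ∈ s, (M j *ᵥ z) := by
    funext v
    simp only [Matrix.mulVec, dotProduct, Matrix.sum_apply, Finset.sum_mul,
      Finset.sum_apply]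
    exact Finset.sum_comm
  have h2 : x ⬝ᵥ (∑ j ∈ s, (M j *ᵥ z)) = ∑ j ∈ s, x ⬝ᵥ (M j *ᵥ z) := by
    simp only [dotProduct, Finset.sum_apply, Finset.mul_sum]
    exact Finset.sum_comm
  rw [h1, h2]

end PDwork

/-- Agler et al.:  a symmetric matrix `S ∈ S_F` is positive definite iff
it is the sum, over the bags, of zero-padded embeddings of positive definite matrices
`H j` indexed by `J j × J j`. -/
theorem pd_decomposition {n ℓ : ℕ} (G : SimpleGraph (Fin n)) (T : SimpleGraph (Fin ℓ))
    (J : Fin ℓ → Finset (Fin n)) (hTD : IsTreeDecomp G T J)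
    (S : Matrix (Fin n) (Fin n) ℝ) (hSsymm : S.IsSymm)
    (hSF : ∀ u v : Fin n, u ≠ v → (¬ ∃ k, u ∈ J k ∧ v ∈ J k) → S u v = 0) :
    S.PosDef ↔
      ∃ H : (j : Fin ℓ) → Matrix ↥(J j) ↥(J j) ℝ,
        (∀ j, (H j).PosDef) ∧
        ∀ u v : Fin n,
          S u v = ∑ j : Fin ℓ,
            if h : u ∈ J j ∧ v ∈ J j then H j ⟨u, h.1⟩ ⟨v, h.2⟩ else 0 := by
  obtain ⟨hT, hvc, _hec, hRI⟩ := hTD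
  constructor
  · intro hPD
    have hsupp : ∀ u v : Fin n, (¬ ∃ k, u ∈ J k ∧ v ∈ J k) → S u v = 0 := by
      intro u v h
      by_cases huv : u = v
      · subst huv
        obtain ⟨k, hk⟩ := hvc u
        exact absurd ⟨k, hk, hk⟩ h
      · exact hSF u v huv h
    have hPDOn : PDwork.PDOn S (Finset.univ.biUnion J) := by
      have hUniv : Finset.univ.biUnion J = Finset.univ := by
        ext v
        simp only [Finset.mem_biUnion, Finset.mem_univ, iff_true, true_and]
        exact hvc v
      rw [hUniv]
      refine ⟨hSsymm, fun u v h => absurd ⟨Finset.mem_univ u, Finset.mem_univ v⟩ h, ?_⟩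
      intro x hx0 _
      have := hPD.dotProduct_mulVec_pos hx0
      rwa [show star x = x from by funext i; simp] at this
    obtain ⟨H, hHpd, hHsum⟩ := PDwork.key ℓ (Fin ℓ) (Fintype.card_fin ℓ) T hT J hRI S hsupp hPDOn
    exact ⟨H, hHpd, hHsum⟩
  · rintro ⟨H, hHpd, hHsum⟩
    have hSe : S = ∑ j, PDwork.padm (J j) (H j) := by
      ext u v
      rw [Matrix.sum_apply, hHsum u v]
      exact Finset.sum_congr rfl fun j _ => rfl
    refine posDef_iff_dotProduct_mulVec.mpr ⟨?_, ?_⟩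
    · rw [Matrix.IsHermitian, Matrix.conjTranspose_eq_transpose_of_trivial]
      exact hSsymm
    · intro x hx0
      rw [show star x = x from by funext i; simp, hSe, PDwork.dot_sum_right]
      have hnonneg : ∀ j ∈ Finset.univ, 0 ≤ x ⬝ᵥ (PDwork.padm (J j) (H j) *ᵥ x) := by
        intro j _
        rw [PDwork.dot_padm]
        have := (hHpd j).posSemidef.dotProduct_mulVec_nonneg (PDwork.rvec (J j) x)
        rwa [show star (PDwork.rvec (J j) x) = PDwork.rvec (J j) x from
          by funext i; simp] at this
      have hexists : ∃ j ∈ Finset.univ, 0 < x ⬝ᵥ (PDwork.padm (J j) (H j) *ᵥ x) := by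
        obtain ⟨v, hv⟩ := Function.ne_iff.mp hx0
        obtain ⟨k, hk⟩ := hvc v
        refine ⟨k, Finset.mem_univ k, ?_⟩
        rw [PDwork.dot_padm]
        have hr : PDwork.rvec (J k) x ≠ 0 := by
          intro hc
          exact hv (congrFun hc ⟨v, hk⟩)
        have := (hHpd k).dotProduct_mulVec_pos hr
        rwa [show star (PDwork.rvec (J k) x) = PDwork.rvec (J k) x from
          by funext i; simp] at this
      exact Finset.sum_pos' hnonneg hexists
end

section
/- Let 𝒯 = ({J_1,…,J_ℓ}, T) be a tree decomposition of a graph G on n vertices. Given real symmetric matrices X_1,…,X_ℓ, with X_j indexed by J_j × J_j, there exists an n×n real symmetric matrix Z satisfying Z[J_j,J_j] = X_j for all j ∈ {1,…,ℓ} if and only if for every edge (i,j) ∈ E(T) the matrices X_i and X_j agree on their common indices, i.e., X_i[u,v] = X_j[u,v] for all u, v ∈ J_i ∩ J_j. -/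
open Matrix

lemma agree_along {n ℓ : ℕ} {T : SimpleGraph (Fin ℓ)} {J : Fin ℓ → Finset (Fin n)}
    {X : (j : Fin ℓ) → Matrix ↥(J j) ↥(J j) ℝ}
    (hedge : ∀ i j : Fin ℓ, T.Adj i j →
        ∀ (u v : Fin n) (hui : u ∈ J i) (hvi : v ∈ J i) (huj : u ∈ J j) (hvj : v ∈ J j),
          X i ⟨u, hui⟩ ⟨v, hvi⟩ = X j ⟨u, huj⟩ ⟨v, hvj⟩)
    {u v : Fin n} :
    ∀ {i j : Fin ℓ} (w : T.Walk i j)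
      (hu : ∀ k ∈ w.support, u ∈ J k) (hv : ∀ k ∈ w.support, v ∈ J k),
      X i ⟨u, hu i w.start_mem_support⟩ ⟨v, hv i w.start_mem_support⟩ =
        X j ⟨u, hu j w.end_mem_support⟩ ⟨v, hv j w.end_mem_support⟩ := by
  intro i j w
  induction w with
  | nil => intro hu hv; rfl
  | cons h p ih =>
      intro hu hv
      rename_i a b c
      have hub : u ∈ J b := hu b (by simp [SimpleGraph.Walk.support_cons])
      have hvb : v ∈ J b := hv b (by simp [SimpleGraph.Walk.support_cons])
      have h1 := hedge a b h u v (hu a (SimpleGraph.Walk.cons h p).start_mem_support)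
        (hv a (SimpleGraph.Walk.cons h p).start_mem_support) hub hvb
      have h2 := ih (fun k hk => hu k (by simp [SimpleGraph.Walk.support_cons, hk]))
        (fun k hk => hv k (by simp [SimpleGraph.Walk.support_cons, hk]))
      exact h1.trans h2

/-- Fukuda et al.:  given symmetric matrices `X j` indexed by `J j × J j`,
there is a symmetric matrix `Z` with `Z[J j, J j] = X j` for all `j` iff for every edge
`(i,j)` of the tree `T` the matrices `X i` and `X j` agree on their common indices. -/
theorem agree_completion {n ℓ : ℕ} (G : SimpleGraph (Fin n)) (T : SimpleGraph (Fin ℓ))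
    (J : Fin ℓ → Finset (Fin n)) (hTD : IsTreeDecomp G T J)
    (X : (j : Fin ℓ) → Matrix ↥(J j) ↥(J j) ℝ) (hXsymm : ∀ j, (X j).IsSymm) :
    (∃ Z : Matrix (Fin n) (Fin n) ℝ, Z.IsSymm ∧ ∀ j, psub Z (J j) = X j) ↔
      ∀ i j : Fin ℓ, T.Adj i j →
        ∀ (u v : Fin n) (hui : u ∈ J i) (hvi : v ∈ J i) (huj : u ∈ J j) (hvj : v ∈ J j),
          X i ⟨u, hui⟩ ⟨v, hvi⟩ = X j ⟨u, huj⟩ ⟨v, hvj⟩ := by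
  constructor
  · rintro ⟨Z, hZsymm, hZ⟩ i j _ u v hui hvi huj hvj
    have hi := congrFun (congrFun (hZ i) ⟨u, hui⟩) ⟨v, hvi⟩
    have hj := congrFun (congrFun (hZ j) ⟨u, huj⟩) ⟨v, hvj⟩
    simp only [psub, Matrix.submatrix_apply] at hi hj
    rw [← hi, ← hj]
  · intro hedge
    -- any two bags containing both u and v agree at (u,v)
    have key : ∀ (u v : Fin n) (i j : Fin ℓ) (hui : u ∈ J i) (hvi : v ∈ J i)
        (huj : u ∈ J j) (hvj : v ∈ J j),
        X i ⟨u, hui⟩ ⟨v, hvi⟩ = X j ⟨u, huj⟩ ⟨v, hvj⟩ := by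
      intro u v i j hui hvi huj hvj
      obtain ⟨w⟩ := hTD.1.isConnected.preconnected i j
      set p := w.toPath with hp
      have hpath : (p : T.Walk i j).IsPath := p.2
      have hu := hTD.2.2.2 i j p hpath u hui huj
      have hv := hTD.2.2.2 i j p hpath v hvi hvj
      exact agree_along hedge (p : T.Walk i j) hu hv
    classical
    refine ⟨Matrix.of fun u v => if h : ∃ k, u ∈ J k ∧ v ∈ J k then
        X h.choose ⟨u, h.choose_spec.1⟩ ⟨v, h.choose_spec.2⟩ else 0, ?_, ?_⟩
    · ext u v
      simp only [Matrix.transpose_apply, Matrix.of_apply]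
      by_cases h : ∃ k, u ∈ J k ∧ v ∈ J k
      · have h' : ∃ k, v ∈ J k ∧ u ∈ J k := ⟨h.choose, h.choose_spec.2, h.choose_spec.1⟩
        rw [dif_pos h', dif_pos h]
        rw [key v u h'.choose h.choose h'.choose_spec.1 h'.choose_spec.2
          h.choose_spec.2 h.choose_spec.1]
        exact (hXsymm h.choose).apply _ _
      · have h' : ¬ ∃ k, v ∈ J k ∧ u ∈ J k := fun ⟨k, hk1, hk2⟩ => h ⟨k, hk2, hk1⟩
        rw [dif_neg h', dif_neg h]
    · intro j
      ext ⟨u, hu⟩ ⟨v, hv⟩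
      simp only [psub, Matrix.submatrix_apply, Matrix.of_apply]
      have h : ∃ k, u ∈ J k ∧ v ∈ J k := ⟨j, hu, hv⟩
      rw [dif_pos h]
      exact key u v h.choose j h.choose_spec.1 h.choose_spec.2 hu hv
end

section
/- Let 𝒯 = ({J_1,…,J_ℓ}, T) be a tree decomposition rooted at r. Then: (i) if X_j = Z[J_j,J_j] for all j for some n×n real symmetric matrix Z, then R_i(X) = 0 for every non-root node i; and (ii) for every family (X_1,…,X_ℓ) of real symmetric matrices, with X_j indexed by J_j × J_j, there exist an n×n real symmetric matrix Z and a family (Y_i)_{i ≠ r}, with Y_i real symmetric indexed by (J_i ∩ J_{p(i)}) × (J_i ∩ J_{p(i)}), such that for every node j: X_j = Z[J_j,J_j] + ι_j(Y_j) − Σ_{c ∈ ch(j)} ι_j(Y_c), where the term ι_j(Y_j) is absent when j = r. -/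
open Matrix

/-- `p` is the parent map of the tree `T` rooted at `r`:  the root is its own parent, every
non-root node is adjacent to its parent, the parent of a non-root node lies on the (unique)
path from the node to the root, and the edges of `T` are exactly the parent-child pairs. -/
def IsRootedAt {ℓ : ℕ} (T : SimpleGraph (Fin ℓ)) (r : Fin ℓ) (p : Fin ℓ → Fin ℓ) : Prop :=
  p r = r ∧
  (∀ j, j ≠ r → T.Adj j (p j)) ∧
  (∀ j, j ≠ r → ∀ w : T.Walk j r, w.IsPath → p j ∈ w.support) ∧
  (∀ i j, T.Adj i j ↔ ((i ≠ r ∧ p i = j) ∨ (j ≠ r ∧ p j = i)))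

/-- Entry `(u,v)` of the zero-padded embedding `ι` of the overlap-indexed symmetric matrix
`Y i` (indexed by `(J i ∩ J (p i)) × (J i ∩ J (p i))`): it agrees with `Y i` on the overlap
and vanishes elsewhere. -/
def padEntry {n ℓ : ℕ} (J : Fin ℓ → Finset (Fin n)) (p : Fin ℓ → Fin ℓ)
    (Y : (i : Fin ℓ) → Matrix ↥(J i ∩ J (p i)) ↥(J i ∩ J (p i)) ℝ)
    (i : Fin ℓ) (u v : Fin n) : ℝ :=
  if h : u ∈ J i ∩ J (p i) ∧ v ∈ J i ∩ J (p i) then Y i ⟨u, h.1⟩ ⟨v, h.2⟩ else 0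


section Aux
variable {ℓ : ℕ} {T : SimpleGraph (Fin ℓ)} {r : Fin ℓ} {p : Fin ℓ → Fin ℓ}

lemma depth_lt (ht : T.Connected) (hroot : IsRootedAt T r p) {k : Fin ℓ} (hk : k ≠ r) :
    T.dist (p k) r < T.dist k r := by
  obtain ⟨w, hw, hlen⟩ := ht.exists_path_of_dist k r
  have hmem : p k ∈ w.support := hroot.2.2.1 k hk w hw
  have h1 : T.dist (p k) r ≤ (w.dropUntil _ hmem).length := SimpleGraph.dist_le _
  have h2 : (w.takeUntil _ hmem).length + (w.dropUntil _ hmem).length = w.length := by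
    have h2' := congrArg SimpleGraph.Walk.length (w.take_spec hmem)
    rwa [SimpleGraph.Walk.length_append] at h2'
  have h3 : (w.takeUntil _ hmem).length ≠ 0 := by
    intro h0
    have hkp : k = p k := (w.takeUntil _ hmem).eq_of_length_eq_zero h0
    exact (hroot.2.1 k hk).ne hkp
  omega

lemma iterate_root (hroot : IsRootedAt T r p) (m : ℕ) : p^[m] r = r :=
  Function.iterate_fixed hroot.1 m

lemma dist_iterate_strict (ht : T.Connected) (hroot : IsRootedAt T r p) (k : Fin ℓ) :
    ∀ b, (∀ s < b, p^[s] k ≠ r) → ∀ a < b, T.dist (p^[b] k) r < T.dist (p^[a] k) r := by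
  intro b
  induction b with
  | zero => exact fun _ a ha => absurd ha (Nat.not_lt_zero a)
  | succ b ih =>
    intro h a ha
    have hb : p^[b] k ≠ r := h b (Nat.lt_succ_self b)
    have hstep : T.dist (p^[b+1] k) r < T.dist (p^[b] k) r := by
      rw [Function.iterate_succ_apply']
      exact depth_lt ht hroot hb
    rcases Nat.lt_succ_iff_lt_or_eq.mp ha with h' | h'
    · exact hstep.trans (ih (fun s hs => h s (hs.trans (Nat.lt_succ_self b))) a h')
    · rw [h']; exact hstep

lemma chain_inj_on (ht : T.Connected) (hroot : IsRootedAt T r p) (k : Fin ℓ) (m : ℕ)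
    (h : ∀ s < m, p^[s] k ≠ r) :
    ∀ x ≤ m, ∀ y ≤ m, p^[x] k = p^[y] k → x = y := by
  have key : ∀ x y, x < y → y ≤ m → p^[x] k ≠ p^[y] k := by
    intro x y hxy hy heq
    have := dist_iterate_strict ht hroot k y (fun s hs => h s (lt_of_lt_of_le hs hy)) x hxy
    rw [heq] at this; exact lt_irrefl _ this
  intro x hx y hy heq
  rcases lt_trichotomy x y with h' | h' | h'
  · exact absurd heq (key x y h' hy)
  · exact h'
  · exact absurd heq.symm (key y x h' hx)

lemma cyc_eq_root (ht : T.Connected) (hroot : IsRootedAt T r p) {x : Fin ℓ} {t : ℕ}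
    (ht1 : 1 ≤ t) (h : p^[t] x = x) : x = r := by
  by_contra hx
  have hcond : ∀ s < t, p^[s] x ≠ r := by
    intro s hs hr
    apply hx
    rw [← h]
    have : t = (t - s) + s := by omega
    rw [this, Function.iterate_add_apply, hr, iterate_root hroot]
  have := dist_iterate_strict ht hroot x t hcond 0 ht1
  rw [h] at this
  simp at this

lemma exists_iterate_root (ht : T.Connected) (hroot : IsRootedAt T r p) (k : Fin ℓ) :
    ∃ m, p^[m] k = r := by
  suffices H : ∀ d (k : Fin ℓ), T.dist k r ≤ d → ∃ m, p^[m] k = r from H _ k le_rfl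
  intro d
  induction d with
  | zero =>
    intro k hk
    by_cases hkr : k = r
    · exact ⟨0, hkr⟩
    · exact absurd (lt_of_lt_of_le (depth_lt ht hroot hkr) hk) (Nat.not_lt_zero _)
  | succ d ih =>
    intro k hk
    by_cases hkr : k = r
    · exact ⟨0, hkr⟩
    · obtain ⟨m, hm⟩ := ih (p k) (by have := depth_lt ht hroot hkr; omega)
      exact ⟨m + 1, by rw [Function.iterate_succ_apply, hm]⟩

lemma exists_chain_walk (hroot : IsRootedAt T r p) :
    ∀ (m : ℕ) (k : Fin ℓ), (∀ s < m, p^[s] k ≠ r) →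
      ∃ w : T.Walk k (p^[m] k), w.support = (List.range (m+1)).map (fun s => p^[s] k) := by
  intro m
  induction m with
  | zero => intro k _; exact ⟨SimpleGraph.Walk.nil, by simp⟩
  | succ m ih =>
    intro k h
    have hk : k ≠ r := by simpa using h 0 (Nat.succ_pos m)
    obtain ⟨w', hw'⟩ := ih (p k) (by
      intro s hs
      have := h (s+1) (by omega)
      rwa [Function.iterate_succ_apply] at this)
    have hiter : p^[m+1] k = p^[m] (p k) := Function.iterate_succ_apply p m k
    refine ⟨(SimpleGraph.Walk.cons (hroot.2.1 k hk) w').copy rfl hiter.symm, ?_⟩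
    have hlist : List.map (fun s => p^[s] k) (List.range (m+1+1)) =
        k :: List.map (fun s => p^[s] (p k)) (List.range (m+1)) := by
      rw [List.range_succ_eq_map, List.map_cons, List.map_map]
      refine congrArg₂ _ rfl (List.map_congr_left fun s _ => ?_)
      show p^[s+1] k = p^[s] (p k)
      exact Function.iterate_succ_apply p s k
    rw [SimpleGraph.Walk.support_copy, SimpleGraph.Walk.support_cons, hw']
    exact hlist.symm

end Aux

section Aux2
variable {n ℓ : ℕ} {G : SimpleGraph (Fin n)} {T : SimpleGraph (Fin ℓ)}
  {J : Fin ℓ → Finset (Fin n)} {r : Fin ℓ} {p : Fin ℓ → Fin ℓ}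

lemma chain_nodup (ht : T.Connected) (hroot : IsRootedAt T r p) (k : Fin ℓ) (m : ℕ)
    (h : ∀ s < m, p^[s] k ≠ r) :
    ((List.range (m+1)).map (fun s => p^[s] k)).Nodup := by
  refine (List.nodup_range).map_on ?_
  intro x hx y hy hxy
  exact chain_inj_on ht hroot k m h x (by simpa using Nat.lt_succ_iff.mp (List.mem_range.mp hx))
    y (Nat.lt_succ_iff.mp (List.mem_range.mp hy)) hxy

/-- running intersection along ancestor chains -/
lemma chain_running (hTD : IsTreeDecomp G T J) (hroot : IsRootedAt T r p)
    {k : Fin ℓ} {m : ℕ} {u : Fin n} (hu : u ∈ J k) (hum : u ∈ J (p^[m] k)) :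
    ∀ s ≤ m, u ∈ J (p^[s] k) := by
  classical
  have ht : T.Connected := hTD.1.isConnected
  have hex : ∃ t, p^[t] k = p^[m] k := ⟨m, rfl⟩
  set m₀ := Nat.find hex with hm₀def
  have hm₀ : p^[m₀] k = p^[m] k := Nat.find_spec hex
  have hm₀le : m₀ ≤ m := Nat.find_le rfl
  have hnor : ∀ s' < m₀, p^[s'] k ≠ r := by
    intro s' hs' hr
    have habs : p^[m₀] k = r := by
      have hsplit : m₀ = (m₀ - s') + s' := by omega
      rw [hsplit, Function.iterate_add_apply, hr, iterate_root hroot]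
    exact Nat.find_min hex hs' (by rw [hr, ← habs, hm₀])
  obtain ⟨w, hwsupp⟩ := exists_chain_walk hroot m₀ k hnor
  have hpath : w.IsPath := by
    rw [SimpleGraph.Walk.isPath_def, hwsupp]
    exact chain_nodup ht hroot k m₀ hnor
  have hall : ∀ t ≤ m₀, u ∈ J (p^[t] k) := by
    intro t htle
    refine hTD.2.2.2 k (p^[m₀] k) w hpath u hu (by rwa [hm₀]) (p^[t] k) ?_
    rw [hwsupp]
    exact List.mem_map.mpr ⟨t, List.mem_range.mpr (by omega), rfl⟩
  intro s hs
  by_cases hsm : s ≤ m₀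
  · exact hall s hsm
  · push_neg at hsm
    have hmm : m₀ < m := lt_of_lt_of_le hsm hs
    have hq : p^[m - m₀] (p^[m₀] k) = p^[m₀] k := by
      rw [← Function.iterate_add_apply]
      rw [hm₀]
      congr 1
      omega
    have hqr : p^[m₀] k = r := cyc_eq_root ht hroot (by omega) hq
    have : p^[s] k = r := by
      have hsplit : s = (s - m₀) + m₀ := by omega
      rw [hsplit, Function.iterate_add_apply, hqr, iterate_root hroot]
    rw [this, ← hqr, hm₀]
    exact hum

/-- if `k` is not a descendant of `j`, there is a path from `k` to `j` through `p j` -/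
lemma exists_path_through_parent (ht : T.Connected) (hroot : IsRootedAt T r p)
    {k j : Fin ℓ} (hnd : ∀ m, p^[m] k ≠ j) :
    ∃ w : T.Walk k j, w.IsPath ∧ p j ∈ w.support := by
  classical
  obtain ⟨mk, hmk⟩ := exists_iterate_root ht hroot k
  obtain ⟨mj, hmj⟩ := exists_iterate_root ht hroot j
  have hexb : ∃ t, ∃ s, p^[s] k = p^[t] j := ⟨mj, mk, by rw [hmk, hmj]⟩
  set b := Nat.find hexb with hbdef
  obtain ⟨s₀, hs₀⟩ : ∃ s, p^[s] k = p^[b] j := Nat.find_spec hexb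
  have hb1 : 1 ≤ b := by
    by_contra h0
    have hb0 : b = 0 := by omega
    rw [hb0] at hs₀
    exact hnd s₀ (by simpa using hs₀)
  have hexa : ∃ s, p^[s] k = p^[b] j := ⟨s₀, hs₀⟩
  set a := Nat.find hexa with hadef
  have ha : p^[a] k = p^[b] j := Nat.find_spec hexa
  have hnork : ∀ s < a, p^[s] k ≠ r := by
    intro s hs hr
    have habs : p^[a] k = r := by
      have hsplit : a = (a - s) + s := by omega
      rw [hsplit, Function.iterate_add_apply, hr, iterate_root hroot]
    exact Nat.find_min hexa hs (by rw [hr, ← habs, ha])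
  have hnorj : ∀ t < b, p^[t] j ≠ r := by
    intro t htb hr
    exact Nat.find_min hexb htb ⟨mk, by rw [hmk, hr]⟩
  obtain ⟨w1, hw1⟩ := exists_chain_walk hroot a k hnork
  obtain ⟨w2, hw2⟩ := exists_chain_walk hroot b j hnorj
  set L1 := (List.range (a+1)).map (fun s => p^[s] k) with hL1
  set L2' := ((List.range b).reverse).map (fun t => p^[t] j) with hL2'
  have hw2rev : w2.reverse.support = p^[b] j :: L2' := by
    rw [SimpleGraph.Walk.support_reverse, hw2, ← List.map_reverse]
    rw [List.range_succ, List.reverse_append]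
    simp [hL2']
  refine ⟨(w1.copy rfl ha).append w2.reverse, ?_, ?_⟩
  · rw [SimpleGraph.Walk.isPath_def, SimpleGraph.Walk.support_append,
      SimpleGraph.Walk.support_copy, hw1, hw2rev]
    show (L1 ++ L2').Nodup
    refine List.Nodup.append ?_ ?_ ?_
    · exact chain_nodup ht hroot k a hnork
    · refine (List.nodup_reverse.mpr (List.nodup_range : (List.range b).Nodup)).map_on ?_
      intro x hx y hy hxy
      rw [List.mem_reverse, List.mem_range] at hx hy
      exact chain_inj_on ht hroot j b hnorj x (le_of_lt hx) y (le_of_lt hy) hxy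
    · rw [List.disjoint_iff_ne]
      rintro x hx y hy rfl
      obtain ⟨s, hs, rfl⟩ := List.mem_map.mp hx
      obtain ⟨t, htmem, hteq⟩ := List.mem_map.mp hy
      rw [List.mem_reverse, List.mem_range] at htmem
      exact Nat.find_min hexb htmem ⟨s, hteq.symm⟩
  · rw [SimpleGraph.Walk.mem_support_append_iff]
    rcases eq_or_lt_of_le hb1 with hb | hb
    · left
      rw [SimpleGraph.Walk.support_copy, hw1]
      refine List.mem_map.mpr ⟨a, List.mem_range.mpr (by omega), ?_⟩
      rw [ha, ← hb]; simp
    · right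
      rw [hw2rev]
      refine List.mem_cons.mpr (Or.inr ?_)
      exact List.mem_map.mpr ⟨1, by rw [List.mem_reverse, List.mem_range]; omega, by simp⟩

/-- non-descendant bag lemma -/
lemma bag_parent_of_nondesc (hTD : IsTreeDecomp G T J) (hroot : IsRootedAt T r p)
    {k j : Fin ℓ} (hnd : ∀ m, p^[m] k ≠ j) {u : Fin n} (hu : u ∈ J k) (huj : u ∈ J j) :
    u ∈ J (p j) := by
  obtain ⟨w, hpath, hmem⟩ := exists_path_through_parent hTD.1.isConnected hroot hnd
  exact hTD.2.2.2 k j w hpath u hu huj (p j) hmem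

end Aux2

section Sums
variable {n ℓ : ℕ}

def Ent {n ℓ : ℕ} (J : Fin ℓ → Finset (Fin n))
    (X : (j : Fin ℓ) → Matrix ↥(J j) ↥(J j) ℝ) (k : Fin ℓ) (u v : Fin n) : ℝ :=
  if h : u ∈ J k ∧ v ∈ J k then X k ⟨u, h.1⟩ ⟨v, h.2⟩ else 0

def Bset {n ℓ : ℕ} (J : Fin ℓ → Finset (Fin n)) (u v : Fin n) : Finset (Fin ℓ) :=
  Finset.univ.filter (fun k => u ∈ J k ∧ v ∈ J k)

noncomputable def Zent {n ℓ : ℕ} (J : Fin ℓ → Finset (Fin n))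
    (X : (j : Fin ℓ) → Matrix ↥(J j) ↥(J j) ℝ) (u v : Fin n) : ℝ :=
  (∑ k ∈ Bset J u v, Ent J X k u v) / (Bset J u v).card

noncomputable def Dset {n ℓ : ℕ} (J : Fin ℓ → Finset (Fin n)) (p : Fin ℓ → Fin ℓ)
    (j : Fin ℓ) (u v : Fin n) : Finset (Fin ℓ) :=
  @Finset.filter _ (fun k => (∃ m, p^[m] k = j) ∧ u ∈ J k ∧ v ∈ J k)
    (fun _ => Classical.propDecidable _) Finset.univ

noncomputable def Fent {n ℓ : ℕ} (J : Fin ℓ → Finset (Fin n)) (p : Fin ℓ → Fin ℓ)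
    (X : (j : Fin ℓ) → Matrix ↥(J j) ↥(J j) ℝ) (j : Fin ℓ) (u v : Fin n) : ℝ :=
  ∑ k ∈ Dset J p j u v, (Ent J X k u v - Zent J X u v)

variable {J : Fin ℓ → Finset (Fin n)} {p : Fin ℓ → Fin ℓ}
  {X : (j : Fin ℓ) → Matrix ↥(J j) ↥(J j) ℝ} {G : SimpleGraph (Fin n)}
  {T : SimpleGraph (Fin ℓ)} {r : Fin ℓ}

lemma mem_Bset {u v : Fin n} {k : Fin ℓ} :
    k ∈ Bset J u v ↔ u ∈ J k ∧ v ∈ J k := by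
  simp [Bset]

lemma mem_Dset {u v : Fin n} {j k : Fin ℓ} :
    k ∈ Dset J p j u v ↔ (∃ m, p^[m] k = j) ∧ u ∈ J k ∧ v ∈ J k := by
  unfold Dset
  exact (@Finset.mem_filter (Fin ℓ) (fun k => (∃ m, p^[m] k = j) ∧ u ∈ J k ∧ v ∈ J k)
    (fun _ => Classical.propDecidable _) Finset.univ k).trans
    (and_iff_right (Finset.mem_univ k))

lemma Ent_symm (hX : ∀ j, (X j).IsSymm) (k : Fin ℓ) (u v : Fin n) :
    Ent J X k u v = Ent J X k v u := by
  by_cases h : u ∈ J k ∧ v ∈ J k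
  · rw [Ent, dif_pos h, Ent, dif_pos ⟨h.2, h.1⟩]
    exact ((hX k).apply ⟨u, h.1⟩ ⟨v, h.2⟩).symm
  · rw [Ent, dif_neg h, Ent, dif_neg (fun h' => h ⟨h'.2, h'.1⟩)]

lemma Bset_symm (u v : Fin n) : Bset J u v = Bset J v u := by
  ext k; simp [mem_Bset, and_comm]

lemma Zent_symm (hX : ∀ j, (X j).IsSymm) (u v : Fin n) :
    Zent J X u v = Zent J X v u := by
  rw [Zent, Zent, Bset_symm u v]
  rw [Finset.sum_congr rfl (fun k _ => Ent_symm hX k u v)]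

lemma Dset_symm (j : Fin ℓ) (u v : Fin n) : Dset J p j u v = Dset J p j v u := by
  ext k; rw [mem_Dset, mem_Dset]; tauto

lemma Fent_symm (hX : ∀ j, (X j).IsSymm) (j : Fin ℓ) (u v : Fin n) :
    Fent J p X j u v = Fent J p X j v u := by
  rw [Fent, Fent, Dset_symm j u v]
  exact Finset.sum_congr rfl (fun k _ => by rw [Ent_symm hX k u v, Zent_symm hX u v])

lemma sum_Bset_zero {u v : Fin n} (hne : (Bset J u v).Nonempty) :
    ∑ k ∈ Bset J u v, (Ent J X k u v - Zent J X u v) = 0 := by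
  rw [Finset.sum_sub_distrib, Finset.sum_const, Zent]
  have hcard : ((Bset J u v).card : ℝ) ≠ 0 :=
    Nat.cast_ne_zero.mpr (Finset.card_ne_zero_of_mem hne.choose_spec)
  rw [nsmul_eq_mul, mul_div_assoc', mul_div_cancel_left₀ _ hcard, sub_self]

lemma Dset_root (ht : T.Connected) (hroot : IsRootedAt T r p) (u v : Fin n) :
    Dset J p r u v = Bset J u v := by
  ext k
  rw [mem_Dset, mem_Bset]
  exact ⟨fun h => h.2, fun h => ⟨exists_iterate_root ht hroot k, h⟩⟩

lemma Fent_root (ht : T.Connected) (hroot : IsRootedAt T r p) {u v : Fin n}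
    (hne : (Bset J u v).Nonempty) : Fent J p X r u v = 0 := by
  rw [Fent, Dset_root ht hroot]
  exact sum_Bset_zero hne

lemma Fent_nonparent (hTD : IsTreeDecomp G T J) (hroot : IsRootedAt T r p)
    {j : Fin ℓ} {u v : Fin n} (hu : u ∈ J j) (hv : v ∈ J j)
    (hnp : ¬(u ∈ J (p j) ∧ v ∈ J (p j))) : Fent J p X j u v = 0 := by
  have hD : Dset J p j u v = Bset J u v := by
    ext k
    rw [mem_Dset, mem_Bset]
    refine ⟨fun h => h.2, fun h => ⟨?_, h⟩⟩
    by_contra hcon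
    push_neg at hcon
    exact hnp ⟨bag_parent_of_nondesc hTD hroot hcon h.1 hu,
      bag_parent_of_nondesc hTD hroot hcon h.2 hv⟩
  rw [Fent, hD]
  exact sum_Bset_zero ⟨j, mem_Bset.mpr ⟨hu, hv⟩⟩

lemma Fent_child_zero (hTD : IsTreeDecomp G T J) (hroot : IsRootedAt T r p)
    {c j : Fin ℓ} {u v : Fin n} (hcp : p c = j) (hu : u ∈ J j) (hv : v ∈ J j)
    (hnc : ¬(u ∈ J c ∧ v ∈ J c)) : Fent J p X c u v = 0 := by
  have hD : Dset J p c u v = ∅ := by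
    ext k
    simp only [Finset.notMem_empty, iff_false, mem_Dset, not_and]
    rintro ⟨m, hm⟩ hku hkv
    have hj : p^[m+1] k = j := by
      rw [Function.iterate_succ_apply', hm, hcp]
    have hcu : u ∈ J c := by
      have := chain_running hTD hroot hku (by rw [hj]; exact hu) m (by omega)
      rwa [hm] at this
    have hcv : v ∈ J c := by
      have := chain_running hTD hroot hkv (by rw [hj]; exact hv) m (by omega)
      rwa [hm] at this
    exact hnc ⟨hcu, hcv⟩
  rw [Fent, hD, Finset.sum_empty]

lemma Fent_partition (ht : T.Connected) (hroot : IsRootedAt T r p)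
    {j : Fin ℓ} {u v : Fin n} (hu : u ∈ J j) (hv : v ∈ J j) :
    Fent J p X j u v = (Ent J X j u v - Zent J X u v)
      + ∑ c ∈ Finset.univ.filter (fun c => c ≠ r ∧ p c = j), Fent J p X c u v := by
  classical
  have key : ∀ c1 c2 : Fin ℓ, ∀ k : Fin ℓ, ∀ m1 m2 : ℕ, m1 ≤ m2 →
      p^[m1] k = c1 → p^[m2] k = c2 → c1 ≠ r → c2 ≠ r → p c1 = j → p c2 = j → c1 = c2 := by
    intro c1 c2 k m1 m2 hle h1 h2 hc1r hc2r hp1 hp2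
    have hsub : p^[m2 - m1] c1 = c2 := by
      rw [← h1, ← Function.iterate_add_apply]
      rw [show m2 - m1 + m1 = m2 by omega, h2]
    rcases Nat.eq_zero_or_pos (m2 - m1) with h0 | hpos
    · rw [h0] at hsub; simpa using hsub
    · exfalso
      have hjj : p^[m2 - m1] j = j := by
        calc p^[m2 - m1] j = p^[m2 - m1] (p c1) := by rw [hp1]
        _ = p^[m2 - m1 + 1] c1 := (Function.iterate_succ_apply p _ c1).symm
        _ = p (p^[m2 - m1] c1) := Function.iterate_succ_apply' p _ c1
        _ = p c2 := by rw [hsub]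
        _ = j := hp2
      have hjr : j = r := cyc_eq_root ht hroot hpos hjj
      have : c2 = r := by
        rcases Nat.exists_eq_add_of_lt hpos with ⟨t, ht'⟩
        rw [← hsub, show m2 - m1 = t + 1 by omega, Function.iterate_succ_apply, hp1, hjr,
          iterate_root hroot]
      exact hc2r this
  have hDeq : Dset J p j u v = insert j
      ((Finset.univ.filter (fun c => c ≠ r ∧ p c = j)).biUnion (fun c => Dset J p c u v)) := by
    ext k
    simp only [mem_Dset, Finset.mem_insert, Finset.mem_biUnion, Finset.mem_filter,
      Finset.mem_univ, true_and]
    constructor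
    · rintro ⟨⟨m, hm⟩, hku, hkv⟩
      by_cases hkj : k = j
      · exact Or.inl hkj
      right
      have hex : ∃ m, p^[m] k = j := ⟨m, hm⟩
      have hm' : p^[Nat.find hex] k = j := Nat.find_spec hex
      set m' := Nat.find hex with hm'def
      have hm'pos : 1 ≤ m' := by
        rcases Nat.eq_zero_or_pos m' with h0 | h' 
        · exfalso; rw [h0] at hm'; exact hkj (by simpa using hm')
        · exact h'
      have hpc : p (p^[m'-1] k) = j := by
        calc p (p^[m'-1] k) = p^[(m'-1)+1] k := (Function.iterate_succ_apply' p _ k).symm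
        _ = j := by rw [show m'-1+1 = m' by omega]; exact hm'
      refine ⟨p^[m'-1] k, ⟨?_, hpc⟩, ⟨m'-1, rfl⟩, hku, hkv⟩
      intro hr
      have hjr : j = r := by rw [← hpc, hr, hroot.1]
      exact Nat.find_min hex (show m'-1 < m' by omega) (by rw [hr, hjr])
    · rintro (rfl | ⟨c, ⟨hcr, hcp⟩, ⟨m, hm⟩, hku, hkv⟩)
      · exact ⟨⟨0, rfl⟩, hu, hv⟩
      · exact ⟨⟨m+1, by rw [Function.iterate_succ_apply', hm, hcp]⟩, hku, hkv⟩
  have hjnot : j ∉ (Finset.univ.filter (fun c => c ≠ r ∧ p c = j)).biUnion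
      (fun c => Dset J p c u v) := by
    intro hmem
    obtain ⟨c, hc, hjD⟩ := Finset.mem_biUnion.mp hmem
    obtain ⟨hcr, hcp⟩ := (Finset.mem_filter.mp hc).2
    obtain ⟨⟨m, hm⟩, -, -⟩ := mem_Dset.mp hjD
    have hjj : p^[m+1] j = j := by rw [Function.iterate_succ_apply', hm, hcp]
    have hjr : j = r := cyc_eq_root ht hroot (by omega) hjj
    have : c = r := by rw [← hm, hjr, iterate_root hroot]
    exact hcr this
  have hdisj : (↑(Finset.univ.filter (fun c => c ≠ r ∧ p c = j)) :
      Set (Fin ℓ)).PairwiseDisjoint (fun c => Dset J p c u v) := by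
    intro c1 h1 c2 h2 hne
    simp only [Finset.coe_filter, Set.mem_setOf_eq] at h1 h2
    refine Finset.disjoint_left.mpr ?_
    intro k hk1 hk2
    obtain ⟨⟨m1, hm1⟩, -, -⟩ := mem_Dset.mp hk1
    obtain ⟨⟨m2, hm2⟩, -, -⟩ := mem_Dset.mp hk2
    rcases le_total m1 m2 with hle | hle
    · exact hne (key c1 c2 k m1 m2 hle hm1 hm2 h1.2.1 h2.2.1 h1.2.2 h2.2.2)
    · exact hne ((key c2 c1 k m2 m1 hle hm2 hm1 h2.2.1 h1.2.1 h2.2.2 h1.2.2).symm)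
  rw [Fent, hDeq, Finset.sum_insert hjnot, Finset.sum_biUnion hdisj]
  rfl

end Sums

/-- kernel and orthogonal complement of the overlap-difference map:
(i) if `X j = Z[J j, J j]` for a symmetric `Z`, then all overlap differences `R i (X)`
vanish; and (ii) every symmetric family `(X j)` decomposes as
`X j = Z[J j, J j] + ι_j (Y j) − Σ_{c ∈ ch(j)} ι_j (Y c)` for some symmetric `Z` and
symmetric overlap-indexed family `(Y i)_{i ≠ r}` (the term `ι_j (Y j)` being absent at
the root `j = r`). -/
theorem overlap_kernel_and_decomposition {n ℓ : ℕ}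
    (G : SimpleGraph (Fin n)) (T : SimpleGraph (Fin ℓ))
    (J : Fin ℓ → Finset (Fin n)) (hTD : IsTreeDecomp G T J)
    (r : Fin ℓ) (p : Fin ℓ → Fin ℓ) (hroot : IsRootedAt T r p) :
    ((∀ Z : Matrix (Fin n) (Fin n) ℝ, Z.IsSymm →
        ∀ i : Fin ℓ, i ≠ r →
          ∀ (u v : Fin n) (hu : u ∈ J i ∩ J (p i)) (hv : v ∈ J i ∩ J (p i)),
            psub Z (J i) ⟨u, (Finset.mem_inter.mp hu).1⟩ ⟨v, (Finset.mem_inter.mp hv).1⟩ -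
              psub Z (J (p i)) ⟨u, (Finset.mem_inter.mp hu).2⟩
                ⟨v, (Finset.mem_inter.mp hv).2⟩ = 0) ∧
      (∀ X : (j : Fin ℓ) → Matrix ↥(J j) ↥(J j) ℝ, (∀ j, (X j).IsSymm) →
        ∃ (Z : Matrix (Fin n) (Fin n) ℝ)
          (Y : (i : Fin ℓ) → Matrix ↥(J i ∩ J (p i)) ↥(J i ∩ J (p i)) ℝ),
          Z.IsSymm ∧ (∀ i, i ≠ r → (Y i).IsSymm) ∧
          ∀ (j : Fin ℓ) (u v : Fin n) (hu : u ∈ J j) (hv : v ∈ J j),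
            X j ⟨u, hu⟩ ⟨v, hv⟩ =
              Z u v + (if j = r then 0 else padEntry J p Y j u v) -
                ∑ c ∈ Finset.univ.filter (fun c => c ≠ r ∧ p c = j),
                  padEntry J p Y c u v)) := by
  constructor
  · intro Z hZ i hi u v hu hv
    simp [psub]
  · intro X hX
    classical
    have ht : T.Connected := hTD.1.isConnected
    refine ⟨Matrix.of (fun u v => Zent J X u v),
      fun i => Matrix.of (fun a b => Fent J p X i a.1 b.1), ?_, ?_, ?_⟩
    · apply Matrix.ext
      intro u v
      rw [Matrix.transpose_apply]
      exact Zent_symm hX v u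
    · intro i _
      apply Matrix.ext
      intro a b
      rw [Matrix.transpose_apply]
      exact Fent_symm hX i b.1 a.1
    · intro j u v hu hv
      have hEnt : X j ⟨u, hu⟩ ⟨v, hv⟩ = Ent J X j u v := by rw [Ent, dif_pos ⟨hu, hv⟩]
      have hpadc : ∀ c ∈ Finset.univ.filter (fun c => c ≠ r ∧ p c = j),
          padEntry J p (fun i => Matrix.of fun a b => Fent J p X i a.1 b.1) c u v
            = Fent J p X c u v := by
        intro c hc
        obtain ⟨hcr, hcp⟩ := (Finset.mem_filter.mp hc).2
        by_cases hC : u ∈ J c ∧ v ∈ J c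
        · rw [padEntry, dif_pos ⟨Finset.mem_inter.mpr ⟨hC.1, hcp ▸ hu⟩,
            Finset.mem_inter.mpr ⟨hC.2, hcp ▸ hv⟩⟩]
          rfl
        · rw [padEntry, dif_neg, Fent_child_zero hTD hroot hcp hu hv hC]
          intro h'
          exact hC ⟨(Finset.mem_inter.mp h'.1).1, (Finset.mem_inter.mp h'.2).1⟩
      rw [Finset.sum_congr rfl hpadc]
      have hpart := Fent_partition (r := r) (X := X) ht hroot hu hv
      by_cases hjr : j = r
      · subst hjr
        rw [if_pos rfl]
        have hr0 : Fent J p X j u v = 0 := Fent_root ht hroot ⟨j, mem_Bset.mpr ⟨hu, hv⟩⟩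
        rw [hEnt]
        simp only [Matrix.of_apply]
        linarith [hpart, hr0]
      · rw [if_neg hjr]
        by_cases hov : u ∈ J (p j) ∧ v ∈ J (p j)
        · have hpad : padEntry J p (fun i => Matrix.of fun a b => Fent J p X i a.1 b.1) j u v
              = Fent J p X j u v := by
            rw [padEntry, dif_pos ⟨Finset.mem_inter.mpr ⟨hu, hov.1⟩,
              Finset.mem_inter.mpr ⟨hv, hov.2⟩⟩]
            rfl
          rw [hpad, hEnt]
          simp only [Matrix.of_apply]
          linarith [hpart]
        · have hpad : padEntry J p (fun i => Matrix.of fun a b => Fent J p X i a.1 b.1) j u v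
              = 0 := by
            rw [padEntry, dif_neg]
            intro h'
            exact hov ⟨(Finset.mem_inter.mp h'.1).2, (Finset.mem_inter.mp h'.2).2⟩
          have h0 : Fent J p X j u v = 0 := Fent_nonparent hTD hroot hu hv hov
          rw [hpad, hEnt]
          simp only [Matrix.of_apply]
          linarith [hpart, h0]
end

section
/- Let 𝒯 = ({J_1,…,J_ℓ}, T) be a tree decomposition rooted at r, let A_1,…,A_m be n×n real symmetric matrices, and for each i let (A_{i,1},…,A_{i,ℓ}) be a splitting of A_i on 𝒯. Then the following are equivalent: (a) there exist u ∈ ℝ^m and a family (V_i)_{i ≠ r}, with V_i real symmetric indexed by (J_i ∩ J_{p(i)}) × (J_i ∩ J_{p(i)}), not all of u and the V_i zero, such that for every node j: Σ_{i=1}^m u_i A_{i,j} + ι_j(V_j) − Σ_{c ∈ ch(j)} ι_j(V_c) = 0 (the term ι_j(V_j) being absent when j = r); (b) there exists y ∈ ℝ^m with y ≠ 0 and Σ_{i=1}^m y_i A_i = 0. -/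
open Matrix

/-- `(Ms j)_j` is a splitting of the symmetric matrix `M` on the tree decomposition with
bags `J`:  `Σ_j Ms j • X[J j, J j] = M • X` for every symmetric `X`, where `M • N = tr(Mᵀ N)`. -/
def IsSplitting {n ℓ : ℕ} (J : Fin ℓ → Finset (Fin n)) (M : Matrix (Fin n) (Fin n) ℝ)
    (Ms : (j : Fin ℓ) → Matrix ↥(J j) ↥(J j) ℝ) : Prop :=
  ∀ X : Matrix (Fin n) (Fin n) ℝ, X.IsSymm →
    ∑ j : Fin ℓ, Matrix.trace ((Ms j)ᵀ * psub X (J j)) = Matrix.trace (Mᵀ * X)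

section TreeAux

variable {ℓ : ℕ} {T : SimpleGraph (Fin ℓ)} {r : Fin ℓ} {p : Fin ℓ → Fin ℓ}

lemma dist_parent_lt (hT : T.IsTree) (hroot : IsRootedAt T r p) {j : Fin ℓ} (hj : j ≠ r) :
    T.dist (p j) r < T.dist j r := by
  classical
  have hreach : T.Reachable j r := hT.isConnected.preconnected j r
  have hdist : T.dist j r ≠ 0 :=
    SimpleGraph.dist_ne_zero_iff_ne_and_reachable.2 ⟨hj, hreach⟩
  obtain ⟨w, hw⟩ := hT.isConnected.exists_walk_length_eq_dist j r
  have hpath : w.bypass.IsPath := w.bypass_isPath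
  have hlen : w.bypass.length ≤ T.dist j r := hw ▸ w.length_bypass_le
  have hmem : p j ∈ w.bypass.support := hroot.2.2.1 j hj w.bypass hpath
  have h1 : T.dist (p j) r ≤ (w.bypass.dropUntil (p j) hmem).length := SimpleGraph.dist_le _
  have h2 : (w.bypass.takeUntil (p j) hmem).length + (w.bypass.dropUntil (p j) hmem).length
      = w.bypass.length := by
    rw [← SimpleGraph.Walk.length_append, SimpleGraph.Walk.take_spec]
  have h3 : (w.bypass.takeUntil (p j) hmem).length ≠ 0 := by
    intro h0
    exact (hroot.2.1 j hj).ne (SimpleGraph.Walk.eq_of_length_eq_zero h0)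
  omega

lemma dist_parent_le (hT : T.IsTree) (hroot : IsRootedAt T r p) (j : Fin ℓ) :
    T.dist (p j) r ≤ T.dist j r := by
  by_cases hj : j = r
  · subst hj; rw [hroot.1]
  · exact (dist_parent_lt hT hroot hj).le

lemma dist_iter_le (hT : T.IsTree) (hroot : IsRootedAt T r p) (s : ℕ) (k : Fin ℓ) :
    T.dist (p^[s] k) r ≤ T.dist k r := by
  induction s with
  | zero => simp
  | succ s ih =>
    rw [Function.iterate_succ_apply']
    exact le_trans (dist_parent_le hT hroot _) ih

lemma iter_root (hroot : IsRootedAt T r p) (s : ℕ) : p^[s] r = r := by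
  induction s with
  | zero => simp
  | succ s ih => rw [Function.iterate_succ_apply', ih, hroot.1]

lemma reach_root (hT : T.IsTree) (hroot : IsRootedAt T r p) (k : Fin ℓ) :
    ∃ s, p^[s] k = r := by
  generalize hN : T.dist k r = N
  induction N using Nat.strong_induction_on generalizing k with
  | _ N ih =>
    by_cases hk : k = r
    · exact ⟨0, by simp [hk]⟩
    · obtain ⟨s, hs⟩ := ih (T.dist (p k) r) (hN ▸ dist_parent_lt hT hroot hk) (p k) rfl
      exact ⟨s + 1, by rw [Function.iterate_succ_apply]; exact hs⟩

lemma chain_walk (hT : T.IsTree) (hroot : IsRootedAt T r p) :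
    ∀ (t : ℕ) (k : Fin ℓ), (∀ s, s < t → p^[s] k ≠ r) →
    ∃ w : T.Walk k (p^[t] k), w.IsPath ∧
      (∀ x ∈ w.support, ∃ s, s ≤ t ∧ p^[s] k = x) ∧
      (∀ s, s ≤ t → p^[s] k ∈ w.support) := by
  intro t
  induction t with
  | zero =>
    intro k _
    refine ⟨SimpleGraph.Walk.nil.copy rfl (Function.iterate_zero_apply p k).symm, ?_, ?_, ?_⟩
    · simp [SimpleGraph.Walk.isPath_def]
    · intro x hx
      simp only [SimpleGraph.Walk.support_copy, SimpleGraph.Walk.support_nil,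
        List.mem_singleton] at hx
      exact ⟨0, le_refl 0, by simp [hx]⟩
    · intro s hs
      interval_cases s
      simp [SimpleGraph.Walk.support_copy]
  | succ t ih =>
    intro k hk
    have hkr : k ≠ r := by simpa using hk 0 (Nat.succ_pos t)
    have hchain : ∀ s, s < t → p^[s] (p k) ≠ r := by
      intro s hs
      rw [← Function.iterate_succ_apply]
      exact hk (s+1) (by omega)
    obtain ⟨w', hpath, hsup1, hsup2⟩ := ih (p k) hchain
    have hadj : T.Adj k (p k) := hroot.2.1 k hkr
    have hknot : k ∉ w'.support := by
      intro hmem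
      obtain ⟨s, _, hps⟩ := hsup1 k hmem
      have h1 : T.dist (p^[s] (p k)) r ≤ T.dist (p k) r := dist_iter_le hT hroot s (p k)
      rw [hps] at h1
      exact absurd (lt_of_le_of_lt h1 (dist_parent_lt hT hroot hkr)) (lt_irrefl _)
    refine ⟨(SimpleGraph.Walk.cons hadj w').copy rfl (Function.iterate_succ_apply p t k).symm,
      ?_, ?_, ?_⟩
    · rw [SimpleGraph.Walk.isPath_def, SimpleGraph.Walk.support_copy]
      exact (hpath.cons hknot).support_nodup
    · intro x hx
      simp only [SimpleGraph.Walk.support_copy, SimpleGraph.Walk.support_cons,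
        List.mem_cons] at hx
      rcases hx with h | h
      · exact ⟨0, Nat.zero_le _, by simp [h.symm]⟩
      · obtain ⟨s, hs, hps⟩ := hsup1 x h
        exact ⟨s + 1, by omega, by rw [Function.iterate_succ_apply]; exact hps⟩
    · intro s hs
      simp only [SimpleGraph.Walk.support_copy, SimpleGraph.Walk.support_cons, List.mem_cons]
      cases s with
      | zero => exact Or.inl (by simp)
      | succ s =>
        right
        rw [Function.iterate_succ_apply]
        exact hsup2 s (by omega)

variable {n : ℕ} {G : SimpleGraph (Fin n)} {J : Fin ℓ → Finset (Fin n)}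

/-- If `k` is a descendant of `c` (`c ≠ r`) and `a` lies in the bags of `k` and of the parent
of `c`, then `a` lies in the bag of `c`. -/
lemma mem_bag_ancestor (hTD : IsTreeDecomp G T J) (hroot : IsRootedAt T r p)
    {k c : Fin ℓ} {t : ℕ} (hc : p^[t] k = c) (hcr : c ≠ r)
    {a : Fin n} (hak : a ∈ J k) (hap : a ∈ J (p c)) : a ∈ J c := by
  have hT := hTD.1
  have hchain : ∀ s, s < t + 1 → p^[s] k ≠ r := by
    intro s hs he
    apply hcr
    have h1 : p^[t] k = p^[t - s] (p^[s] k) := by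
      rw [← Function.iterate_add_apply]
      congr 1
      omega
    rw [he, iter_root hroot] at h1
    rw [← hc, h1]
  obtain ⟨w, hpath, _, hsup⟩ := chain_walk hT hroot (t+1) k hchain
  have hc' : p^[t+1] k = p c := by rw [Function.iterate_succ_apply', hc]
  have hmemc : c ∈ (w.copy rfl hc').support := by
    rw [SimpleGraph.Walk.support_copy]
    exact hc ▸ hsup t (by omega)
  exact hTD.2.2.2 k (p c) (w.copy rfl hc') ((SimpleGraph.Walk.isPath_copy w rfl hc').mpr hpath) a hak hap c hmemc

/-- If `k` is not a descendant of `j ≠ r` and `a` lies in the bags of `k` and `j`, then `a`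
lies in the bag of the parent of `j`. -/
lemma mem_bag_parent (hTD : IsTreeDecomp G T J) (hroot : IsRootedAt T r p)
    {k j : Fin ℓ} (hnr : ¬ ∃ t, p^[t] k = j) (hjr : j ≠ r)
    {a : Fin n} (hak : a ∈ J k) (haj : a ∈ J j) : a ∈ J (p j) := by
  classical
  have hT := hTD.1
  obtain ⟨sk, hsk⟩ := reach_root hT hroot k
  obtain ⟨sj, hsj⟩ := reach_root hT hroot j
  have hex : ∃ t, ∃ s, p^[s] k = p^[t] j := ⟨sj, sk, by rw [hsk, hsj]⟩
  set t₀ := Nat.find hex with ht₀def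
  have hex2 : ∃ s, p^[s] k = p^[t₀] j := Nat.find_spec hex
  set s₀ := Nat.find hex2 with hs₀def
  have hx : p^[s₀] k = p^[t₀] j := Nat.find_spec hex2
  have ht₀pos : 0 < t₀ := by
    rcases Nat.eq_zero_or_pos t₀ with h | h
    · exfalso
      apply hnr
      refine ⟨s₀, ?_⟩
      rw [hx, h, Function.iterate_zero_apply]
    · exact h
  have hkchain : ∀ s, s < s₀ → p^[s] k ≠ r := by
    intro s hs he
    have hxr : p^[s₀] k = r := by
      have h1 : p^[s₀] k = p^[s₀ - s] (p^[s] k) := by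
        rw [← Function.iterate_add_apply]; congr 1; omega
      rw [h1, he, iter_root hroot]
    exact Nat.find_min hex2 hs (by rw [he, ← hxr, hx])
  have hjchain : ∀ t, t < t₀ → p^[t] j ≠ r := by
    intro t ht he
    exact Nat.find_min hex ht ⟨sk, by rw [hsk, he]⟩
  obtain ⟨w1, hw1path, hw1sup, hw1sup2⟩ := chain_walk hT hroot s₀ k hkchain
  obtain ⟨w2, hw2path, hw2sup, hw2sup2⟩ := chain_walk hT hroot t₀ j hjchain
  set w2r := w2.reverse.copy hx.symm rfl with hw2rdef
  set w := w1.append w2r with hwdef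
  have hl2 : w2r.support = w2.reverse.support := SimpleGraph.Walk.support_copy _ _ _
  have hl2head : w2.reverse.support = (p^[t₀] j) :: w2.reverse.support.tail := by
    rw [← SimpleGraph.Walk.support_eq_cons]
  have hl2nodup : w2.reverse.support.Nodup := hw2path.reverse.support_nodup
  have hsupp : w.support = w1.support ++ w2.reverse.support.tail := by
    rw [hwdef, SimpleGraph.Walk.support_append, hl2]
  have hdisj : ∀ y ∈ w1.support, y ∉ w2.reverse.support.tail := by
    intro y hy1 hy2
    obtain ⟨s, hsle, hps⟩ := hw1sup y hy1
    have hy2' : y ∈ w2.support := by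
      have : y ∈ w2.reverse.support := List.mem_of_mem_tail hy2
      rw [SimpleGraph.Walk.support_reverse] at this
      exact List.mem_reverse.mp this
    obtain ⟨t, htle, hpt⟩ := hw2sup y hy2'
    rcases Nat.lt_or_ge t t₀ with h | h
    · exact Nat.find_min hex h ⟨s, by rw [hps, hpt]⟩
    · have ht : t = t₀ := le_antisymm htle h
      have hyx : y = p^[t₀] j := by rw [← hpt, ht]
      have : (p^[t₀] j) ∉ w2.reverse.support.tail := by
        have := hl2nodup
        rw [hl2head] at this
        exact (List.nodup_cons.mp this).1
      exact this (hyx ▸ hy2)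
  have hwpath : w.IsPath := by
    rw [SimpleGraph.Walk.isPath_def, hsupp, List.nodup_append]
    refine ⟨hw1path.support_nodup, ?_, ?_⟩
    · exact hl2nodup.sublist (List.tail_sublist _)
    · intro y hy1 z hz2 hyz
      subst hyz
      exact hdisj y hy1 hz2
  have hpjmem : p j ∈ w.support := by
    have h1 : p j ∈ w2.support := by
      have := hw2sup2 1 ht₀pos
      simpa using this
    have h2 : p j ∈ w2.reverse.support := by
      rw [SimpleGraph.Walk.support_reverse]; exact List.mem_reverse.mpr h1
    rw [hsupp, List.mem_append]
    rw [hl2head] at h2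
    rcases List.mem_cons.mp h2 with h | h
    · left
      rw [h, ← hx]
      exact hw1sup2 s₀ (le_refl _)
    · right; exact h
  exact hTD.2.2.2 k j w hwpath a hak haj (p j) hpjmem


end TreeAux


section Alg

variable {n : ℕ}

lemma sum_dite_mem (s : Finset (Fin n)) (F : (a : Fin n) → a ∈ s → ℝ) :
    ∑ x : ↥s, F x.1 x.2 = ∑ a : Fin n, if h : a ∈ s then F a h else 0 := by
  classical
  rw [← Finset.sum_filter_add_sum_filter_not Finset.univ (· ∈ s)
    (fun a => if h : a ∈ s then F a h else 0)]
  have h2 : ∑ a ∈ Finset.univ.filter (fun a => ¬ a ∈ s),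
      (if h : a ∈ s then F a h else 0) = 0 := by
    apply Finset.sum_eq_zero
    intro a ha
    rw [dif_neg (Finset.mem_filter.mp ha).2]
  rw [h2, add_zero]
  have h3 : Finset.univ.filter (fun a => a ∈ s) = s := by
    ext a; simp
  rw [h3, ← Finset.sum_attach s (fun a => if h : a ∈ s then F a h else 0)]
  rw [Finset.univ_eq_attach]
  apply Finset.sum_congr rfl
  intro x _
  rw [dif_pos x.2]

lemma double_sum_dite_mem (s : Finset (Fin n)) (F : (a b : Fin n) → a ∈ s → b ∈ s → ℝ) :
    ∑ x : ↥s, ∑ y : ↥s, F x.1 y.1 x.2 y.2 =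
      ∑ a : Fin n, ∑ b : Fin n, if h : a ∈ s ∧ b ∈ s then F a b h.1 h.2 else 0 := by
  classical
  rw [sum_dite_mem s (fun a ha => ∑ y : ↥s, F a y.1 ha y.2)]
  apply Finset.sum_congr rfl
  intro a _
  by_cases ha : a ∈ s
  · rw [dif_pos ha, sum_dite_mem s (fun b hb => F a b ha hb)]
    apply Finset.sum_congr rfl
    intro b _
    by_cases hb : b ∈ s
    · rw [dif_pos hb, dif_pos ⟨ha, hb⟩]
    · rw [dif_neg hb, dif_neg (fun h => hb h.2)]
  · rw [dif_neg ha]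
    symm
    apply Finset.sum_eq_zero
    intro b _
    rw [dif_neg (fun h => ha h.1)]

lemma trace_psub (s : Finset (Fin n)) (Y : Matrix ↥s ↥s ℝ) (X : Matrix (Fin n) (Fin n) ℝ) :
    Matrix.trace (Yᵀ * psub X s) =
    ∑ a : Fin n, ∑ b : Fin n, if h : a ∈ s ∧ b ∈ s then Y ⟨a, h.1⟩ ⟨b, h.2⟩ * X a b else 0 := by
  classical
  have h1 : Matrix.trace (Yᵀ * psub X s) = ∑ d : ↥s, ∑ e : ↥s, Y e d * X e.1 d.1 := by
    simp [Matrix.trace, Matrix.mul_apply, Matrix.diag, Matrix.transpose_apply, psub,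
      Matrix.submatrix_apply]
  rw [h1, Finset.sum_comm]
  exact double_sum_dite_mem s (fun a b ha hb => Y ⟨a, ha⟩ ⟨b, hb⟩ * X a b)

lemma trace_full (M X : Matrix (Fin n) (Fin n) ℝ) :
    Matrix.trace (Mᵀ * X) = ∑ a : Fin n, ∑ b : Fin n, M a b * X a b := by
  simp [Matrix.trace, Matrix.mul_apply, Matrix.diag, Matrix.transpose_apply]
  exact Finset.sum_comm

def Xsel (a b : Fin n) : Matrix (Fin n) (Fin n) ℝ :=
  Matrix.of fun s t =>
    (if s = a then (1:ℝ) else 0) * (if t = b then 1 else 0) +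
    (if s = b then (1:ℝ) else 0) * (if t = a then 1 else 0)

lemma Xsel_symm (a b : Fin n) : (Xsel a b).IsSymm := by
  ext s t
  simp only [Matrix.transpose_apply, Xsel, Matrix.of_apply]
  ring

lemma sum_Xsel (g : Fin n → Fin n → ℝ) (a b : Fin n) :
    ∑ s : Fin n, ∑ t : Fin n, g s t * Xsel a b s t = g a b + g b a := by
  classical
  simp only [Xsel, Matrix.of_apply, mul_add, Finset.sum_add_distrib]
  congr 1
  · simp [mul_ite, ite_mul, mul_zero, zero_mul, mul_one, Finset.sum_ite_eq']
  · simp [mul_ite, ite_mul, mul_zero, zero_mul, mul_one, Finset.sum_ite_eq']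

end Alg

lemma key_sum {n ℓ m : ℕ} (J : Fin ℓ → Finset (Fin n))
    (A : Fin m → Matrix (Fin n) (Fin n) ℝ) (hAsymm : ∀ i, (A i).IsSymm)
    (As : (i : Fin m) → (j : Fin ℓ) → Matrix ↥(J j) ↥(J j) ℝ)
    (hAssymm : ∀ i j, (As i j).IsSymm)
    (hsplit : ∀ i, IsSplitting J (A i) (As i))
    (y : Fin m → ℝ) (a b : Fin n) :
    ∑ j : Fin ℓ,
      (if h : a ∈ J j ∧ b ∈ J j then ∑ i, y i * As i j ⟨a, h.1⟩ ⟨b, h.2⟩ else 0)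
      = (∑ i, y i • A i) a b := by
  classical
  set gB : Fin m → Fin ℓ → Fin n → Fin n → ℝ := fun i j s t =>
    if h : s ∈ J j ∧ t ∈ J j then As i j ⟨s, h.1⟩ ⟨t, h.2⟩ else 0 with hgB
  have hi : ∀ i, ∑ j : Fin ℓ, (gB i j a b + gB i j b a) = A i a b + A i b a := by
    intro i
    have h0 := hsplit i (Xsel a b) (Xsel_symm a b)
    rw [trace_full] at h0
    have h1 : ∀ j, Matrix.trace ((As i j)ᵀ * psub (Xsel a b) (J j)) =
        gB i j a b + gB i j b a := by
      intro j
      rw [trace_psub]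
      have h2 : ∀ s t : Fin n,
          (if h : s ∈ J j ∧ t ∈ J j then As i j ⟨s, h.1⟩ ⟨t, h.2⟩ * Xsel a b s t else 0)
          = gB i j s t * Xsel a b s t := by
        intro s t
        by_cases h : s ∈ J j ∧ t ∈ J j
        · rw [dif_pos h, hgB]; simp only [dif_pos h]
        · rw [dif_neg h, hgB]; simp only [dif_neg h, zero_mul]
      calc ∑ s : Fin n, ∑ t : Fin n,
            (if h : s ∈ J j ∧ t ∈ J j then As i j ⟨s, h.1⟩ ⟨t, h.2⟩ * Xsel a b s t else 0)
          = ∑ s : Fin n, ∑ t : Fin n, gB i j s t * Xsel a b s t := by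
            apply Finset.sum_congr rfl; intro s _
            apply Finset.sum_congr rfl; intro t _
            exact h2 s t
        _ = gB i j a b + gB i j b a := sum_Xsel _ a b
    rw [Finset.sum_congr rfl (fun j _ => h1 j)] at h0
    rw [h0, sum_Xsel (fun s t => A i s t) a b]
  -- multiply by y i and sum over i
  have h3 : ∑ j : Fin ℓ, ∑ i : Fin m, y i * (gB i j a b + gB i j b a)
      = ∑ i : Fin m, y i * (A i a b + A i b a) := by
    rw [Finset.sum_comm]
    apply Finset.sum_congr rfl
    intro i _
    rw [← Finset.mul_sum, hi i]
  set Bf : Fin ℓ → Fin n → Fin n → ℝ := fun j s t =>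
    if h : s ∈ J j ∧ t ∈ J j then ∑ i, y i * As i j ⟨s, h.1⟩ ⟨t, h.2⟩ else 0 with hBf
  have hyg : ∀ j s t, ∑ i : Fin m, y i * gB i j s t = Bf j s t := by
    intro j s t
    by_cases h : s ∈ J j ∧ t ∈ J j
    · simp only [hBf]; simp only [dif_pos h, hgB]
    · simp only [hBf]; simp only [dif_neg h, hgB, mul_zero, Finset.sum_const_zero]
  have hBsym : ∀ j, Bf j b a = Bf j a b := by
    intro j
    simp only [hBf]
    by_cases h : a ∈ J j ∧ b ∈ J j
    · have h' : b ∈ J j ∧ a ∈ J j := ⟨h.2, h.1⟩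
      simp only [dif_pos h, dif_pos h']
      apply Finset.sum_congr rfl
      intro i _
      rw [(hAssymm i j).apply]
    · have h' : ¬ (b ∈ J j ∧ a ∈ J j) := fun hc => h ⟨hc.2, hc.1⟩
      simp only [dif_neg h, dif_neg h']
  have hAsym : ∀ i : Fin m, A i b a = A i a b := fun i => (hAsymm i).apply a b
  have h4 : ∑ j : Fin ℓ, (Bf j a b + Bf j a b) = ∑ i : Fin m, y i * (A i a b + A i a b) := by
    calc ∑ j : Fin ℓ, (Bf j a b + Bf j a b)
        = ∑ j : Fin ℓ, (Bf j a b + Bf j b a) := by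
          apply Finset.sum_congr rfl; intro j _; rw [hBsym]
      _ = ∑ j : Fin ℓ, ∑ i : Fin m, y i * (gB i j a b + gB i j b a) := by
          apply Finset.sum_congr rfl; intro j _
          simp only [mul_add, Finset.sum_add_distrib, hyg]
      _ = ∑ i : Fin m, y i * (A i a b + A i b a) := h3
      _ = ∑ i : Fin m, y i * (A i a b + A i a b) := by
          apply Finset.sum_congr rfl; intro i _; rw [hAsym]
  have h5 : (∑ i, y i • A i) a b = ∑ i : Fin m, y i * A i a b := by
    simp [Matrix.sum_apply, Matrix.smul_apply, smul_eq_mul]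
  have h6 : (2:ℝ) * ∑ j : Fin ℓ, Bf j a b = 2 * ∑ i : Fin m, y i * A i a b := by
    rw [Finset.mul_sum, Finset.mul_sum]
    calc ∑ j : Fin ℓ, 2 * Bf j a b = ∑ j : Fin ℓ, (Bf j a b + Bf j a b) := by
          apply Finset.sum_congr rfl; intro j _; ring
      _ = ∑ i : Fin m, y i * (A i a b + A i a b) := h4
      _ = ∑ i : Fin m, 2 * (y i * A i a b) := by
          apply Finset.sum_congr rfl; intro i _; ring
  have h7 : ∑ j : Fin ℓ, Bf j a b = ∑ i : Fin m, y i * A i a b := by linarith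
  rw [← h5] at h7
  exact h7


/-- linear independence transfers to the converted problem:  there is a
nonzero pair `(u, (V i)_{i ≠ r})` with `Σ_i u i • A i j + ι_j (V j) − Σ_{c ∈ ch(j)} ι_j (V c) = 0`
for every node `j` (the `ι_j (V j)` term absent at the root), iff there is a nonzero `y`
with `Σ_i y i • A i = 0`. -/
theorem lin_indep_transfer {n ℓ m : ℕ} (G : SimpleGraph (Fin n)) (T : SimpleGraph (Fin ℓ))
    (J : Fin ℓ → Finset (Fin n)) (hTD : IsTreeDecomp G T J)
    (r : Fin ℓ) (p : Fin ℓ → Fin ℓ) (hroot : IsRootedAt T r p)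
    (A : Fin m → Matrix (Fin n) (Fin n) ℝ) (hAsymm : ∀ i, (A i).IsSymm)
    (hsparse : ∀ (i : Fin m) (a b : Fin n), A i a b ≠ 0 → a = b ∨ G.Adj a b)
    (As : (i : Fin m) → (j : Fin ℓ) → Matrix ↥(J j) ↥(J j) ℝ)
    (hAssymm : ∀ i j, (As i j).IsSymm)
    (hsplit : ∀ i, IsSplitting J (A i) (As i)) :
    (∃ (u : Fin m → ℝ)
        (V : (i : Fin ℓ) → Matrix ↥(J i ∩ J (p i)) ↥(J i ∩ J (p i)) ℝ),
        (∀ i, i ≠ r → (V i).IsSymm) ∧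
        ¬(u = 0 ∧ ∀ i, i ≠ r → V i = 0) ∧
        (∀ (j : Fin ℓ) (a b : Fin n) (ha : a ∈ J j) (hb : b ∈ J j),
          (∑ i : Fin m, u i * As i j ⟨a, ha⟩ ⟨b, hb⟩) +
            (if j = r then 0 else padEntry J p V j a b) -
            (∑ c ∈ Finset.univ.filter (fun c => c ≠ r ∧ p c = j),
              padEntry J p V c a b) = 0)) ↔
      (∃ y : Fin m → ℝ, y ≠ 0 ∧ ∑ i : Fin m, y i • A i = 0) := by
  classical
  have hT := hTD.1
  constructor
  · -- forward
    rintro ⟨u, V, hVsymm, hnz, heq⟩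
    have hpadj : ∀ (jj : Fin ℓ) (a b : Fin n), ¬ (a ∈ J jj ∧ b ∈ J jj) →
        padEntry J p V jj a b = 0 := by
      intro jj a b h
      rw [padEntry, dif_neg]
      intro hc
      exact h ⟨(Finset.mem_inter.mp hc.1).1, (Finset.mem_inter.mp hc.2).1⟩
    have hBeq : ∀ (j : Fin ℓ) (a b : Fin n),
        (if h : a ∈ J j ∧ b ∈ J j then ∑ i, u i * As i j ⟨a, h.1⟩ ⟨b, h.2⟩ else 0)
        = (∑ c ∈ Finset.univ.filter (fun c => c ≠ r ∧ p c = j), padEntry J p V c a b)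
          - (if j = r then 0 else padEntry J p V j a b) := by
      intro j a b
      by_cases h : a ∈ J j ∧ b ∈ J j
      · rw [dif_pos h]
        have h0 := heq j a b h.1 h.2
        linarith
      · rw [dif_neg h]
        have hz1 : (if j = r then 0 else padEntry J p V j a b) = 0 := by
          by_cases hj : j = r
          · rw [if_pos hj]
          · rw [if_neg hj]; exact hpadj j a b h
        have hz2 : ∀ c ∈ Finset.univ.filter (fun c => c ≠ r ∧ p c = j),
            padEntry J p V c a b = 0 := by
          intro c hc
          obtain ⟨hcr, hpc⟩ := (Finset.mem_filter.mp hc).2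
          rw [padEntry, dif_neg]
          intro hcond
          apply h
          constructor
          · have := (Finset.mem_inter.mp hcond.1).2; rwa [hpc] at this
          · have := (Finset.mem_inter.mp hcond.2).2; rwa [hpc] at this
        rw [Finset.sum_eq_zero hz2, hz1, sub_zero]
    have htel : ∀ g : Fin ℓ → ℝ,
        ∑ j : Fin ℓ, ∑ c ∈ Finset.univ.filter (fun c => c ≠ r ∧ p c = j), g c
        = ∑ j : Fin ℓ, (if j = r then 0 else g j) := by
      intro g
      have h1 : ∀ j : Fin ℓ, Finset.univ.filter (fun c => c ≠ r ∧ p c = j)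
          = (Finset.univ.filter (fun c => c ≠ r)).filter (fun c => p c = j) := by
        intro j; rw [Finset.filter_filter]
      rw [Finset.sum_congr rfl (fun j _ => by rw [h1 j])]
      rw [Finset.sum_fiberwise_of_maps_to (fun c _ => Finset.mem_univ (p c)) g]
      rw [Finset.sum_filter]
      apply Finset.sum_congr rfl
      intro j _
      by_cases hj : j = r
      · simp [hj]
      · simp [hj]
    refine ⟨u, ?_, ?_⟩
    · -- u ≠ 0
      intro hu0
      apply hnz
      refine ⟨hu0, ?_⟩
      have hdistlt : ∀ j : Fin ℓ, T.dist j r < ℓ := by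
        intro j
        obtain ⟨w, hw⟩ := hT.isConnected.exists_walk_length_eq_dist j r
        calc T.dist j r ≤ w.bypass.length := SimpleGraph.dist_le _
          _ < Fintype.card (Fin ℓ) := w.bypass_isPath.length_lt
          _ = ℓ := Fintype.card_fin ℓ
      have hall : ∀ (N : ℕ) (j : Fin ℓ), ℓ - T.dist j r ≤ N → j ≠ r → V j = 0 := by
        intro N
        induction N with
        | zero =>
          intro j hj hjr
          exfalso
          have := hdistlt j
          omega
        | succ N ih =>
          intro j hj hjr
          ext ⟨a, hmema⟩ ⟨b, hmemb⟩
          have ha : a ∈ J j := (Finset.mem_inter.mp hmema).1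
          have hb : b ∈ J j := (Finset.mem_inter.mp hmemb).1
          have h := heq j a b ha hb
          simp only [hu0, Pi.zero_apply, zero_mul, Finset.sum_const_zero, zero_add] at h
          have hch : ∀ c ∈ Finset.univ.filter (fun c => c ≠ r ∧ p c = j),
              padEntry J p V c a b = 0 := by
            intro c hc
            obtain ⟨hcr, hpc⟩ := (Finset.mem_filter.mp hc).2
            have hVc : V c = 0 := by
              apply ih c ?_ hcr
              have h1 : T.dist j r < T.dist c r := by
                have := dist_parent_lt hT hroot hcr
                rwa [hpc] at this
              have h2 := hdistlt c
              omega
            simp [padEntry, hVc]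
          rw [Finset.sum_eq_zero hch, if_neg hjr] at h
          have hpe : padEntry J p V j a b = 0 := by linarith
          rw [padEntry, dif_pos ⟨hmema, hmemb⟩] at hpe
          simpa using hpe
      intro i hir
      exact hall ℓ i (Nat.sub_le _ _) hir
    · -- sum is zero
      ext a b
      rw [Matrix.zero_apply]
      rw [← key_sum J A hAsymm As hAssymm hsplit u a b]
      rw [Finset.sum_congr rfl (fun j _ => hBeq j a b)]
      rw [Finset.sum_sub_distrib, htel (fun c => padEntry J p V c a b), sub_self]
  · -- backward
    rintro ⟨y, hy, hsum⟩
    set D : Fin ℓ → Finset (Fin ℓ) :=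
      fun j => Finset.univ.filter (fun k => ∃ t : ℕ, p^[t] k = j) with hD
    set Bf : Fin ℓ → Fin n → Fin n → ℝ := fun j s t =>
      if h : s ∈ J j ∧ t ∈ J j then ∑ i, y i * As i j ⟨s, h.1⟩ ⟨t, h.2⟩ else 0 with hBf
    have hmemD : ∀ k j, k ∈ D j ↔ ∃ t : ℕ, p^[t] k = j := by
      intro k j
      simp only [hD, Finset.mem_filter, Finset.mem_univ, true_and]
    have hBsym : ∀ j s t, Bf j t s = Bf j s t := by
      intro j s t
      simp only [hBf]
      by_cases h : s ∈ J j ∧ t ∈ J j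
      · have h' : t ∈ J j ∧ s ∈ J j := ⟨h.2, h.1⟩
        rw [dif_pos h', dif_pos h]
        apply Finset.sum_congr rfl
        intro i _
        rw [(hAssymm i j).apply]
      · have h' : ¬ (t ∈ J j ∧ s ∈ J j) := fun hc => h ⟨hc.2, hc.1⟩
        rw [dif_neg h', dif_neg h]
    have hglobal : ∀ a b : Fin n, ∑ k : Fin ℓ, Bf k a b = 0 := by
      intro a b
      have h0 := key_sum J A hAsymm As hAssymm hsplit y a b
      rw [hsum] at h0
      simpa [hBf] using h0
    set V : (i : Fin ℓ) → Matrix ↥(J i ∩ J (p i)) ↥(J i ∩ J (p i)) ℝ := fun i =>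
      Matrix.of (fun x y => - ∑ k ∈ D i, Bf k x.1 y.1) with hV
    refine ⟨y, V, ?_, ?_, ?_⟩
    · intro i _
      apply Matrix.ext
      intro x z
      rw [Matrix.transpose_apply]
      simp only [hV, Matrix.of_apply]
      rw [neg_inj]
      apply Finset.sum_congr rfl
      intro k _
      exact hBsym k x.1 z.1
    · rintro ⟨h0, _⟩; exact hy h0
    · intro j a b ha hb
      have hSAs : (∑ i, y i * As i j ⟨a, ha⟩ ⟨b, hb⟩) = Bf j a b := by
        simp only [hBf]
        rw [dif_pos ⟨ha, hb⟩]
      have hchild : ∀ c ∈ Finset.univ.filter (fun c => c ≠ r ∧ p c = j),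
          padEntry J p V c a b = - ∑ k ∈ D c, Bf k a b := by
        intro c hc
        obtain ⟨hcr, hpc⟩ := (Finset.mem_filter.mp hc).2
        by_cases hcc : a ∈ J c ∩ J (p c) ∧ b ∈ J c ∩ J (p c)
        · rw [padEntry, dif_pos hcc]
          simp only [hV, Matrix.of_apply]
        · rw [padEntry, dif_neg hcc]
          symm
          rw [neg_eq_zero]
          apply Finset.sum_eq_zero
          intro k hk
          by_contra hBne
          have hmem : a ∈ J k ∧ b ∈ J k := by
            by_contra hm
            apply hBne
            simp only [hBf]
            rw [dif_neg hm]
          obtain ⟨t, ht⟩ := (hmemD k c).mp hk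
          have hac : a ∈ J c := mem_bag_ancestor hTD hroot ht hcr hmem.1
            (by rw [hpc]; exact ha)
          have hbc : b ∈ J c := mem_bag_ancestor hTD hroot ht hcr hmem.2
            (by rw [hpc]; exact hb)
          exact hcc ⟨Finset.mem_inter.mpr ⟨hac, by rw [hpc]; exact ha⟩,
            Finset.mem_inter.mpr ⟨hbc, by rw [hpc]; exact hb⟩⟩
      have hjD : j ∈ D j := (hmemD j j).mpr ⟨0, Function.iterate_zero_apply p j⟩
      have hbiU : (Finset.univ.filter (fun c => c ≠ r ∧ p c = j)).biUnion D
          = (D j).erase j := by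
        ext k
        simp only [Finset.mem_biUnion, Finset.mem_erase, Finset.mem_filter,
          Finset.mem_univ, true_and]
        constructor
        · rintro ⟨c, ⟨hcr, hpc⟩, hk⟩
          obtain ⟨t, ht⟩ := (hmemD k c).mp hk
          constructor
          · intro hkj
            have h1 : T.dist c r ≤ T.dist j r := by
              have := dist_iter_le hT hroot t k
              rw [ht, hkj] at this
              exact this
            have h2 : T.dist j r < T.dist c r := by
              have := dist_parent_lt hT hroot hcr
              rwa [hpc] at this
            omega
          · rw [hmemD]
            exact ⟨t + 1, by rw [Function.iterate_succ_apply', ht, hpc]⟩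
        · rintro ⟨hkj, hkDj⟩
          obtain ⟨t, ht⟩ := (hmemD k j).mp hkDj
          have hex3 : ∃ t : ℕ, p^[t] k = j := ⟨t, ht⟩
          set N := Nat.find hex3 with hNdef
          have ht₁ : p^[N] k = j := Nat.find_spec hex3
          have ht₁pos : N ≠ 0 := by
            intro h0
            apply hkj
            rw [← ht₁, h0, Function.iterate_zero_apply]
          have hlt : N - 1 < N := Nat.sub_lt (Nat.pos_of_ne_zero ht₁pos) one_pos
          have hpc : p (p^[N - 1] k) = j := by
            have h5 : p^[(N - 1) + 1] k = j := by
              rw [show (N - 1) + 1 = N by omega]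
              exact ht₁
            rw [Function.iterate_succ_apply'] at h5
            exact h5
          have hcr : p^[N - 1] k ≠ r := by
            intro hcr0
            have hjr2 : j = r := by rw [← hpc, hcr0, hroot.1]
            exact Nat.find_min hex3 hlt (by rw [hcr0, ← hjr2])
          exact ⟨p^[N - 1] k, ⟨hcr, hpc⟩, (hmemD _ _).mpr ⟨_, rfl⟩⟩
      have hdisjD : (↑(Finset.univ.filter (fun c => c ≠ r ∧ p c = j)) :
          Set (Fin ℓ)).PairwiseDisjoint D := by
        intro c hc c' hc' hne
        simp only [Finset.coe_filter, Set.mem_setOf_eq, Finset.mem_univ, true_and] at hc hc'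
        obtain ⟨hcr, hpc⟩ := hc
        obtain ⟨hcr', hpc'⟩ := hc'
        have hkey : ∀ (c₁ c₂ : Fin ℓ), c₁ ≠ r → p c₁ = j → c₂ ≠ r → p c₂ = j →
            ∀ (k : Fin ℓ) (s t : ℕ), s ≤ t → p^[s] k = c₁ → p^[t] k = c₂ → c₁ = c₂ := by
          intro c₁ c₂ hc₁r hpc₁ hc₂r hpc₂ k s t hst hs ht
          by_contra hne2
          have h1 : p^[t - s] c₁ = c₂ := by
            rw [← hs, ← Function.iterate_add_apply]
            rw [show t - s + s = t by omega]
            exact ht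
          have hts : t - s ≠ 0 := by
            intro h0
            apply hne2
            rw [← h1, h0, Function.iterate_zero_apply]
          have h2 : p^[t - s] c₁ = p^[t - s - 1] (p c₁) := by
            conv_lhs => rw [show t - s = (t - s - 1) + 1 by omega]
            rw [Function.iterate_succ_apply]
          have h3 : T.dist c₂ r ≤ T.dist (p c₁) r := by
            rw [← h1, h2]
            exact dist_iter_le hT hroot _ _
          rw [hpc₁] at h3
          have h4 : T.dist j r < T.dist c₂ r := by
            have := dist_parent_lt hT hroot hc₂r
            rwa [hpc₂] at this
          omega
        rw [Function.onFun_apply, Finset.disjoint_left]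
        intro k hk hk'
        obtain ⟨s, hs⟩ := (hmemD k c).mp hk
        obtain ⟨t, ht⟩ := (hmemD k c').mp hk'
        rcases le_total s t with h | h
        · exact hne (hkey c c' hcr hpc hcr' hpc' k s t h hs ht)
        · exact hne (hkey c' c hcr' hpc' hcr hpc k t s h ht hs).symm
      have hsum1 : ∑ c ∈ Finset.univ.filter (fun c => c ≠ r ∧ p c = j),
          padEntry J p V c a b = - ∑ k ∈ (D j).erase j, Bf k a b := by
        rw [Finset.sum_congr rfl hchild, ← Finset.sum_neg_distrib]
        rw [← hbiU, Finset.sum_biUnion hdisjD]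
        exact Finset.sum_congr rfl (fun c _ => by rw [Finset.sum_neg_distrib])
      have herase : ∑ k ∈ (D j).erase j, Bf k a b
          = (∑ k ∈ D j, Bf k a b) - Bf j a b := by
        rw [eq_sub_iff_add_eq, Finset.sum_erase_add _ _ hjD]
      by_cases hjr : j = r
      · have hDr : ∑ k ∈ D j, Bf k a b = 0 := by
          have hDu : D j = Finset.univ := by
            ext k
            rw [hmemD]
            simp only [Finset.mem_univ, iff_true]
            rw [hjr]
            exact reach_root hT hroot k
          rw [hDu]
          exact hglobal a b
        rw [if_pos hjr, hSAs, hsum1, herase, hDr]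
        ring
      · rw [if_neg hjr]
        by_cases hpp : a ∈ J (p j) ∧ b ∈ J (p j)
        · have hpe : padEntry J p V j a b = - ∑ k ∈ D j, Bf k a b := by
            rw [padEntry, dif_pos ⟨Finset.mem_inter.mpr ⟨ha, hpp.1⟩,
              Finset.mem_inter.mpr ⟨hb, hpp.2⟩⟩]
            simp only [hV, Matrix.of_apply]
          rw [hSAs, hpe, hsum1, herase]
          ring
        · have hpe : padEntry J p V j a b = 0 := by
            rw [padEntry, dif_neg]
            intro hc
            exact hpp ⟨(Finset.mem_inter.mp hc.1).2, (Finset.mem_inter.mp hc.2).2⟩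
          have hfull : ∑ k ∈ D j, Bf k a b = 0 := by
            rw [Finset.sum_subset (Finset.subset_univ (D j)) ?_]
            · exact hglobal a b
            · intro k _ hk
              by_contra hBne
              have hmem : a ∈ J k ∧ b ∈ J k := by
                by_contra hm
                apply hBne
                simp only [hBf]
                rw [dif_neg hm]
              have hnreach : ¬ ∃ t : ℕ, p^[t] k = j := fun hr => hk ((hmemD k j).mpr hr)
              exact hpp ⟨mem_bag_parent hTD hroot hnreach hjr hmem.1 ha,
                mem_bag_parent hTD hroot hnreach hjr hmem.2 hb⟩
          rw [hSAs, hpe, hsum1, herase, hfull]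
          ring
end
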